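/- arXiv:1907.07059 — 3 statements merged into one kernel-verified Lean document; each statement's English description precedes it below -/
import Mathlib

section
/- Let (X,F,μ) and (Y,G,ν) be probability spaces and let c, (cₙ) be F⊗G-measurable real-valued functions on X×Y, each satisfying the integrable bounds condition, such that cₙ is increasing in n and cₙ ↑ c pointwise. Then β*(c) = limₙ β*(cₙ), where β*(h) = inf{μ(f)+ν(g): f∈L¹(μ), g∈L¹(ν), f(x)+g(y) ≥ h(x,y) for all (x,y)}. -/
open MeasureTheory Filter Topology

noncomputable section

variable {X Y : Type*}

/-- `P` is a coupling of `μ` and `ν`: a probability measure on the product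
σ-field with marginals `μ` and `ν`. -/
def IsCoupling [MeasurableSpace X] [MeasurableSpace Y]
    (μ : Measure X) (ν : Measure Y) (P : Measure (X × Y)) : Prop :=
  IsProbabilityMeasure P ∧ P.map Prod.fst = μ ∧ P.map Prod.snd = ν

/-- Values `∫ c dP` as `P` ranges over the couplings of `μ` and `ν`. -/
def primalSet [MeasurableSpace X] [MeasurableSpace Y]
    (μ : Measure X) (ν : Measure Y) (c : X × Y → ℝ) : Set ℝ :=
  {r | ∃ P : Measure (X × Y), IsCoupling μ ν P ∧ r = ∫ z, c z ∂P}

/-- `α(c) = inf_{P ∈ Γ(μ,ν)} ∫ c dP`. -/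
def alphaInf [MeasurableSpace X] [MeasurableSpace Y]
    (μ : Measure X) (ν : Measure Y) (c : X × Y → ℝ) : ℝ :=
  sInf (primalSet μ ν c)

/-- `α*(c) = sup_{P ∈ Γ(μ,ν)} ∫ c dP`. -/
def alphaSup [MeasurableSpace X] [MeasurableSpace Y]
    (μ : Measure X) (ν : Measure Y) (c : X × Y → ℝ) : ℝ :=
  sSup (primalSet μ ν c)

/-- Values `μ(f) + ν(g)` with `f ∈ L¹(μ)`, `g ∈ L¹(ν)` and `f + g ≤ c` pointwise. -/
def dualLowerSet [MeasurableSpace X] [MeasurableSpace Y]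
    (μ : Measure X) (ν : Measure Y) (c : X × Y → ℝ) : Set ℝ :=
  {r | ∃ (f : X → ℝ) (g : Y → ℝ), Integrable f μ ∧ Integrable g ν ∧
    (∀ x y, f x + g y ≤ c (x, y)) ∧ r = ∫ x, f x ∂μ + ∫ y, g y ∂ν}

/-- Values `μ(f) + ν(g)` with `f ∈ L¹(μ)`, `g ∈ L¹(ν)` and `f + g ≥ c` pointwise. -/
def dualUpperSet [MeasurableSpace X] [MeasurableSpace Y]
    (μ : Measure X) (ν : Measure Y) (c : X × Y → ℝ) : Set ℝ :=
  {r | ∃ (f : X → ℝ) (g : Y → ℝ), Integrable f μ ∧ Integrable g ν ∧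
    (∀ x y, c (x, y) ≤ f x + g y) ∧ r = ∫ x, f x ∂μ + ∫ y, g y ∂ν}

/-- `β(c) = sup {μ(f)+ν(g) : f + g ≤ c}`. -/
def betaSup [MeasurableSpace X] [MeasurableSpace Y]
    (μ : Measure X) (ν : Measure Y) (c : X × Y → ℝ) : ℝ :=
  sSup (dualLowerSet μ ν c)

/-- `β*(c) = inf {μ(f)+ν(g) : f + g ≥ c}`. -/
def betaInf [MeasurableSpace X] [MeasurableSpace Y]
    (μ : Measure X) (ν : Measure Y) (c : X × Y → ℝ) : ℝ :=
  sInf (dualUpperSet μ ν c)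

/-- Condition (1.1): `f₁ + g₁ ≤ c ≤ f₂ + g₂` with `f₁, f₂ ∈ L¹(μ)`, `g₁, g₂ ∈ L¹(ν)`. -/
def HasIntegrableBounds [MeasurableSpace X] [MeasurableSpace Y]
    (μ : Measure X) (ν : Measure Y) (c : X × Y → ℝ) : Prop :=
  ∃ (f₁ f₂ : X → ℝ) (g₁ g₂ : Y → ℝ), Integrable f₁ μ ∧ Integrable f₂ μ ∧
    Integrable g₁ ν ∧ Integrable g₂ ν ∧
    ∀ x y, f₁ x + g₁ y ≤ c (x, y) ∧ c (x, y) ≤ f₂ x + g₂ y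

/-- Real-valued indicator of a set. -/
def indR (H : Set (X × Y)) : X × Y → ℝ := H.indicator fun _ => (1 : ℝ)

/-- `R` is a finite union of measurable rectangles, i.e. an element of the ring
generated by the measurable rectangles. -/
def IsRectUnion [MeasurableSpace X] [MeasurableSpace Y] (R : Set (X × Y)) : Prop :=
  ∃ (n : ℕ) (A : Fin n → Set X) (B : Fin n → Set Y),
    (∀ i, MeasurableSet (A i)) ∧ (∀ i, MeasurableSet (B i)) ∧ R = ⋃ i, A i ×ˢ B i

section AuxiliaryLemmas

open scoped ENNReal NNReal

set_option linter.unusedSectionVars false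

variable [MeasurableSpace X] [MeasurableSpace Y]
  {μ : Measure X} {ν : Measure Y} [IsProbabilityMeasure μ] [IsProbabilityMeasure ν]

lemma mp_fst : MeasurePreserving (Prod.fst : X × Y → X) (μ.prod ν) μ :=
  ⟨measurable_fst, by simp⟩

lemma mp_snd : MeasurePreserving (Prod.snd : X × Y → Y) (μ.prod ν) ν :=
  ⟨measurable_snd, by simp⟩

lemma integrable_fst' {f : X → ℝ} (hf : Integrable f μ) :
    Integrable (fun z : X × Y => f z.1) (μ.prod ν) :=
  (mp_fst.integrable_comp hf.aestronglyMeasurable).2 hf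

lemma integrable_snd' {g : Y → ℝ} (hg : Integrable g ν) :
    Integrable (fun z : X × Y => g z.2) (μ.prod ν) :=
  (mp_snd.integrable_comp hg.aestronglyMeasurable).2 hg

lemma integral_fst' {f : X → ℝ} (hf : Integrable f μ) :
    ∫ z, f z.1 ∂(μ.prod ν) = ∫ x, f x ∂μ := by
  have : ∫ x, f x ∂μ = ∫ x, f x ∂(Measure.map Prod.fst (μ.prod ν)) := by
    rw [mp_fst.map_eq]
  rw [this, integral_map measurable_fst.aemeasurable]
  rw [mp_fst.map_eq]; exact hf.aestronglyMeasurable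

lemma integral_snd' {g : Y → ℝ} (hg : Integrable g ν) :
    ∫ z, g z.2 ∂(μ.prod ν) = ∫ y, g y ∂ν := by
  have : ∫ y, g y ∂ν = ∫ y, g y ∂(Measure.map Prod.snd (μ.prod ν)) := by
    rw [mp_snd.map_eq]
  rw [this, integral_map measurable_snd.aemeasurable]
  rw [mp_snd.map_eq]; exact hg.aestronglyMeasurable

lemma integral_fst_add_snd {f : X → ℝ} {g : Y → ℝ} (hf : Integrable f μ) (hg : Integrable g ν) :
    ∫ z, (f z.1 + g z.2) ∂(μ.prod ν) = ∫ x, f x ∂μ + ∫ y, g y ∂ν := by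
  rw [integral_add (integrable_fst' hf) (integrable_snd' hg), integral_fst' hf, integral_snd' hg]

lemma intMax {α : Type*} [MeasurableSpace α] {m : Measure α} {f g : α → ℝ}
    (hf : Integrable f m) (hg : Integrable g m) :
    Integrable (fun x => max (f x) (g x)) m := hf.sup hg

lemma intMin {α : Type*} [MeasurableSpace α] {m : Measure α} {f g : α → ℝ}
    (hf : Integrable f m) (hg : Integrable g m) :
    Integrable (fun x => min (f x) (g x)) m := hf.inf hg

lemma tail_integral_tendsto {W : X → ℝ} (hW : Integrable W μ) :
    Tendsto (fun k : ℕ => ∫ x, max (W x - k) 0 ∂μ) atTop (𝓝 0) := by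
  have h := tendsto_integral_of_dominated_convergence (μ := μ)
      (F := fun (k : ℕ) x => max (W x - k) 0) (f := fun _ => 0) (fun x => |W x|)
      (fun k => (intMax (hW.sub (integrable_const _)) (integrable_const 0)).aestronglyMeasurable)
      hW.abs ?_ ?_
  · simpa using h
  · intro k
    filter_upwards with x
    rw [Real.norm_eq_abs, abs_of_nonneg (le_max_right _ _)]
    rcases le_or_gt (W x - k) 0 with h | h
    · simpa [max_eq_right h] using abs_nonneg (W x)
    · rw [max_eq_left h.le]
      have : (0:ℝ) ≤ k := Nat.cast_nonneg k
      calc W x - k ≤ W x := by linarith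
        _ ≤ |W x| := le_abs_self _
  · filter_upwards with x
    apply tendsto_atTop_of_eventually_const (i₀ := Nat.ceil (W x))
    intro k hk
    have h1 : W x ≤ k := le_trans (Nat.le_ceil _) (Nat.cast_le.2 hk)
    have : W x - k ≤ 0 := by linarith
    simp [max_eq_right this]

lemma absInt_le {d : X → ℝ} (hd : Integrable d μ) (hd2 : Integrable (fun x => d x ^ 2) μ)
    {s : ℝ} (hs : 0 < s) : ∫ x, |d x| ∂μ ≤ (∫ x, d x ^ 2 ∂μ) / (2 * s) + s / 2 := by
  have h1 : ∫ x, |d x| ∂μ ≤ ∫ x, (d x ^ 2 / (2 * s) + s / 2) ∂μ := by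
    apply integral_mono hd.abs ((hd2.div_const _).add (integrable_const _))
    intro x
    have h3 : |d x| ^ 2 = d x ^ 2 := sq_abs (d x)
    have h4 : 0 < 2 * s := by linarith
    show |d x| ≤ d x ^ 2 / (2 * s) + s / 2
    have heq : d x ^ 2 / (2 * s) + s / 2 = (d x ^ 2 + s * s) / (2 * s) := by
      field_simp
    rw [heq, le_div_iff₀ h4]
    nlinarith [sq_nonneg (|d x| - s), abs_nonneg (d x)]
  rwa [integral_add (hd2.div_const _) (integrable_const _), integral_div, integral_const,
    probReal_univ, one_smul] at h1

lemma ae_conv {u : ℕ → X → ℝ} {C : ℝ} (hC : 0 ≤ C) (hu : ∀ j, Integrable (u j) μ)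
    (hd : ∀ j, ∫ x, |u (j + 1) x - u j x| ∂μ ≤ C * (4:ℝ)⁻¹ ^ j) :
    ∃ ulim : X → ℝ, ∀ᵐ x ∂μ, Tendsto (fun j => u j x) atTop (𝓝 (ulim x)) := by
  have hmeas : ∀ j, AEMeasurable (fun x => (‖u (j + 1) x - u j x‖₊ : ℝ≥0∞)) μ :=
    fun j => ((hu (j + 1)).sub (hu j)).aestronglyMeasurable.enorm
  have key : ∫⁻ x, ∑' j, (‖u (j + 1) x - u j x‖₊ : ℝ≥0∞) ∂μ ≠ ⊤ := by
    rw [lintegral_tsum hmeas]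
    have hsummable : Summable fun j : ℕ => C * (4:ℝ)⁻¹ ^ j :=
      (summable_geometric_of_lt_one (by norm_num) (by norm_num)).mul_left C
    have hb : ∑' j, ∫⁻ x, (‖u (j + 1) x - u j x‖₊ : ℝ≥0∞) ∂μ
        ≤ ∑' j, ENNReal.ofReal (C * (4:ℝ)⁻¹ ^ j) := by
      apply ENNReal.tsum_le_tsum
      intro j
      have h5 := ofReal_integral_norm_eq_lintegral_enorm ((hu (j + 1)).sub (hu j))
      simp only [Pi.sub_apply, enorm_eq_nnnorm] at h5
      rw [← h5]
      exact ENNReal.ofReal_le_ofReal (by simpa [Real.norm_eq_abs] using hd j)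
    refine ne_top_of_le_ne_top ?_ hb
    rw [← ENNReal.ofReal_tsum_of_nonneg (fun j => by positivity) hsummable]
    exact ENNReal.ofReal_ne_top
  have hae := ae_lt_top' (AEMeasurable.ennreal_tsum hmeas) key
  classical
  refine ⟨fun x => if h : ∃ l, Tendsto (fun j => u j x) atTop (𝓝 l) then h.choose else 0, ?_⟩
  filter_upwards [hae] with x hx
  have hsum : Summable fun j => ‖u (j + 1) x - u j x‖ := by
    have := ENNReal.summable_toReal hx.ne
    simpa using this
  have hcau : CauchySeq fun j => u j x := by
    apply cauchySeq_of_summable_dist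
    simpa [dist_eq_norm, norm_sub_rev] using hsum
  obtain ⟨l, hl⟩ := cauchySeq_tendsto_of_complete hcau
  have hex : ∃ l, Tendsto (fun j => u j x) atTop (𝓝 l) := ⟨l, hl⟩
  rw [dif_pos hex]
  exact hex.choose_spec

lemma sq_int_of_bound {u A : X → ℝ} (hu : Integrable u μ) (hA : Integrable A μ)
    {T : ℝ} (hT : 0 ≤ T) (hb : ∀ x, |u x - A x| ≤ T) :
    Integrable (fun x => (u x - A x) ^ 2) μ ∧ ∫ x, (u x - A x) ^ 2 ∂μ ≤ T ^ 2 := by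
  have hasm : AEStronglyMeasurable (fun x => (u x - A x) ^ 2) μ := by
    have h1 : AEStronglyMeasurable (fun x => u x - A x) μ := (hu.sub hA).aestronglyMeasurable
    have h2 := h1.mul h1
    have heq : (fun x => (u x - A x) ^ 2) = fun x => (u x - A x) * (u x - A x) := by
      funext x; ring
    rw [heq]; exact h2
  have hble : ∀ x, (u x - A x) ^ 2 ≤ T ^ 2 := by
    intro x
    have := hb x
    nlinarith [abs_nonneg (u x - A x), sq_abs (u x - A x), le_abs_self (u x - A x),
      neg_abs_le (u x - A x)]
  have hint : Integrable (fun x => (u x - A x) ^ 2) μ := by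
    apply Integrable.mono' (integrable_const (T ^ 2)) hasm
    filter_upwards with x
    rw [Real.norm_eq_abs, abs_of_nonneg (sq_nonneg _)]
    exact hble x
  refine ⟨hint, ?_⟩
  calc ∫ x, (u x - A x) ^ 2 ∂μ ≤ ∫ _x, T ^ 2 ∂μ :=
        integral_mono hint (integrable_const _) hble
    _ = T ^ 2 := by simp

lemma dus_lb {h : X × Y → ℝ} {A₁ : X → ℝ} {B₁ : Y → ℝ}
    (hA : Integrable A₁ μ) (hB : Integrable B₁ ν)
    (hle : ∀ x y, A₁ x + B₁ y ≤ h (x, y)) :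
    ∀ r ∈ dualUpperSet μ ν h, ∫ x, A₁ x ∂μ + ∫ y, B₁ y ∂ν ≤ r := by
  rintro r ⟨f, g, hf, hg, hfg, rfl⟩
  rw [← integral_fst_add_snd hA hB, ← integral_fst_add_snd hf hg]
  apply integral_mono (integrable_fst' hA |>.add (integrable_snd' hB))
    (integrable_fst' hf |>.add (integrable_snd' hg))
  intro z
  exact le_trans (hle z.1 z.2) (hfg z.1 z.2)

lemma dus_bddBelow {h : X × Y → ℝ} {A₁ : X → ℝ} {B₁ : Y → ℝ}
    (hA : Integrable A₁ μ) (hB : Integrable B₁ ν)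
    (hle : ∀ x y, A₁ x + B₁ y ≤ h (x, y)) :
    BddBelow (dualUpperSet μ ν h) :=
  ⟨∫ x, A₁ x ∂μ + ∫ y, B₁ y ∂ν, fun r hr => dus_lb hA hB hle r hr⟩

lemma dus_anti {h h' : X × Y → ℝ} (hpt : ∀ z, h z ≤ h' z) :
    dualUpperSet μ ν h' ⊆ dualUpperSet μ ν h := by
  rintro r ⟨f, g, hf, hg, hfg, rfl⟩
  exact ⟨f, g, hf, hg, fun x y => le_trans (hpt (x, y)) (hfg x y), rfl⟩

set_option maxHeartbeats 1000000 in
lemma hard_dir {c : ℕ → X × Y → ℝ} {clim : X × Y → ℝ}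
    {A₁ A₂ : X → ℝ} {B₁ B₂ : Y → ℝ}
    (hA₁ : Integrable A₁ μ) (hA₂ : Integrable A₂ μ)
    (hB₁ : Integrable B₁ ν) (hB₂ : Integrable B₂ ν)
    (hlow : ∀ n x y, A₁ x + B₁ y ≤ c n (x, y))
    (hupp : ∀ x y, clim (x, y) ≤ A₂ x + B₂ y)
    (hmono : ∀ m n, m ≤ n → ∀ z, c m z ≤ c n z)
    (hlelim : ∀ n z, c n z ≤ clim z)
    (hconv : ∀ z, Tendsto (fun n => c n z) atTop (𝓝 (clim z))) :
    sInf (dualUpperSet μ ν clim) ≤ ⨆ n, sInf (dualUpperSet μ ν (c n)) := by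
  classical
  set β : ℕ → ℝ := fun n => sInf (dualUpperSet μ ν (c n)) with hβdef
  have huppn : ∀ n x y, c n (x, y) ≤ A₂ x + B₂ y := fun n x y =>
    le_trans (hlelim n (x, y)) (hupp x y)
  have hne : ∀ n, (dualUpperSet μ ν (c n)).Nonempty := fun n =>
    ⟨_, A₂, B₂, hA₂, hB₂, huppn n, rfl⟩
  have hbdd : ∀ n, BddBelow (dualUpperSet μ ν (c n)) := fun n =>
    dus_bddBelow hA₁ hB₁ (hlow n)
  have hβub : ∀ n, β n ≤ ∫ x, A₂ x ∂μ + ∫ y, B₂ y ∂ν := fun n =>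
    csInf_le (hbdd n) ⟨A₂, B₂, hA₂, hB₂, huppn n, rfl⟩
  have hbddA : BddAbove (Set.range β) := ⟨_, by rintro r ⟨n, rfl⟩; exact hβub n⟩
  set L : ℝ := ⨆ n, β n with hLdef
  have hβL : ∀ n, β n ≤ L := fun n => le_ciSup hbddA n
  have claim : ∀ ε : ℝ, 0 < ε → sInf (dualUpperSet μ ν clim) ≤ L + 3 * ε := by
    intro ε hε
    -- Step 1: ε-optimal dual pairs
    have hsel : ∀ n, ∃ (f : X → ℝ) (g : Y → ℝ), Integrable f μ ∧ Integrable g ν ∧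
        (∀ x y, c n (x, y) ≤ f x + g y) ∧ ∫ x, f x ∂μ + ∫ y, g y ∂ν ≤ β n + ε := by
      intro n
      obtain ⟨r, hrmem, hrlt⟩ := exists_lt_of_csInf_lt (hne n)
        (lt_add_of_pos_right (β n) hε)
      obtain ⟨f, g, hf, hg, hfg, rfl⟩ := hrmem
      exact ⟨f, g, hf, hg, hfg, hrlt.le⟩
    choose f₀ g₀ hf₀ hg₀ hfg₀ hI₀ using hsel
    -- Step 2: normalization
    set F : ℕ → X → ℝ := fun n x => f₀ n x + ∫ y, g₀ n y ∂ν with hFdef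
    set G : ℕ → Y → ℝ := fun n y => g₀ n y - ∫ y, g₀ n y ∂ν with hGdef
    have hFint : ∀ n, Integrable (F n) μ := fun n => (hf₀ n).add (integrable_const _)
    have hGint : ∀ n, Integrable (G n) ν := fun n => (hg₀ n).sub (integrable_const _)
    have hFG : ∀ n x y, c n (x, y) ≤ F n x + G n y := by
      intro n x y
      have := hfg₀ n x y
      simp only [hFdef, hGdef]
      linarith
    have hGzero : ∀ n, ∫ y, G n y ∂ν = 0 := by
      intro n
      simp only [hGdef]
      rw [integral_sub (hg₀ n) (integrable_const _), integral_const, probReal_univ,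
        one_smul, sub_self]
    have hIsum : ∀ n, ∫ x, F n x ∂μ + ∫ y, G n y ∂ν ≤ L + ε := by
      intro n
      have h1 : ∫ x, F n x ∂μ = ∫ x, f₀ n x ∂μ + ∫ y, g₀ n y ∂ν := by
        simp only [hFdef]
        rw [integral_add (hf₀ n) (integrable_const _), integral_const, probReal_univ,
          one_smul]
      rw [hGzero n, add_zero, h1]
      exact le_trans (hI₀ n) (by linarith [hβL n])
    have hintF : ∀ n, ∫ x, F n x ∂μ ≤ L + ε := by
      intro n
      have := hIsum n
      rw [hGzero n, add_zero] at this
      exact this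
    set k₁ : ℝ := ∫ y, B₁ y ∂ν with hk₁def
    set K : ℝ := ∫ x, A₁ x ∂μ - (L + ε) with hKdef
    have hFlow : ∀ n x, A₁ x + k₁ ≤ F n x := by
      intro n x
      have h1 : ∫ y, (B₁ y - G n y) ∂ν ≤ ∫ _y, (F n x - A₁ x) ∂ν := by
        apply integral_mono (hB₁.sub (hGint n)) (integrable_const _)
        intro y
        have := hFG n x y
        have := hlow n x y
        simp only [Pi.sub_apply]
        linarith
      rw [integral_sub hB₁ (hGint n), hGzero n, sub_zero, integral_const, probReal_univ,
        one_smul] at h1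
      simp only [← hk₁def] at h1
      linarith
    have hGlow : ∀ n y, B₁ y + K ≤ G n y := by
      intro n y
      have h1 : ∫ x, (A₁ x - F n x) ∂μ ≤ ∫ _x, (G n y - B₁ y) ∂μ := by
        apply integral_mono (hA₁.sub (hFint n)) (integrable_const _)
        intro x
        have := hFG n x y
        have := hlow n x y
        simp only [Pi.sub_apply]
        linarith
      rw [integral_sub hA₁ (hFint n), integral_const, probReal_univ,
        one_smul] at h1
      have := hintF n
      simp only [hKdef]
      linarith
    -- Step 3: choose the truncation level T
    obtain ⟨T, hT1, hT2⟩ : ∃ T : ℕ, ∫ x, max (A₂ x - A₁ x - k₁ - T) 0 ∂μ ≤ ε ∧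
        ∫ y, max (B₂ y - B₁ y - K - T) 0 ∂ν ≤ ε := by
      have ht1 := tail_integral_tendsto (μ := μ) ((hA₂.sub hA₁).sub (integrable_const k₁))
      have ht2 := tail_integral_tendsto (μ := ν) ((hB₂.sub hB₁).sub (integrable_const K))
      have he1 := ht1.eventually (gt_mem_nhds hε)
      have he2 := ht2.eventually (gt_mem_nhds hε)
      obtain ⟨T, h1, h2⟩ := (he1.and he2).exists
      refine ⟨T, ?_, ?_⟩
      · refine le_of_lt (lt_of_le_of_lt (le_of_eq ?_) h1)
        congr 1 with x
      · refine le_of_lt (lt_of_le_of_lt (le_of_eq ?_) h2)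
        congr 1 with y
    have hTnn : (0:ℝ) ≤ (T:ℝ) := Nat.cast_nonneg T
    have hmax1 : Integrable (fun x => max (A₂ x - A₁ x - k₁ - (T:ℝ)) 0) μ :=
      intMax (show Integrable (fun x => A₂ x - A₁ x - k₁ - (T:ℝ)) μ from
        ((hA₂.sub hA₁).sub (integrable_const k₁)).sub (integrable_const (T:ℝ)))
        (integrable_const 0)
    have hmax2 : Integrable (fun y => max (B₂ y - B₁ y - K - (T:ℝ)) 0) ν :=
      intMax (show Integrable (fun y => B₂ y - B₁ y - K - (T:ℝ)) ν from
        ((hB₂.sub hB₁).sub (integrable_const K)).sub (integrable_const (T:ℝ)))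
        (integrable_const 0)
    -- Step 4: truncation
    set p : ℕ → X → ℝ := fun n x => max (min (F n x) (A₂ x + T)) (A₂ x - T) with hpdef
    set q : ℕ → Y → ℝ := fun n y => min (max (G n y) (B₂ y - T)) (B₂ y + T) with hqdef
    have hpint : ∀ n, Integrable (p n) μ := fun n =>
      intMax (intMin (hFint n) (hA₂.add (integrable_const _))) (hA₂.sub (integrable_const _))
    have hqint : ∀ n, Integrable (q n) ν := fun n =>
      intMin (intMax (hGint n) (hB₂.sub (integrable_const _))) (hB₂.add (integrable_const _))
    have hpb : ∀ n x, A₂ x - T ≤ p n x ∧ p n x ≤ A₂ x + T := by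
      intro n x
      constructor
      · exact le_max_right _ _
      · exact max_le (le_trans (min_le_right _ _) le_rfl) (by linarith)
    have hqb : ∀ n y, B₂ y - T ≤ q n y ∧ q n y ≤ B₂ y + T := by
      intro n y
      constructor
      · exact le_min (le_trans le_rfl (le_max_right _ _)) (by linarith)
      · exact min_le_right _ _
    have hpq : ∀ n x y, c n (x, y) ≤ p n x + q n y := by
      intro n x y
      rcases le_or_gt (F n x) (A₂ x + T) with hx1 | hx1
      · have hpx : F n x ≤ p n x := by
          rw [hpdef]
          exact le_max_of_le_left (le_min le_rfl hx1)
        rcases le_or_gt (G n y) (B₂ y + T) with hy1 | hy1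
        · have hqy : G n y ≤ q n y := by
            rw [hqdef]
            exact le_min (le_max_left _ _) hy1
          linarith [hFG n x y]
        · have hqy : B₂ y + T ≤ q n y := by
            rw [hqdef]
            exact le_min (le_max_of_le_left hy1.le) le_rfl
          have := (hpb n x).1
          linarith [huppn n x y]
      · have hpx : A₂ x + T ≤ p n x := by
          rw [hpdef]
          exact le_max_of_le_left (le_min hx1.le le_rfl)
        have := (hqb n y).1
        linarith [huppn n x y]
    have hpIb : ∀ n, ∫ x, p n x ∂μ ≤ ∫ x, F n x ∂μ + ε := by
      intro n
      have hptle : ∀ x, p n x ≤ F n x + max (A₂ x - A₁ x - k₁ - T) 0 := by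
        intro x
        have hF := hFlow n x
        rcases le_total (A₂ x - A₁ x - k₁ - T) 0 with h | h
        · rw [max_eq_right h]
          apply max_le
          · linarith [min_le_left (F n x) (A₂ x + T)]
          · linarith
        · rw [max_eq_left h]
          apply max_le
          · linarith [min_le_left (F n x) (A₂ x + T)]
          · linarith
      calc ∫ x, p n x ∂μ ≤ ∫ x, (F n x + max (A₂ x - A₁ x - k₁ - T) 0) ∂μ := by
            exact integral_mono (hpint n) ((hFint n).add hmax1) hptle
        _ = ∫ x, F n x ∂μ + ∫ x, max (A₂ x - A₁ x - k₁ - T) 0 ∂μ := by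
            rw [integral_add (hFint n) hmax1]
        _ ≤ ∫ x, F n x ∂μ + ε := by linarith [hT1]
    have hqIb : ∀ n, ∫ y, q n y ∂ν ≤ ∫ y, G n y ∂ν + ε := by
      intro n
      have hqtle : ∀ y, q n y ≤ G n y + max (B₂ y - B₁ y - K - T) 0 := by
        intro y
        have hG := hGlow n y
        rcases le_total (B₂ y - B₁ y - K - T) 0 with h | h
        · rw [max_eq_right h, add_zero]
          refine le_trans (min_le_left _ _) (max_le le_rfl ?_)
          linarith
        · rw [max_eq_left h]
          refine le_trans (min_le_left _ _) (max_le ?_ ?_) <;> linarith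
      calc ∫ y, q n y ∂ν ≤ ∫ y, (G n y + max (B₂ y - B₁ y - K - T) 0) ∂ν := by
            exact integral_mono (hqint n) ((hGint n).add hmax2) hqtle
        _ = ∫ y, G n y ∂ν + ∫ y, max (B₂ y - B₁ y - K - T) 0 ∂ν := by
            rw [integral_add (hGint n) hmax2]
        _ ≤ ∫ y, G n y ∂ν + ε := by linarith [hT2]
    have hpqI : ∀ n, ∫ x, p n x ∂μ + ∫ y, q n y ∂ν ≤ L + 3 * ε := by
      intro n
      have := hIsum n
      have := hpIb n
      have := hqIb n
      linarith
    -- Step 5: the variational families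
    set Feas : ℕ → (X → ℝ) → (Y → ℝ) → Prop := fun N u v =>
      Integrable u μ ∧ Integrable v ν ∧
      (∀ x, A₂ x - T ≤ u x ∧ u x ≤ A₂ x + T) ∧
      (∀ y, B₂ y - T ≤ v y ∧ v y ≤ B₂ y + T) ∧
      (∀ x y, c N (x, y) ≤ u x + v y) ∧
      ∫ x, u x ∂μ + ∫ y, v y ∂ν ≤ L + 3 * ε with hFeasdef
    set Φ : (X → ℝ) → (Y → ℝ) → ℝ := fun u v =>
      ∫ x, (u x - A₂ x) ^ 2 ∂μ + ∫ y, (v y - B₂ y) ^ 2 ∂ν with hΦdef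
    set S : ℕ → Set ℝ := fun N => {r | ∃ u v, Feas N u v ∧ r = Φ u v} with hSdef
    set δ : ℕ → ℝ := fun N => sInf (S N) with hδdef
    have habs : ∀ (u : X → ℝ), (∀ x, A₂ x - T ≤ u x ∧ u x ≤ A₂ x + T) →
        ∀ x, |u x - A₂ x| ≤ T := by
      intro u hu x
      rw [abs_le]
      constructor <;> [linarith [(hu x).1]; linarith [(hu x).2]]
    have habs' : ∀ (v : Y → ℝ), (∀ y, B₂ y - T ≤ v y ∧ v y ≤ B₂ y + T) →
        ∀ y, |v y - B₂ y| ≤ T := by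
      intro v hv y
      rw [abs_le]
      constructor <;> [linarith [(hv y).1]; linarith [(hv y).2]]
    have hFeasMono : ∀ N M (u : X → ℝ) (v : Y → ℝ), N ≤ M → Feas M u v → Feas N u v := by
      intro N M u v hNM hF
      obtain ⟨h1, h2, h3, h4, h5, h6⟩ := hF
      exact ⟨h1, h2, h3, h4, fun x y => le_trans (hmono N M hNM (x, y)) (h5 x y), h6⟩
    have hFeaspq : ∀ N, Feas N (p N) (q N) := fun N =>
      ⟨hpint N, hqint N, hpb N, hqb N, hpq N, hpqI N⟩
    have hSne : ∀ N, (S N).Nonempty := fun N => ⟨_, p N, q N, hFeaspq N, rfl⟩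
    have hSlb : ∀ N r, r ∈ S N → 0 ≤ r := by
      rintro N r ⟨u, v, hF, rfl⟩
      have h1 : 0 ≤ ∫ x, (u x - A₂ x) ^ 2 ∂μ := integral_nonneg fun x => sq_nonneg _
      have h2 : 0 ≤ ∫ y, (v y - B₂ y) ^ 2 ∂ν := integral_nonneg fun y => sq_nonneg _
      simp only [hΦdef]
      linarith
    have hSbdd : ∀ N, BddBelow (S N) := fun N => ⟨0, fun r hr => hSlb N r hr⟩
    have hΦub : ∀ N (u : X → ℝ) (v : Y → ℝ), Feas N u v → Φ u v ≤ 2 * (T:ℝ) ^ 2 := by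
      intro N u v hF
      obtain ⟨h1, h2, h3, h4, _, _⟩ := hF
      have e1 := (sq_int_of_bound h1 hA₂ hTnn (habs u h3)).2
      have e2 := (sq_int_of_bound h2 hB₂ hTnn (habs' v h4)).2
      simp only [hΦdef]
      linarith
    have hδmono : Monotone δ := by
      intro N M hNM
      apply csInf_le_csInf (hSbdd N) (hSne M)
      rintro r ⟨u, v, hF, rfl⟩
      exact ⟨u, v, hFeasMono N M u v hNM hF, rfl⟩
    have hδub : ∀ N, δ N ≤ 2 * (T:ℝ) ^ 2 := fun N =>
      le_trans (csInf_le (hSbdd N) ⟨p N, q N, hFeaspq N, rfl⟩) (hΦub N (p N) (q N) (hFeaspq N))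
    have hδbddA : BddAbove (Set.range δ) := ⟨_, by rintro r ⟨N, rfl⟩; exact hδub N⟩
    set Δ : ℝ := ⨆ N, δ N with hΔdef
    have hδΔ : ∀ N, δ N ≤ Δ := fun N => le_ciSup hδbddA N
    -- Step 6: index sequence
    have hNseq : ∀ (j M : ℕ), ∃ N, M < N ∧ Δ - (16:ℝ)⁻¹ ^ j ≤ δ N := by
      intro j M
      have hpos : (0:ℝ) < (16:ℝ)⁻¹ ^ j := by positivity
      obtain ⟨N₀, hN₀⟩ := exists_lt_of_lt_ciSup (show Δ - (16:ℝ)⁻¹ ^ j < Δ by linarith)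
      refine ⟨max N₀ M + 1, by omega, ?_⟩
      exact le_trans hN₀.le (hδmono (by omega))
    choose Nf hNf1 hNf2 using hNseq
    set Ns : ℕ → ℕ := fun j => Nat.rec (Nf 0 0) (fun j prev => Nf (j + 1) prev) j with hNsdef
    have hNs_succ : ∀ j, Ns (j + 1) = Nf (j + 1) (Ns j) := fun j => rfl
    have hNsmono : StrictMono Ns := strictMono_nat_of_lt_succ fun j => by
      rw [hNs_succ]; exact hNf1 (j + 1) (Ns j)
    have hNsge : ∀ j, j ≤ Ns j := fun j => hNsmono.le_apply
    have hNsδ : ∀ j, Δ - (16:ℝ)⁻¹ ^ j ≤ δ (Ns j) := by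
      intro j
      cases j with
      | zero => exact hNf2 0 0
      | succ j => rw [hNs_succ]; exact hNf2 (j + 1) (Ns j)
    -- Step 7: near-minimizers
    have hsel2 : ∀ j, ∃ (u : X → ℝ) (v : Y → ℝ), Feas (Ns j) u v ∧
        Φ u v ≤ δ (Ns j) + (16:ℝ)⁻¹ ^ j := by
      intro j
      have hpos : (0:ℝ) < (16:ℝ)⁻¹ ^ j := by positivity
      obtain ⟨r, hrmem, hrlt⟩ := exists_lt_of_csInf_lt (hSne (Ns j))
        (lt_add_of_pos_right _ hpos)
      obtain ⟨u, v, hF, rfl⟩ := hrmem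
      exact ⟨u, v, hF, hrlt.le⟩
    choose u v hFuv hΦuv using hsel2
    have hΦeq : ∀ (a : X → ℝ) (b : Y → ℝ),
        Φ a b = ∫ x, (a x - A₂ x) ^ 2 ∂μ + ∫ y, (b y - B₂ y) ^ 2 ∂ν := fun a b => rfl
    -- Step 8: Cauchy estimates
    have hpar : ∀ j k, j ≤ k →
        ∫ x, (u j x - u k x) ^ 2 ∂μ + ∫ y, (v j y - v k y) ^ 2 ∂ν
          ≤ 8 * (16:ℝ)⁻¹ ^ j := by
      intro j k hjk
      set um : X → ℝ := fun x => (u j x + u k x) / 2 with humdef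
      set vm : Y → ℝ := fun y => (v j y + v k y) / 2 with hvmdef
      obtain ⟨a1, a2, a3, a4, a5, a6⟩ := hFuv j
      obtain ⟨b1, b2, b3, b4, b5, b6⟩ :=
        hFeasMono (Ns j) (Ns k) (u k) (v k) (hNsmono.monotone hjk) (hFuv k)
      have hFm : Feas (Ns j) um vm := by
        refine ⟨(a1.add b1).div_const 2, (a2.add b2).div_const 2, ?_, ?_, ?_, ?_⟩
        · intro x
          constructor
          · simp only [humdef]; linarith [(a3 x).1, (b3 x).1]
          · simp only [humdef]; linarith [(a3 x).2, (b3 x).2]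
        · intro y
          constructor
          · simp only [hvmdef]; linarith [(a4 y).1, (b4 y).1]
          · simp only [hvmdef]; linarith [(a4 y).2, (b4 y).2]
        · intro x y
          simp only [humdef, hvmdef]
          linarith [a5 x y, b5 x y]
        · have e1 : ∫ x, um x ∂μ = (∫ x, (u j x + u k x) ∂μ) / 2 := by
            simp only [humdef]; rw [integral_div]
          have e2 : ∫ y, vm y ∂ν = (∫ y, (v j y + v k y) ∂ν) / 2 := by
            simp only [hvmdef]; rw [integral_div]
          rw [e1, e2, integral_add a1 b1, integral_add a2 b2]
          linarith
      have hmidge : δ (Ns j) ≤ Φ um vm := csInf_le (hSbdd (Ns j)) ⟨um, vm, hFm, rfl⟩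
      have hsqj := (sq_int_of_bound a1 hA₂ hTnn (habs _ a3)).1
      have hsqk := (sq_int_of_bound b1 hA₂ hTnn (habs _ b3)).1
      have hsqm := (sq_int_of_bound (hFm.1) hA₂ hTnn (habs _ hFm.2.2.1)).1
      have hsqj' := (sq_int_of_bound a2 hB₂ hTnn (habs' _ a4)).1
      have hsqk' := (sq_int_of_bound b2 hB₂ hTnn (habs' _ b4)).1
      have hsqm' := (sq_int_of_bound (hFm.2.1) hB₂ hTnn (habs' _ hFm.2.2.2.1)).1
      have hidu : ∫ x, (u j x - u k x) ^ 2 ∂μ =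
          2 * ∫ x, (u j x - A₂ x) ^ 2 ∂μ + 2 * ∫ x, (u k x - A₂ x) ^ 2 ∂μ
            - 4 * ∫ x, (um x - A₂ x) ^ 2 ∂μ := by
        have hptw : ∀ x, (u j x - u k x) ^ 2 =
            2 * (u j x - A₂ x) ^ 2 + 2 * (u k x - A₂ x) ^ 2 - 4 * (um x - A₂ x) ^ 2 := by
          intro x; simp only [humdef]; ring
        rw [integral_congr_ae (Filter.Eventually.of_forall hptw)]
        have iadd : Integrable (fun x => 2 * (u j x - A₂ x) ^ 2 + 2 * (u k x - A₂ x) ^ 2) μ :=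
          (hsqj.const_mul 2).add (hsqk.const_mul 2)
        rw [integral_sub iadd (hsqm.const_mul 4),
          integral_add (hsqj.const_mul 2) (hsqk.const_mul 2),
          integral_const_mul, integral_const_mul, integral_const_mul]
      have hidv : ∫ y, (v j y - v k y) ^ 2 ∂ν =
          2 * ∫ y, (v j y - B₂ y) ^ 2 ∂ν + 2 * ∫ y, (v k y - B₂ y) ^ 2 ∂ν
            - 4 * ∫ y, (vm y - B₂ y) ^ 2 ∂ν := by
        have hptw : ∀ y, (v j y - v k y) ^ 2 =
            2 * (v j y - B₂ y) ^ 2 + 2 * (v k y - B₂ y) ^ 2 - 4 * (vm y - B₂ y) ^ 2 := by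
          intro y; simp only [hvmdef]; ring
        rw [integral_congr_ae (Filter.Eventually.of_forall hptw)]
        have iadd : Integrable (fun y => 2 * (v j y - B₂ y) ^ 2 + 2 * (v k y - B₂ y) ^ 2) ν :=
          (hsqj'.const_mul 2).add (hsqk'.const_mul 2)
        rw [integral_sub iadd (hsqm'.const_mul 4),
          integral_add (hsqj'.const_mul 2) (hsqk'.const_mul 2),
          integral_const_mul, integral_const_mul, integral_const_mul]
      have h1 := hΦuv j
      have h2 := hΦuv k
      have h3 := hδΔ (Ns k)
      have h4 := hNsδ j
      have h5 : (16:ℝ)⁻¹ ^ k ≤ (16:ℝ)⁻¹ ^ j :=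
        pow_le_pow_of_le_one (by norm_num) (by norm_num) hjk
      rw [hΦeq] at h1 h2 hmidge
      have h6 : (0:ℝ) ≤ (16:ℝ)⁻¹ ^ j := by positivity
      rw [hidu, hidv]
      linarith
    -- Step 8b: L¹ control of successive differences
    have hsqd : ∀ j, Integrable (fun x => (u (j + 1) x - u j x) ^ 2) μ := by
      intro j
      refine (sq_int_of_bound (hFuv (j + 1)).1 (hFuv j).1 (T := 2 * T) (by linarith) ?_).1
      intro x
      have e1 := habs _ (hFuv (j + 1)).2.2.1 x
      have e2 := habs _ (hFuv j).2.2.1 x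
      rw [abs_le] at e1 e2 ⊢
      constructor <;> [linarith [e1.1, e2.2]; linarith [e1.2, e2.1]]
    have hsqd' : ∀ j, Integrable (fun y => (v (j + 1) y - v j y) ^ 2) ν := by
      intro j
      refine (sq_int_of_bound (hFuv (j + 1)).2.1 (hFuv j).2.1 (T := 2 * T) (by linarith) ?_).1
      intro y
      have e1 := habs' _ (hFuv (j + 1)).2.2.2.1 y
      have e2 := habs' _ (hFuv j).2.2.2.1 y
      rw [abs_le] at e1 e2 ⊢
      constructor <;> [linarith [e1.1, e2.2]; linarith [e1.2, e2.1]]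
    have hpow : ∀ j : ℕ, (16:ℝ)⁻¹ ^ j = (4:ℝ)⁻¹ ^ j * (4:ℝ)⁻¹ ^ j := by
      intro j
      rw [← mul_pow]
      norm_num
    have hdu : ∀ j, ∫ x, |u (j + 1) x - u j x| ∂μ ≤ 5 * (4:ℝ)⁻¹ ^ j := by
      intro j
      have hppos : (0:ℝ) < (4:ℝ)⁻¹ ^ j := by positivity
      have h1 := absInt_le ((hFuv (j + 1)).1.sub (hFuv j).1) (hsqd j) hppos
      simp only [Pi.sub_apply] at h1
      have h2 := hpar j (j + 1) (Nat.le_succ j)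
      have h3 : 0 ≤ ∫ y, (v j y - v (j + 1) y) ^ 2 ∂ν := integral_nonneg fun y => sq_nonneg _
      have h4 : ∫ x, (u j x - u (j + 1) x) ^ 2 ∂μ = ∫ x, (u (j + 1) x - u j x) ^ 2 ∂μ :=
        integral_congr_ae (Filter.Eventually.of_forall fun x => by ring)
      rw [h4] at h2
      have h5 : ∫ x, (u (j + 1) x - u j x) ^ 2 ∂μ ≤ 8 * (16:ℝ)⁻¹ ^ j := by linarith
      have h6 : (∫ x, (u (j + 1) x - u j x) ^ 2 ∂μ) / (2 * (4:ℝ)⁻¹ ^ j)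
          ≤ 8 * (16:ℝ)⁻¹ ^ j / (2 * (4:ℝ)⁻¹ ^ j) :=
        (div_le_div_iff_of_pos_right (by positivity)).2 h5
      have hcalc : 8 * (16:ℝ)⁻¹ ^ j / (2 * (4:ℝ)⁻¹ ^ j) = 4 * (4:ℝ)⁻¹ ^ j := by
        rw [hpow]
        field_simp
        ring
      rw [hcalc] at h6
      linarith
    have hdv : ∀ j, ∫ y, |v (j + 1) y - v j y| ∂ν ≤ 5 * (4:ℝ)⁻¹ ^ j := by
      intro j
      have hppos : (0:ℝ) < (4:ℝ)⁻¹ ^ j := by positivity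
      have h1 := absInt_le ((hFuv (j + 1)).2.1.sub (hFuv j).2.1) (hsqd' j) hppos
      simp only [Pi.sub_apply] at h1
      have h2 := hpar j (j + 1) (Nat.le_succ j)
      have h3 : 0 ≤ ∫ x, (u j x - u (j + 1) x) ^ 2 ∂μ := integral_nonneg fun x => sq_nonneg _
      have h4 : ∫ y, (v j y - v (j + 1) y) ^ 2 ∂ν = ∫ y, (v (j + 1) y - v j y) ^ 2 ∂ν :=
        integral_congr_ae (Filter.Eventually.of_forall fun y => by ring)
      rw [h4] at h2
      have h5 : ∫ y, (v (j + 1) y - v j y) ^ 2 ∂ν ≤ 8 * (16:ℝ)⁻¹ ^ j := by linarith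
      have h6 : (∫ y, (v (j + 1) y - v j y) ^ 2 ∂ν) / (2 * (4:ℝ)⁻¹ ^ j)
          ≤ 8 * (16:ℝ)⁻¹ ^ j / (2 * (4:ℝ)⁻¹ ^ j) :=
        (div_le_div_iff_of_pos_right (by positivity)).2 h5
      have hcalc : 8 * (16:ℝ)⁻¹ ^ j / (2 * (4:ℝ)⁻¹ ^ j) = 4 * (4:ℝ)⁻¹ ^ j := by
        rw [hpow]
        field_simp
        ring
      rw [hcalc] at h6
      linarith
    -- Step 9: a.e. limits
    obtain ⟨ulim, hulim⟩ := ae_conv (C := 5) (by norm_num) (fun j => (hFuv j).1) hdu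
    obtain ⟨vlim, hvlim⟩ := ae_conv (C := 5) (by norm_num) (fun j => (hFuv j).2.1) hdv
    -- Step 10: patched limit functions
    have hgu : ∀ x, Tendsto (fun j => u j x) atTop (𝓝 (ulim x)) →
        A₂ x - T ≤ ulim x ∧ ulim x ≤ A₂ x + T := by
      intro x hx
      constructor
      · exact ge_of_tendsto hx (Filter.Eventually.of_forall fun j => ((hFuv j).2.2.1 x).1)
      · exact le_of_tendsto hx (Filter.Eventually.of_forall fun j => ((hFuv j).2.2.1 x).2)
    have hgv : ∀ y, Tendsto (fun j => v j y) atTop (𝓝 (vlim y)) →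
        B₂ y - T ≤ vlim y ∧ vlim y ≤ B₂ y + T := by
      intro y hy
      constructor
      · exact ge_of_tendsto hy (Filter.Eventually.of_forall fun j => ((hFuv j).2.2.2.1 y).1)
      · exact le_of_tendsto hy (Filter.Eventually.of_forall fun j => ((hFuv j).2.2.2.1 y).2)
    have hguv : ∀ x y, Tendsto (fun j => u j x) atTop (𝓝 (ulim x)) →
        Tendsto (fun j => v j y) atTop (𝓝 (vlim y)) → clim (x, y) ≤ ulim x + vlim y := by
      intro x y hx hy
      have hsum := hx.add hy
      have hm : ∀ m : ℕ, c m (x, y) ≤ ulim x + vlim y := by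
        intro m
        apply ge_of_tendsto hsum
        filter_upwards [eventually_ge_atTop m] with j hj
        have hmN : m ≤ Ns j := le_trans hj (hNsge j)
        exact le_trans (hmono m (Ns j) hmN (x, y)) ((hFuv j).2.2.2.2.1 x y)
      exact le_of_tendsto (hconv (x, y)) (Filter.Eventually.of_forall hm)
    set uh : X → ℝ := fun x =>
      if Tendsto (fun j => u j x) atTop (𝓝 (ulim x)) then ulim x else A₂ x + 2 * T
      with huhdef
    set vh : Y → ℝ := fun y =>
      if Tendsto (fun j => v j y) atTop (𝓝 (vlim y)) then vlim y else B₂ y + 2 * T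
      with hvhdef
    have huheq : uh =ᵐ[μ] ulim := by
      filter_upwards [hulim] with x hx
      simp only [huhdef, if_pos hx]
    have hvheq : vh =ᵐ[ν] vlim := by
      filter_upwards [hvlim] with y hy
      simp only [hvhdef, if_pos hy]
    have hfeasfinal : ∀ x y, clim (x, y) ≤ uh x + vh y := by
      intro x y
      have hub := hupp x y
      simp only [huhdef, hvhdef]
      by_cases hx : Tendsto (fun j => u j x) atTop (𝓝 (ulim x)) <;>
        by_cases hy : Tendsto (fun j => v j y) atTop (𝓝 (vlim y))
      · rw [if_pos hx, if_pos hy]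
        exact hguv x y hx hy
      · rw [if_pos hx, if_neg hy]
        have := (hgu x hx).1
        linarith
      · rw [if_neg hx, if_pos hy]
        have := (hgv y hy).1
        linarith
      · rw [if_neg hx, if_neg hy]
        linarith
    have hulim_asm : AEStronglyMeasurable ulim μ :=
      aestronglyMeasurable_of_tendsto_ae atTop (fun j => (hFuv j).1.aestronglyMeasurable) hulim
    have hvlim_asm : AEStronglyMeasurable vlim ν :=
      aestronglyMeasurable_of_tendsto_ae atTop (fun j => (hFuv j).2.1.aestronglyMeasurable) hvlim
    have hulim_bd : ∀ᵐ x ∂μ, ‖ulim x‖ ≤ |A₂ x| + T := by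
      filter_upwards [hulim] with x hx
      obtain ⟨e1, e2⟩ := hgu x hx
      rw [Real.norm_eq_abs, abs_le]
      constructor
      · linarith [neg_abs_le (A₂ x)]
      · linarith [le_abs_self (A₂ x)]
    have hvlim_bd : ∀ᵐ y ∂ν, ‖vlim y‖ ≤ |B₂ y| + T := by
      filter_upwards [hvlim] with y hy
      obtain ⟨e1, e2⟩ := hgv y hy
      rw [Real.norm_eq_abs, abs_le]
      constructor
      · linarith [neg_abs_le (B₂ y)]
      · linarith [le_abs_self (B₂ y)]
    have hulim_int : Integrable ulim μ :=
      Integrable.mono' (hA₂.abs.add (integrable_const _)) hulim_asm hulim_bd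
    have hvlim_int : Integrable vlim ν :=
      Integrable.mono' (hB₂.abs.add (integrable_const _)) hvlim_asm hvlim_bd
    have huh_int : Integrable uh μ := hulim_int.congr huheq.symm
    have hvh_int : Integrable vh ν := hvlim_int.congr hvheq.symm
    have hIu : Tendsto (fun j => ∫ x, u j x ∂μ) atTop (𝓝 (∫ x, ulim x ∂μ)) := by
      apply tendsto_integral_of_dominated_convergence (fun x => |A₂ x| + T)
        (fun j => (hFuv j).1.aestronglyMeasurable) (hA₂.abs.add (integrable_const _)) ?_ hulim
      intro j
      filter_upwards with x
      obtain ⟨e1, e2⟩ := (hFuv j).2.2.1 x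
      rw [Real.norm_eq_abs, abs_le]
      constructor
      · linarith [neg_abs_le (A₂ x)]
      · linarith [le_abs_self (A₂ x)]
    have hIv : Tendsto (fun j => ∫ y, v j y ∂ν) atTop (𝓝 (∫ y, vlim y ∂ν)) := by
      apply tendsto_integral_of_dominated_convergence (fun y => |B₂ y| + T)
        (fun j => (hFuv j).2.1.aestronglyMeasurable) (hB₂.abs.add (integrable_const _)) ?_ hvlim
      intro j
      filter_upwards with y
      obtain ⟨e1, e2⟩ := (hFuv j).2.2.2.1 y
      rw [Real.norm_eq_abs, abs_le]
      constructor
      · linarith [neg_abs_le (B₂ y)]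
      · linarith [le_abs_self (B₂ y)]
    have hIfin : ∫ x, ulim x ∂μ + ∫ y, vlim y ∂ν ≤ L + 3 * ε :=
      le_of_tendsto (hIu.add hIv)
        (Filter.Eventually.of_forall fun j => (hFuv j).2.2.2.2.2)
    have hlowlim : ∀ x y, A₁ x + B₁ y ≤ clim (x, y) := fun x y =>
      le_trans (hlow 0 x y) (hlelim 0 (x, y))
    calc sInf (dualUpperSet μ ν clim)
        ≤ ∫ x, uh x ∂μ + ∫ y, vh y ∂ν :=
          csInf_le (dus_bddBelow hA₁ hB₁ hlowlim)
            ⟨uh, vh, huh_int, hvh_int, hfeasfinal, rfl⟩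
      _ = ∫ x, ulim x ∂μ + ∫ y, vlim y ∂ν := by
          rw [integral_congr_ae huheq, integral_congr_ae hvheq]
      _ ≤ L + 3 * ε := hIfin




  refine le_of_forall_pos_le_add fun ε hε => ?_
  have h3 := claim (ε / 3) (by positivity)
  linarith


end AuxiliaryLemmas

theorem stmt2 [MeasurableSpace X] [MeasurableSpace Y]
    (μ : Measure X) (ν : Measure Y) [IsProbabilityMeasure μ] [IsProbabilityMeasure ν]
    (c : ℕ → X × Y → ℝ) (clim : X × Y → ℝ)
    (hmeas : ∀ n, Measurable (c n)) (hmeaslim : Measurable clim)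
    (hb : ∀ n, HasIntegrableBounds μ ν (c n)) (hblim : HasIntegrableBounds μ ν clim)
    (hmono : ∀ n z, c n z ≤ c (n + 1) z)
    (hconv : ∀ z, Tendsto (fun n => c n z) atTop (𝓝 (clim z))) :
    Tendsto (fun n => betaInf μ ν (c n)) atTop (𝓝 (betaInf μ ν clim)) := by
  classical
  obtain ⟨A₁, A₂', B₁, B₂', hA₁, hA₂', hB₁, hB₂', hb0⟩ := hb 0
  obtain ⟨A₁', A₂, B₁', B₂, hA₁', hA₂, hB₁', hB₂, hblim'⟩ := hblim
  have hmono' : ∀ m n, m ≤ n → ∀ z, c m z ≤ c n z := by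
    intro m n hmn z
    exact monotone_nat_of_le_succ (f := fun k => c k z) (fun k => hmono k z) hmn
  have hlelim : ∀ n z, c n z ≤ clim z := by
    intro n z
    apply ge_of_tendsto (hconv z)
    filter_upwards [eventually_ge_atTop n] with m hm
    exact hmono' n m hm z
  have hlow : ∀ n x y, A₁ x + B₁ y ≤ c n (x, y) := fun n x y =>
    le_trans (hb0 x y).1 (hmono' 0 n (Nat.zero_le n) (x, y))
  have hupp : ∀ x y, clim (x, y) ≤ A₂ x + B₂ y := fun x y => (hblim' x y).2
  have huppn : ∀ n x y, c n (x, y) ≤ A₂ x + B₂ y := fun n x y =>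
    le_trans (hlelim n (x, y)) (hupp x y)
  have hne : ∀ n, (dualUpperSet μ ν (c n)).Nonempty := fun n =>
    ⟨_, A₂, B₂, hA₂, hB₂, huppn n, rfl⟩
  have hnelim : (dualUpperSet μ ν clim).Nonempty := ⟨_, A₂, B₂, hA₂, hB₂, hupp, rfl⟩
  set β : ℕ → ℝ := fun n => betaInf μ ν (c n) with hβdef
  have hβmono : Monotone β := by
    intro m n hmn
    exact csInf_le_csInf (dus_bddBelow hA₁ hB₁ (hlow m)) (hne n)
      (dus_anti fun z => hmono' m n hmn z)
  have hβub : ∀ n, β n ≤ betaInf μ ν clim := fun n =>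
    csInf_le_csInf (dus_bddBelow hA₁ hB₁ (hlow n)) hnelim
      (dus_anti fun z => hlelim n z)
  have hbddA : BddAbove (Set.range β) := ⟨betaInf μ ν clim, by rintro r ⟨n, rfl⟩; exact hβub n⟩
  have htend : Tendsto β atTop (𝓝 (⨆ n, β n)) := tendsto_atTop_ciSup hβmono hbddA
  have hhard : betaInf μ ν clim ≤ ⨆ n, β n :=
    hard_dir hA₁ hA₂ hB₁ hB₂ hlow hupp hmono' hlelim hconv
  have heq : betaInf μ ν clim = ⨆ n, β n := le_antisymm hhard (ciSup_le hβub)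
  rw [heq]
  exact htend
end
end

section
/- Let (X,F,μ) and (Y,G,ν) be probability spaces and R ⊆ X×Y a finite union of measurable rectangles (R in the ring generated by {A×B : A∈F, B∈G}). Then α(1_R) = β(1_R) and α*(1_R) = β*(1_R): duality holds for indicators of elements of the rectangle ring. -/
open MeasureTheory Filter Topology

noncomputable section

variable {X Y : Type*}

open Finset
open scoped ENNReal

section Finite
variable {I J : Type*} [Fintype I] [Fintype J]

/-- Feasibility of a subflow supported on `S` with capacities `p`, `q`. -/
def Feas (p : I → ℝ) (q : J → ℝ) (S : Finset (I × J)) (σ : I → J → ℝ) : Prop :=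
  (∀ i j, 0 ≤ σ i j) ∧ (∀ i j, (i, j) ∉ S → σ i j = 0) ∧
    (∀ i, ∑ j, σ i j ≤ p i) ∧ (∀ j, ∑ i, σ i j ≤ q j)

inductive Reach (p : I → ℝ) (S : Finset (I × J)) (σ : I → J → ℝ) : I ⊕ J → Prop
  | row (i : I) : (∑ j, σ i j) < p i → Reach p S σ (.inl i)
  | col (i : I) (j : J) : Reach p S σ (.inl i) → (i, j) ∈ S → Reach p S σ (.inr j)
  | back (i : I) (j : J) : Reach p S σ (.inr j) → 0 < σ i j → Reach p S σ (.inl i)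

lemma reach_inv (p : I → ℝ) (q : J → ℝ) (S : Finset (I × J)) (σ : I → J → ℝ)
    (hf : Feas p q S σ) {v : I ⊕ J} (hv : Reach p S σ v) :
    ∀ ε : ℝ, 0 < ε → ∃ (δ : ℝ) (σ' : I → J → ℝ), 0 < δ ∧ δ ≤ ε ∧
      (∀ i j, 0 ≤ σ' i j) ∧ (∀ i j, (i, j) ∉ S → σ' i j = 0) ∧
      (∀ i, ∑ j, σ' i j ≤ p i) ∧
      (∀ i j, σ i j - (ε - δ) ≤ σ' i j) ∧
      Sum.elim (fun i => (∑ j, σ' i j ≤ p i - δ) ∧ ∀ j, (∑ i', σ' i' j) = ∑ i', σ i' j)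
        (fun j => ((∑ i', σ' i' j) = (∑ i', σ i' j) + δ) ∧
          ∀ j', j' ≠ j → (∑ i', σ' i' j') = ∑ i', σ i' j') v := by
  classical
  induction hv with
  | row i hi =>
    intro ε hε
    refine ⟨min ε (p i - ∑ j, σ i j), σ, by simp [hε, sub_pos.2 hi], min_le_left _ _,
      hf.1, hf.2.1, hf.2.2.1, fun i' j => by
        have := min_le_left ε (p i - ∑ j, σ i j); linarith, ?_⟩
    refine ⟨by have := min_le_right ε (p i - ∑ j, σ i j); linarith, fun j => rfl⟩
  | col i j hri hij ih =>
    intro ε hε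
    obtain ⟨δ, σ', hδ, hδε, h0, hsupp, hrow, hlb, hconc⟩ := ih ε hε
    simp only [Sum.elim_inl] at hconc
    refine ⟨δ, fun i' j' => σ' i' j' + (if i' = i ∧ j' = j then δ else 0), hδ, hδε, ?_, ?_, ?_, ?_, ?_⟩
    · intro i' j'; dsimp only; have := h0 i' j'; split <;> linarith
    · intro i' j' h; dsimp only; rcases hsupp i' j' h with h'
      split
      · next he => exact absurd (he.1 ▸ he.2 ▸ hij : (i', j') ∈ S) h
      · simp [h']
    · intro i'
      dsimp only
      rw [Finset.sum_add_distrib]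
      have hite : (∑ j', if i' = i ∧ j' = j then δ else 0) = if i' = i then δ else 0 := by
        by_cases h : i' = i
        · simp [h]
        · simp [h]
      rw [hite]
      by_cases h : i' = i
      · subst h; simpa using by linarith [hconc.1]
      · simpa [h] using hrow i'
    · intro i' j'; dsimp only; have := hlb i' j'; split <;> linarith
    · simp only [Sum.elim_inr]
      refine ⟨?_, ?_⟩
      · simp [Finset.sum_add_distrib, Finset.sum_ite_eq', hconc.2 j]
      · intro j' hj'
        simp [Finset.sum_add_distrib, hj', hconc.2 j']
  | back i j hrj hσij ih =>
    intro ε hε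
    have hε2 : (0:ℝ) < min (ε / 2) (σ i j / 2) := by
      have : 0 < σ i j := hσij
      positivity
    obtain ⟨δ, σ', hδ, hδε, h0, hsupp, hrow, hlb, hconc⟩ := ih _ hε2
    simp only [Sum.elim_inr] at hconc
    have hδε2 : δ ≤ ε / 2 := le_trans hδε (min_le_left _ _)
    have hδσ : δ ≤ σ i j / 2 := le_trans hδε (min_le_right _ _)
    have hσ'ij : δ ≤ σ' i j := by
      have := hlb i j
      have h1 : min (ε / 2) (σ i j / 2) ≤ σ i j / 2 := min_le_right _ _
      linarith
    refine ⟨δ, fun i' j' => σ' i' j' - (if i' = i ∧ j' = j then δ else 0), hδ,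
      by linarith, ?_, ?_, ?_, ?_, ?_⟩
    · intro i' j'; dsimp only; have := h0 i' j'
      split
      · next he => rw [he.1, he.2]; linarith
      · linarith
    · intro i' j' h
      dsimp only
      have h' := hsupp i' j' h
      split
      · next he =>
        exfalso
        have : σ i j = 0 := hf.2.1 i j (he.1 ▸ he.2 ▸ h)
        linarith
      · simp [h']
    · intro i'
      dsimp only
      have : (∑ j', (σ' i' j' - if i' = i ∧ j' = j then δ else 0)) ≤ ∑ j', σ' i' j' := by
        apply Finset.sum_le_sum; intro j' _; split <;> linarith [hδ.le]
      exact le_trans this (hrow i')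
    · intro i' j'
      dsimp only
      have hl := hlb i' j'
      have h1 : min (ε / 2) (σ i j / 2) ≤ ε / 2 := min_le_left _ _
      split <;> linarith
    · simp only [Sum.elim_inl]
      refine ⟨?_, ?_⟩
      · have h1 := hrow i
        simp only [Finset.sum_sub_distrib]
        simp [Finset.sum_ite_eq']
        linarith
      · intro j'
        by_cases h : j' = j
        · subst h
          simp [Finset.sum_sub_distrib, Finset.sum_ite_eq', hconc.1]
        · simp [Finset.sum_sub_distrib, h, hconc.2 j' h]



lemma flow_lemma (p : I → ℝ) (q : J → ℝ) (hp : ∀ i, 0 ≤ p i) (hq : ∀ j, 0 ≤ q j)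
    (S : Finset (I × J)) :
    ∃ (σ : I → J → ℝ) (I' : Finset I) (J' : Finset J),
      Feas p q S σ ∧
      (∀ i j, (i, j) ∈ S → i ∈ I' ∨ j ∈ J') ∧
      ((∑ i ∈ I', p i) + ∑ j ∈ J', q j ≤ ∑ i, ∑ j, σ i j) := by
  classical
  set K : Set (I → J → ℝ) := {σ | Feas p q S σ} with hK
  have hcont : ∀ (i : I) (j : J), Continuous fun σ : I → J → ℝ => σ i j :=
    fun i j => (continuous_apply j).comp (continuous_apply i)
  have hKc : IsClosed K := by
    have h1 : IsClosed {σ : I → J → ℝ | ∀ i j, 0 ≤ σ i j} := by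
      simp only [Set.setOf_forall]
      exact isClosed_iInter fun i => isClosed_iInter fun j =>
        isClosed_le continuous_const (hcont i j)
    have h2 : IsClosed {σ : I → J → ℝ | ∀ i j, (i, j) ∉ S → σ i j = 0} := by
      simp only [Set.setOf_forall]
      exact isClosed_iInter fun i => isClosed_iInter fun j =>
        isClosed_iInter fun _ => isClosed_eq (hcont i j) continuous_const
    have h3 : IsClosed {σ : I → J → ℝ | ∀ i, ∑ j, σ i j ≤ p i} := by
      simp only [Set.setOf_forall]
      exact isClosed_iInter fun i =>
        isClosed_le (continuous_finset_sum _ fun j _ => hcont i j) continuous_const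
    have h4 : IsClosed {σ : I → J → ℝ | ∀ j, ∑ i, σ i j ≤ q j} := by
      simp only [Set.setOf_forall]
      exact isClosed_iInter fun j =>
        isClosed_le (continuous_finset_sum _ fun i _ => hcont i j) continuous_const
    have hKeq : K = {σ : I → J → ℝ | ∀ i j, 0 ≤ σ i j} ∩
        ({σ : I → J → ℝ | ∀ i j, (i, j) ∉ S → σ i j = 0} ∩
          ({σ : I → J → ℝ | ∀ i, ∑ j, σ i j ≤ p i} ∩
            {σ : I → J → ℝ | ∀ j, ∑ i, σ i j ≤ q j})) := by
      ext σ
      simp only [hK, Set.mem_setOf_eq, Set.mem_inter_iff, Feas]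
    rw [hKeq]
    exact h1.inter (h2.inter (h3.inter h4))
  have hKb : K ⊆ Set.Icc (0 : I → J → ℝ) (fun i _ => p i) := by
    rintro σ ⟨h0, hsupp, hrow, hcol⟩
    refine Set.mem_Icc.2 ⟨?_, ?_⟩
    · intro i; intro j; exact h0 i j
    · intro i; intro j
      exact le_trans (Finset.single_le_sum (fun j' _ => h0 i j') (Finset.mem_univ j)) (hrow i)
  have hKcomp : IsCompact K := isCompact_Icc.of_isClosed_subset hKc hKb
  have hKne : K.Nonempty := ⟨0, fun _ _ => le_refl 0, fun _ _ _ => rfl,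
    fun i => by simpa using hp i, fun j => by simpa using hq j⟩
  obtain ⟨σ, hσK, hmax⟩ := hKcomp.exists_isMaxOn hKne
    ((continuous_finset_sum _ fun (i : I) _ =>
      continuous_finset_sum _ fun (j : J) _ => hcont i j).continuousOn
      (f := fun σ : I → J → ℝ => ∑ i, ∑ j, σ i j))
  obtain ⟨h0, hsupp, hrow, hcol⟩ := hσK
  have hσK' : σ ∈ K := ⟨h0, hsupp, hrow, hcol⟩
  have hcolfull : ∀ j, Reach p S σ (.inr j) → (∑ i, σ i j) = q j := by
    intro j hj
    by_contra hne
    have hlt : (∑ i, σ i j) < q j := lt_of_le_of_ne (hcol j) hne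
    obtain ⟨δ, σ', hδ, hδε, h0', hsupp', hrow', hlb', hconc⟩ :=
      reach_inv p q S σ hσK' hj _ (sub_pos.2 hlt)
    simp only [Sum.elim_inr] at hconc
    have hK' : σ' ∈ K := by
      refine ⟨h0', hsupp', hrow', fun j' => ?_⟩
      by_cases h : j' = j
      · subst h; rw [hconc.1]; linarith
      · rw [hconc.2 j' h]; exact hcol j'
    have hle := hmax hK'
    have e1 : ∀ j' : J, (∑ i, σ' i j') = (∑ i, σ i j') + (if j' = j then δ else 0) := by
      intro j'; by_cases h : j' = j
      · subst h; simp [hconc.1]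
      · simp [h, hconc.2 j' h]
    have htot : (∑ i, ∑ j', σ' i j') = (∑ i, ∑ j', σ i j') + δ :=
      calc (∑ i, ∑ j', σ' i j') = ∑ j', ∑ i, σ' i j' := Finset.sum_comm
        _ = ∑ j', ((∑ i, σ i j') + (if j' = j then δ else 0)) := by
            exact Finset.sum_congr rfl fun j' _ => e1 j'
        _ = (∑ j', ∑ i, σ i j') + δ := by
            rw [Finset.sum_add_distrib]; simp
        _ = (∑ i, ∑ j', σ i j') + δ := by rw [Finset.sum_comm]
    have hle' : (∑ i, ∑ j', σ' i j') ≤ ∑ i, ∑ j', σ i j' := hle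
    rw [htot] at hle'
    linarith
  set I' : Finset I := Finset.univ.filter (fun i => ¬ Reach p S σ (.inl i)) with hI'
  set J' : Finset J := Finset.univ.filter (fun j => Reach p S σ (.inr j)) with hJ'
  refine ⟨σ, I', J', ⟨h0, hsupp, hrow, hcol⟩, ?_, ?_⟩
  · intro i j hij
    by_cases h : Reach p S σ (.inl i)
    · exact Or.inr (by simp [hJ', Reach.col i j h hij])
    · exact Or.inl (by simp [hI', h])
  · have hrowfull : ∀ i ∈ I', p i = ∑ j, σ i j := by
      intro i hi
      simp only [hI', Finset.mem_filter] at hi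
      by_contra hne
      exact hi.2 (Reach.row i (lt_of_le_of_ne (hrow i) (Ne.symm hne)))
    have e1 : (∑ i ∈ I', p i) = ∑ i ∈ I', ∑ j, σ i j := Finset.sum_congr rfl hrowfull
    have e2 : (∑ j ∈ J', q j) = ∑ j ∈ J', ∑ i, σ i j := by
      refine Finset.sum_congr rfl fun j hj => ?_
      simp only [hJ', Finset.mem_filter] at hj
      exact (hcolfull j hj.2).symm
    rw [e1, e2]
    have key : ∀ i j, (if i ∈ I' then σ i j else 0) + (if j ∈ J' then σ i j else 0) ≤ σ i j := by
      intro i j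
      by_cases hi : i ∈ I' <;> by_cases hj : j ∈ J'
      · have hnr : ¬ Reach p S σ (.inl i) := by
          have := hi; simp only [hI', Finset.mem_filter] at this; exact this.2
        have hrc : Reach p S σ (.inr j) := by
          have := hj; simp only [hJ', Finset.mem_filter] at this; exact this.2
        have hz : σ i j = 0 := by
          by_contra hz
          exact hnr (Reach.back i j hrc (lt_of_le_of_ne (h0 i j) (Ne.symm hz)))
        simp [hi, hj, hz]
      · simp [hi, hj, h0 i j]
      · simp [hi, hj, h0 i j]
      · simp [hi, hj, h0 i j]
    have eA : (∑ i ∈ I', ∑ j, σ i j) = ∑ i, ∑ j, (if i ∈ I' then σ i j else 0) :=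
      calc (∑ i ∈ I', ∑ j, σ i j) = ∑ i, if i ∈ I' then (∑ j, σ i j) else 0 := by
            rw [← Finset.univ_inter I', ← Finset.sum_ite_mem]
            simp
        _ = ∑ i, ∑ j, (if i ∈ I' then σ i j else 0) := Finset.sum_congr rfl fun i _ => by
            by_cases h : i ∈ I' <;> simp [h]
    have eB : (∑ j ∈ J', ∑ i, σ i j) = ∑ i, ∑ j, (if j ∈ J' then σ i j else 0) :=
      calc (∑ j ∈ J', ∑ i, σ i j) = ∑ j, if j ∈ J' then (∑ i, σ i j) else 0 := by
            rw [← Finset.univ_inter J', ← Finset.sum_ite_mem]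
            simp
        _ = ∑ j, ∑ i, (if j ∈ J' then σ i j else 0) := Finset.sum_congr rfl fun j _ => by
            by_cases h : j ∈ J' <;> simp [h]
        _ = ∑ i, ∑ j, (if j ∈ J' then σ i j else 0) := Finset.sum_comm
    rw [eA, eB, ← Finset.sum_add_distrib]
    refine Finset.sum_le_sum fun i _ => ?_
    rw [← Finset.sum_add_distrib]
    exact Finset.sum_le_sum fun j _ => key i j

lemma complete_lemma (p : I → ℝ) (q : J → ℝ) (S : Finset (I × J)) (σ : I → J → ℝ)
    (hf : Feas p q S σ) (hps : ∑ i, p i = 1) (hqs : ∑ j, q j = 1) :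
    ∃ π : I → J → ℝ, (∀ i j, 0 ≤ π i j) ∧ (∀ i j, σ i j ≤ π i j) ∧
      (∀ i, ∑ j, π i j = p i) ∧ (∀ j, ∑ i, π i j = q j) := by
  classical
  obtain ⟨h0, hsupp, hrow, hcol⟩ := hf
  set T : ℝ := ∑ i, ∑ j, σ i j with hT
  set a : I → ℝ := fun i => p i - ∑ j, σ i j with ha
  set b : J → ℝ := fun j => q j - ∑ i, σ i j with hb
  have ha0 : ∀ i, 0 ≤ a i := fun i => sub_nonneg.2 (hrow i)
  have hb0 : ∀ j, 0 ≤ b j := fun j => sub_nonneg.2 (hcol j)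
  have haT : ∑ i, a i = 1 - T := by
    simp only [ha, Finset.sum_sub_distrib, hps, hT]
  have hbT : ∑ j, b j = 1 - T := by
    simp only [hb, Finset.sum_sub_distrib, hqs, hT]
    rw [Finset.sum_comm]
  have hT1 : T ≤ 1 := by
    rw [hT, ← hps]
    exact Finset.sum_le_sum fun i _ => hrow i
  by_cases hTe : T = 1
  · have hza : ∀ i, a i = 0 := by
      intro i
      have h := (Finset.sum_eq_zero_iff_of_nonneg (fun i _ => ha0 i)).1 (by rw [haT, hTe]; ring)
      exact h i (Finset.mem_univ i)
    have hzb : ∀ j, b j = 0 := by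
      intro j
      have h := (Finset.sum_eq_zero_iff_of_nonneg (fun j _ => hb0 j)).1 (by rw [hbT, hTe]; ring)
      exact h j (Finset.mem_univ j)
    exact ⟨σ, h0, fun i j => le_refl _, fun i => by have := hza i; simp [ha] at this; linarith,
      fun j => by have := hzb j; simp [hb] at this; linarith⟩
  · have hTlt : T < 1 := lt_of_le_of_ne hT1 hTe
    have hD : (0:ℝ) < 1 - T := by linarith
    refine ⟨fun i j => σ i j + a i * b j / (1 - T), ?_, ?_, ?_, ?_⟩
    · intro i j
      have : 0 ≤ a i * b j / (1 - T) := div_nonneg (mul_nonneg (ha0 i) (hb0 j)) hD.le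
      linarith [h0 i j]
    · intro i j
      have : 0 ≤ a i * b j / (1 - T) := div_nonneg (mul_nonneg (ha0 i) (hb0 j)) hD.le
      linarith
    · intro i
      rw [Finset.sum_add_distrib]
      have e : (∑ j, a i * b j / (1 - T)) = a i := by
        rw [← Finset.sum_div, ← Finset.mul_sum, hbT, mul_div_assoc, div_self (ne_of_gt hD),
          mul_one]
      rw [e]
      simp [ha]
    · intro j
      rw [Finset.sum_add_distrib]
      have e : (∑ i, a i * b j / (1 - T)) = b j := by
        rw [← Finset.sum_div, ← Finset.sum_mul, haT, mul_comm, mul_div_assoc,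
          div_self (ne_of_gt hD), mul_one]
      rw [e]
      simp [hb]
end Finite


/-! ### Partition/atom machinery -/

section Atoms
variable {Z : Type*} [MeasurableSpace Z]

def atomOf {n : ℕ} (A : Fin n → Set Z) (s : Fin n → Bool) : Set Z :=
  {x | ∀ i, x ∈ A i ↔ s i = true}

lemma atomOf_measurable {n : ℕ} {A : Fin n → Set Z} (hA : ∀ i, MeasurableSet (A i))
    (s : Fin n → Bool) : MeasurableSet (atomOf A s) := by
  have he : atomOf A s = ⋂ i, (if s i = true then A i else (A i)ᶜ) := by
    ext x
    simp only [atomOf, Set.mem_setOf_eq, Set.mem_iInter]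
    refine forall_congr' fun i => ?_
    by_cases h : s i = true
    · simp [h]
    · simp [h]
  rw [he]
  exact MeasurableSet.iInter fun i => by
    by_cases h : s i = true
    · simpa [h] using hA i
    · simpa [h] using (hA i).compl

lemma atomOf_unique {n : ℕ} (A : Fin n → Set Z) (x : Z) : ∃! s, x ∈ atomOf A s := by
  classical
  refine ⟨fun i => decide (x ∈ A i), fun i => by simp, ?_⟩
  intro s hs
  funext i
  have h : x ∈ A i ↔ s i = true := hs i
  by_cases hx : x ∈ A i
  · simp [hx, h.1 hx]
  · have h1 : s i = false := by
      cases hsi : s i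
      · rfl
      · exact absurd (h.2 hsi) hx
    simp [hx, h1]

lemma partition_sum {I : Type*} [Fintype I] (μ : Measure Z)
    (At : I → Set Z) (hAm : ∀ s, MeasurableSet (At s)) (hAu : ∀ x, ∃! s, x ∈ At s)
    (E : Set Z) (hE : MeasurableSet E) : (∑ s, μ (E ∩ At s)) = μ E := by
  have hdisj : (↑(Finset.univ : Finset I) : Set I).PairwiseDisjoint (fun s => E ∩ At s) := by
    intro s _ s' _ hss
    refine Set.disjoint_left.2 fun x hx hx' => hss ?_
    exact (hAu x).unique hx.2 hx'.2
  rw [← measure_biUnion_finset hdisj (fun s _ => hE.inter (hAm s))]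
  congr 1
  ext x
  constructor
  · intro hx
    rcases Set.mem_iUnion₂.1 hx with ⟨s, -, hxE, -⟩
    exact hxE
  · intro hxE
    exact Set.mem_iUnion₂.2 ⟨(hAu x).choose, Finset.mem_univ _, hxE, (hAu x).choose_spec.1⟩

lemma partition_measure_biUnion {I : Type*} [Fintype I] (μ : Measure Z)
    (At : I → Set Z) (hAm : ∀ s, MeasurableSet (At s)) (hAu : ∀ x, ∃! s, x ∈ At s)
    (I' : Finset I) : μ (⋃ s ∈ I', At s) = ∑ s ∈ I', μ (At s) := by
  refine measure_biUnion_finset ?_ (fun s _ => hAm s)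
  intro s _ s' _ hss
  refine Set.disjoint_left.2 fun x hx hx' => hss ?_
  exact (hAu x).unique hx hx' 

end Atoms

section MeasurePart
variable {X Y : Type*} [MeasurableSpace X] [MeasurableSpace Y]

lemma coupling_of_matrix {I J : Type*} [Fintype I] [Fintype J]
    (μ : Measure X) (ν : Measure Y) [IsProbabilityMeasure μ] [IsProbabilityMeasure ν]
    (At : I → Set X) (Bt : J → Set Y)
    (hAm : ∀ s, MeasurableSet (At s)) (hBm : ∀ t, MeasurableSet (Bt t))
    (hAu : ∀ x, ∃! s, x ∈ At s) (hBu : ∀ y, ∃! t, y ∈ Bt t)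
    (π : I → J → ℝ) (hπ0 : ∀ s t, 0 ≤ π s t)
    (hrowμ : ∀ s, ∑ t, π s t = (μ (At s)).toReal)
    (hcolν : ∀ t, ∑ s, π s t = (ν (Bt t)).toReal) :
    ∃ P : Measure (X × Y), IsCoupling μ ν P ∧
      ∀ (R : Set (X × Y)) (S : Finset (I × J)),
        (∀ s t, (s, t) ∈ S → At s ×ˢ Bt t ⊆ R) →
        (∀ s t, (s, t) ∉ S → Disjoint (At s ×ˢ Bt t) R) →
        P R = ENNReal.ofReal (∑ c ∈ S, π c.1 c.2) := by
  classical
  set μs : I → Measure X := fun s =>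
    if μ (At s) = 0 then μ else (μ (At s))⁻¹ • μ.restrict (At s) with hμs
  set νt : J → Measure Y := fun t =>
    if ν (Bt t) = 0 then ν else (ν (Bt t))⁻¹ • ν.restrict (Bt t) with hνt
  have hμsp : ∀ s, IsProbabilityMeasure (μs s) := by
    intro s
    rw [hμs]; dsimp only
    split
    · infer_instance
    · next h =>
      constructor
      rw [Measure.smul_apply, Measure.restrict_apply_univ, smul_eq_mul,
        ENNReal.inv_mul_cancel h (measure_ne_top μ _)]
  have hνtp : ∀ t, IsProbabilityMeasure (νt t) := by
    intro t
    rw [hνt]; dsimp only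
    split
    · infer_instance
    · next h =>
      constructor
      rw [Measure.smul_apply, Measure.restrict_apply_univ, smul_eq_mul,
        ENNReal.inv_mul_cancel h (measure_ne_top ν _)]
  have hμsA : ∀ s, μ (At s) ≠ 0 → μs s (At s) = 1 := by
    intro s h
    rw [hμs]; dsimp only
    rw [if_neg h, Measure.smul_apply, Measure.restrict_apply (hAm s), Set.inter_self,
      smul_eq_mul, ENNReal.inv_mul_cancel h (measure_ne_top μ _)]
  have hνtB : ∀ t, ν (Bt t) ≠ 0 → νt t (Bt t) = 1 := by
    intro t h
    rw [hνt]; dsimp only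
    rw [if_neg h, Measure.smul_apply, Measure.restrict_apply (hBm t), Set.inter_self,
      smul_eq_mul, ENNReal.inv_mul_cancel h (measure_ne_top ν _)]
  have hπz : ∀ s t, μ (At s) = 0 ∨ ν (Bt t) = 0 → π s t = 0 := by
    intro s t h
    refine le_antisymm ?_ (hπ0 s t)
    rcases h with h | h
    · have h2 := Finset.single_le_sum (f := fun t' => π s t') (fun t' _ => hπ0 s t')
        (Finset.mem_univ t)
      rw [hrowμ s, h] at h2
      simpa using h2
    · have h2 := Finset.single_le_sum (f := fun s' => π s' t) (fun s' _ => hπ0 s' t)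
        (Finset.mem_univ s)
      rw [hcolν t, h] at h2
      simpa using h2
  set P : Measure (X × Y) :=
    ∑ s : I, ∑ t : J, (ENNReal.ofReal (π s t)) • ((μs s).prod (νt t)) with hP
  have hPapp : ∀ U : Set (X × Y),
      P U = ∑ s : I, ∑ t : J, ENNReal.ofReal (π s t) * ((μs s).prod (νt t)) U := by
    intro U
    rw [hP, Measure.finset_sum_apply]
    refine Finset.sum_congr rfl fun s _ => ?_
    rw [Measure.finset_sum_apply]
    exact Finset.sum_congr rfl fun t _ => by rw [Measure.smul_apply, smul_eq_mul]
  have hsumrow : ∀ s : I, (∑ t, ENNReal.ofReal (π s t)) = μ (At s) := by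
    intro s
    rw [← ENNReal.ofReal_sum_of_nonneg (fun t _ => hπ0 s t), hrowμ s,
      ENNReal.ofReal_toReal (measure_ne_top μ _)]
  have hsumcol : ∀ t : J, (∑ s, ENNReal.ofReal (π s t)) = ν (Bt t) := by
    intro t
    rw [← ENNReal.ofReal_sum_of_nonneg (fun s _ => hπ0 s t), hcolν t,
      ENNReal.ofReal_toReal (measure_ne_top ν _)]
  have hApart : ∀ E : Set X, MeasurableSet E → (∑ s, μ (E ∩ At s)) = μ E := by
    intro E hE
    have hdisj : (↑(Finset.univ : Finset I) : Set I).PairwiseDisjoint (fun s => E ∩ At s) := by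
      intro s _ s' _ hss
      refine Set.disjoint_left.2 fun x hx hx' => hss ?_
      exact (hAu x).unique hx.2 hx'.2
    rw [← measure_biUnion_finset hdisj (fun s _ => hE.inter (hAm s))]
    congr 1
    ext x
    constructor
    · intro hx
      rcases Set.mem_iUnion₂.1 hx with ⟨s, -, hxE, -⟩
      exact hxE
    · intro hxE
      exact Set.mem_iUnion₂.2 ⟨(hAu x).choose, Finset.mem_univ _, hxE, (hAu x).choose_spec.1⟩
  have hBpart : ∀ F : Set Y, MeasurableSet F → (∑ t, ν (F ∩ Bt t)) = ν F := by
    intro F hF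
    have hdisj : (↑(Finset.univ : Finset J) : Set J).PairwiseDisjoint (fun t => F ∩ Bt t) := by
      intro t _ t' _ htt
      refine Set.disjoint_left.2 fun y hy hy' => htt ?_
      exact (hBu y).unique hy.2 hy'.2
    rw [← measure_biUnion_finset hdisj (fun t _ => hF.inter (hBm t))]
    congr 1
    ext y
    constructor
    · intro hy
      rcases Set.mem_iUnion₂.1 hy with ⟨t, -, hyF, -⟩
      exact hyF
    · intro hyF
      exact Set.mem_iUnion₂.2 ⟨(hBu y).choose, Finset.mem_univ _, hyF, (hBu y).choose_spec.1⟩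
  have hμsE : ∀ (s : I) (E : Set X), MeasurableSet E → μ (At s) * μs s E = μ (E ∩ At s) := by
    intro s E hE
    rw [hμs]; dsimp only
    by_cases h : μ (At s) = 0
    · rw [if_pos h, h, zero_mul]
      exact (measure_mono_null Set.inter_subset_right h).symm
    · rw [if_neg h, Measure.smul_apply, smul_eq_mul, ← mul_assoc,
        ENNReal.mul_inv_cancel h (measure_ne_top μ _), one_mul, Measure.restrict_apply hE]
  have hνtF : ∀ (t : J) (F : Set Y), MeasurableSet F → ν (Bt t) * νt t F = ν (F ∩ Bt t) := by
    intro t F hF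
    rw [hνt]; dsimp only
    by_cases h : ν (Bt t) = 0
    · rw [if_pos h, h, zero_mul]
      exact (measure_mono_null Set.inter_subset_right h).symm
    · rw [if_neg h, Measure.smul_apply, smul_eq_mul, ← mul_assoc,
        ENNReal.mul_inv_cancel h (measure_ne_top ν _), one_mul, Measure.restrict_apply hF]
  have hfst : P.map Prod.fst = μ := by
    ext E hE
    rw [Measure.map_apply measurable_fst hE, hPapp]
    calc (∑ s : I, ∑ t : J, ENNReal.ofReal (π s t) * ((μs s).prod (νt t)) (Prod.fst ⁻¹' E))
        = ∑ s : I, ∑ t : J, ENNReal.ofReal (π s t) * μs s E := by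
          refine Finset.sum_congr rfl fun s _ => Finset.sum_congr rfl fun t _ => ?_
          have h1 : (Prod.fst ⁻¹' E : Set (X × Y)) = E ×ˢ Set.univ := (Set.prod_univ).symm
          rw [h1, Measure.prod_prod, (hνtp t).measure_univ, mul_one]
      _ = ∑ s : I, (∑ t : J, ENNReal.ofReal (π s t)) * μs s E :=
          Finset.sum_congr rfl fun s _ => (Finset.sum_mul _ _ _).symm
      _ = ∑ s : I, μ (E ∩ At s) :=
          Finset.sum_congr rfl fun s _ => by rw [hsumrow s, hμsE s E hE]
      _ = μ E := hApart E hE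
  have hsnd : P.map Prod.snd = ν := by
    ext F hF
    rw [Measure.map_apply measurable_snd hF, hPapp]
    calc (∑ s : I, ∑ t : J, ENNReal.ofReal (π s t) * ((μs s).prod (νt t)) (Prod.snd ⁻¹' F))
        = ∑ s : I, ∑ t : J, ENNReal.ofReal (π s t) * νt t F := by
          refine Finset.sum_congr rfl fun s _ => Finset.sum_congr rfl fun t _ => ?_
          have h1 : (Prod.snd ⁻¹' F : Set (X × Y)) = Set.univ ×ˢ F := (Set.univ_prod).symm
          rw [h1, Measure.prod_prod, (hμsp s).measure_univ, one_mul]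
      _ = ∑ t : J, ∑ s : I, ENNReal.ofReal (π s t) * νt t F := Finset.sum_comm
      _ = ∑ t : J, (∑ s : I, ENNReal.ofReal (π s t)) * νt t F :=
          Finset.sum_congr rfl fun t _ => (Finset.sum_mul _ _ _).symm
      _ = ∑ t : J, ν (F ∩ Bt t) :=
          Finset.sum_congr rfl fun t _ => by rw [hsumcol t, hνtF t F hF]
      _ = ν F := hBpart F hF
  have hPuniv : IsProbabilityMeasure P := by
    constructor
    have h1 : (P.map Prod.fst) Set.univ = P Set.univ := by
      rw [Measure.map_apply measurable_fst MeasurableSet.univ, Set.preimage_univ]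
    rw [← h1, hfst, measure_univ]
  refine ⟨P, ⟨hPuniv, hfst, hsnd⟩, ?_⟩
  intro R S hsub hdisjS
  rw [hPapp]
  have e : ∀ s t, ENNReal.ofReal (π s t) * ((μs s).prod (νt t)) R
      = if (s, t) ∈ S then ENNReal.ofReal (π s t) else 0 := by
    intro s t
    by_cases hz : π s t = 0
    · simp [hz]
    · have hμz : μ (At s) ≠ 0 := fun h => hz (hπz s t (Or.inl h))
      have hνz : ν (Bt t) ≠ 0 := fun h => hz (hπz s t (Or.inr h))
      haveI := hμsp s; haveI := hνtp t
      have hprodrect : ((μs s).prod (νt t)) (At s ×ˢ Bt t) = 1 := by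
        rw [Measure.prod_prod, hμsA s hμz, hνtB t hνz, mul_one]
      by_cases hS : (s, t) ∈ S
      · have h1 : ((μs s).prod (νt t)) R = 1 := by
          refine le_antisymm prob_le_one ?_
          calc (1 : ℝ≥0∞) = ((μs s).prod (νt t)) (At s ×ˢ Bt t) := hprodrect.symm
            _ ≤ ((μs s).prod (νt t)) R := measure_mono (hsub s t hS)
        rw [h1, mul_one, if_pos hS]
      · have h1 : ((μs s).prod (νt t)) R = 0 := by
          have hc : ((μs s).prod (νt t)) ((At s ×ˢ Bt t)ᶜ) = 0 := by
            rw [prob_compl_eq_one_sub ((hAm s).prod (hBm t)), hprodrect, tsub_self]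
          exact measure_mono_null
            (fun z hzR hzrect => (Set.disjoint_left.1 (hdisjS s t hS)) hzrect hzR) hc
        rw [h1, mul_zero, if_neg hS]
  calc (∑ s : I, ∑ t : J, ENNReal.ofReal (π s t) * ((μs s).prod (νt t)) R)
      = ∑ s : I, ∑ t : J, (if (s, t) ∈ S then ENNReal.ofReal (π s t) else 0) :=
        Finset.sum_congr rfl fun s _ => Finset.sum_congr rfl fun t _ => e s t
    _ = ∑ c ∈ Finset.univ ×ˢ Finset.univ,
          (if c ∈ S then ENNReal.ofReal (π c.1 c.2) else 0) :=
        (Finset.sum_product (s := Finset.univ) (t := Finset.univ)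
          (f := fun c => if c ∈ S then ENNReal.ofReal (π c.1 c.2) else 0)).symm
    _ = ∑ c ∈ S, ENNReal.ofReal (π c.1 c.2) := by
        rw [Finset.univ_product_univ, Finset.sum_ite_mem, Finset.univ_inter]
    _ = ENNReal.ofReal (∑ c ∈ S, π c.1 c.2) :=
        (ENNReal.ofReal_sum_of_nonneg fun c _ => hπ0 c.1 c.2).symm

end MeasurePart

section Weak
variable [MeasurableSpace X] [MeasurableSpace Y]

lemma coupling_integral (μ : Measure X) (ν : Measure Y) {P : Measure (X × Y)}
    (hP : IsCoupling μ ν P) {f : X → ℝ} {g : Y → ℝ}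
    (hf : Integrable f μ) (hg : Integrable g ν) :
    Integrable (fun z : X × Y => f z.1 + g z.2) P ∧
      ∫ z, (f z.1 + g z.2) ∂P = ∫ x, f x ∂μ + ∫ y, g y ∂ν := by
  obtain ⟨hPp, h1, h2⟩ := hP
  have hf1 : AEStronglyMeasurable f (P.map Prod.fst) := by
    rw [h1]; exact hf.aestronglyMeasurable
  have hg1 : AEStronglyMeasurable g (P.map Prod.snd) := by
    rw [h2]; exact hg.aestronglyMeasurable
  have hfi : Integrable (fun z : X × Y => f z.1) P := by
    have h := (integrable_map_measure hf1 measurable_fst.aemeasurable).1 (by rw [h1]; exact hf)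
    exact h
  have hgi : Integrable (fun z : X × Y => g z.2) P := by
    have h := (integrable_map_measure hg1 measurable_snd.aemeasurable).1 (by rw [h2]; exact hg)
    exact h
  refine ⟨hfi.add hgi, ?_⟩
  rw [integral_add hfi hgi]
  congr 1
  · rw [← h1]
    exact (integral_map measurable_fst.aemeasurable hf1).symm
  · rw [← h2]
    exact (integral_map measurable_snd.aemeasurable hg1).symm

lemma weak_le (μ : Measure X) (ν : Measure Y) {c : X × Y → ℝ}
    (hci : ∀ P : Measure (X × Y), IsCoupling μ ν P → Integrable c P)
    {a b : ℝ} (ha : a ∈ dualLowerSet μ ν c) (hb : b ∈ primalSet μ ν c) : a ≤ b := by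
  obtain ⟨f, g, hf, hg, hfg, rfl⟩ := ha
  obtain ⟨P, hP, rfl⟩ := hb
  obtain ⟨hint, heq⟩ := coupling_integral μ ν hP hf hg
  rw [← heq]
  exact integral_mono hint (hci P hP) fun z => hfg z.1 z.2

lemma weak_le' (μ : Measure X) (ν : Measure Y) {c : X × Y → ℝ}
    (hci : ∀ P : Measure (X × Y), IsCoupling μ ν P → Integrable c P)
    {a b : ℝ} (hb : b ∈ primalSet μ ν c) (ha : a ∈ dualUpperSet μ ν c) : b ≤ a := by
  obtain ⟨f, g, hf, hg, hfg, rfl⟩ := ha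
  obtain ⟨P, hP, rfl⟩ := hb
  obtain ⟨hint, heq⟩ := coupling_integral μ ν hP hf hg
  rw [← heq]
  exact integral_mono (hci P hP) hint fun z => hfg z.1 z.2

lemma prod_coupling (μ : Measure X) (ν : Measure Y)
    [IsProbabilityMeasure μ] [IsProbabilityMeasure ν] : IsCoupling μ ν (μ.prod ν) := by
  refine ⟨by infer_instance, ?_, ?_⟩
  · rw [Measure.map_fst_prod, measure_univ, one_smul]
  · rw [Measure.map_snd_prod, measure_univ, one_smul]

end Weak

theorem stmt5 [MeasurableSpace X] [MeasurableSpace Y]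
    (μ : Measure X) (ν : Measure Y) [IsProbabilityMeasure μ] [IsProbabilityMeasure ν]
    (R : Set (X × Y)) (hR : IsRectUnion R) :
    alphaInf μ ν (indR R) = betaSup μ ν (indR R) ∧
      alphaSup μ ν (indR R) = betaInf μ ν (indR R) := by
  classical
  obtain ⟨n, A, B, hA, hB, hReq⟩ := hR
  set c : X × Y → ℝ := indR R with hc
  have hRm : MeasurableSet R := by
    rw [hReq]; exact MeasurableSet.iUnion fun i => (hA i).prod (hB i)
  have hc0 : ∀ z, 0 ≤ c z := fun z => Set.indicator_nonneg (fun _ _ => zero_le_one) z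
  have hc1 : ∀ z, c z ≤ 1 := by
    intro z
    rw [hc]
    by_cases h : z ∈ R
    · rw [indR, Set.indicator_of_mem h]
    · rw [indR, Set.indicator_of_notMem h]; exact zero_le_one
  have hci : ∀ P : Measure (X × Y), IsCoupling μ ν P → Integrable c P := by
    intro P hP
    haveI := hP.1
    exact (integrable_const (1 : ℝ)).indicator hRm
  -- basic members
  have hprod : IsCoupling μ ν (μ.prod ν) := prod_coupling μ ν
  set v0 : ℝ := ∫ z, c z ∂(μ.prod ν) with hv0
  have hv0mem : v0 ∈ primalSet μ ν c := ⟨μ.prod ν, hprod, rfl⟩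
  have hlow0 : (0 : ℝ) ∈ dualLowerSet μ ν c :=
    ⟨fun _ => 0, fun _ => 0, integrable_const 0, integrable_const 0,
      fun x y => by simpa using hc0 (x, y), by simp⟩
  have hup1 : (1 : ℝ) ∈ dualUpperSet μ ν c :=
    ⟨fun _ => 1, fun _ => 0, integrable_const 1, integrable_const 0,
      fun x y => by simpa using hc1 (x, y), by simp⟩
  have hbddPup : BddAbove (primalSet μ ν c) := ⟨1, fun b hb => weak_le' μ ν hci hb hup1⟩
  have hbddPlow : BddBelow (primalSet μ ν c) := ⟨0, fun b hb => weak_le μ ν hci hlow0 hb⟩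
  have hbddL : BddAbove (dualLowerSet μ ν c) := ⟨v0, fun a ha => weak_le μ ν hci ha hv0mem⟩
  have hbddU : BddBelow (dualUpperSet μ ν c) := ⟨v0, fun a ha => weak_le' μ ν hci hv0mem ha⟩
  -- atoms
  set At : (Fin n → Bool) → Set X := atomOf A with hAt
  set Bt : (Fin n → Bool) → Set Y := atomOf B with hBt
  have hAtm : ∀ s, MeasurableSet (At s) := fun s => atomOf_measurable hA s
  have hBtm : ∀ t, MeasurableSet (Bt t) := fun t => atomOf_measurable hB t
  have hAu : ∀ x, ∃! s, x ∈ At s := atomOf_unique A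
  have hBu : ∀ y, ∃! t, y ∈ Bt t := atomOf_unique B
  set p : (Fin n → Bool) → ℝ := fun s => (μ (At s)).toReal with hp
  set q : (Fin n → Bool) → ℝ := fun t => (ν (Bt t)).toReal with hq
  have hp0 : ∀ s, 0 ≤ p s := fun s => ENNReal.toReal_nonneg
  have hq0 : ∀ t, 0 ≤ q t := fun t => ENNReal.toReal_nonneg
  have hps : (∑ s, p s) = 1 := by
    have h1 := partition_sum μ At hAtm hAu Set.univ MeasurableSet.univ
    simp only [Set.univ_inter, measure_univ] at h1
    rw [hp]
    rw [← ENNReal.toReal_sum (fun s _ => measure_ne_top μ _), h1, ENNReal.toReal_one]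
  have hqs : (∑ t, q t) = 1 := by
    have h1 := partition_sum ν Bt hBtm hBu Set.univ MeasurableSet.univ
    simp only [Set.univ_inter, measure_univ] at h1
    rw [hq]
    rw [← ENNReal.toReal_sum (fun t _ => measure_ne_top ν _), h1, ENNReal.toReal_one]
  set S : Finset ((Fin n → Bool) × (Fin n → Bool)) :=
    Finset.univ.filter (fun st => ∃ i, st.1 i = true ∧ st.2 i = true) with hSdef
  have hmemR : ∀ (x : X) (y : Y) s t, x ∈ At s → y ∈ Bt t → ((x, y) ∈ R ↔ (s, t) ∈ S) := by
    intro x y s t hx hy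
    have hx' : ∀ i, x ∈ A i ↔ s i = true := hx
    have hy' : ∀ i, y ∈ B i ↔ t i = true := hy
    rw [hReq, hSdef]
    simp only [Finset.mem_filter, Finset.mem_univ, true_and, Set.mem_iUnion, Set.mem_prod]
    constructor
    · rintro ⟨i, hxi, hyi⟩
      exact ⟨i, (hx' i).1 hxi, (hy' i).1 hyi⟩
    · rintro ⟨i, hsi, hti⟩
      exact ⟨i, (hx' i).2 hsi, (hy' i).2 hti⟩
  have hsub : ∀ s t, (s, t) ∈ S → At s ×ˢ Bt t ⊆ R := by
    intro s t hst z hz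
    exact (hmemR z.1 z.2 s t hz.1 hz.2).2 hst
  have hdisj : ∀ s t, (s, t) ∉ S → Disjoint (At s ×ˢ Bt t) R := by
    intro s t hst
    refine Set.disjoint_left.2 fun z hz hzR => hst ?_
    exact (hmemR z.1 z.2 s t hz.1 hz.2).1 hzR
  -- a generic fact: sums over S vs total sums
  have hsumS : ∀ (m : (Fin n → Bool) → (Fin n → Bool) → ℝ),
      (∑ cc ∈ Finset.univ ×ˢ Finset.univ, m cc.1 cc.2) = ∑ i, ∑ j, m i j := by
    intro m
    exact Finset.sum_product (s := Finset.univ) (t := Finset.univ) (f := fun cc => m cc.1 cc.2)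
  ------------------------------------------------------------------
  -- PART 1 : alphaSup = betaInf
  ------------------------------------------------------------------
  obtain ⟨σ, I', J', hFeas, hcover, hcut⟩ := flow_lemma p q hp0 hq0 S
  obtain ⟨π, hπ0, hπσ, hπrow, hπcol⟩ := complete_lemma p q S σ hFeas hps hqs
  obtain ⟨P, hPc, hPval⟩ := coupling_of_matrix μ ν At Bt hAtm hBtm hAu hBu π hπ0
    (fun s => hπrow s) (fun t => hπcol t)
  have hPR := hPval R S hsub hdisj
  have hPint : (∫ z, c z ∂P) = ∑ cc ∈ S, π cc.1 cc.2 := by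
    have h1 : (∫ z, c z ∂P) = (P R).toReal := by
      rw [hc]
      simpa [indR, Measure.real] using integral_indicator_const (1 : ℝ) hRm (μ := P)
    rw [h1, hPR, ENNReal.toReal_ofReal (Finset.sum_nonneg fun cc _ => hπ0 cc.1 cc.2)]
  set U' : Set X := ⋃ s ∈ I', At s with hU'
  set V' : Set Y := ⋃ t ∈ J', Bt t with hV'
  have hU'm : MeasurableSet U' := by
    rw [hU']; exact MeasurableSet.biUnion I'.countable_toSet fun s _ => hAtm s
  have hV'm : MeasurableSet V' := by
    rw [hV']; exact MeasurableSet.biUnion J'.countable_toSet fun t _ => hBtm t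
  have hμU' : (μ U').toReal = ∑ s ∈ I', p s := by
    rw [hU', partition_measure_biUnion μ At hAtm hAu I',
      ENNReal.toReal_sum (fun s _ => measure_ne_top μ _)]
  have hνV' : (ν V').toReal = ∑ t ∈ J', q t := by
    rw [hV', partition_measure_biUnion ν Bt hBtm hBu J',
      ENNReal.toReal_sum (fun t _ => measure_ne_top ν _)]
  set f : X → ℝ := U'.indicator (fun _ => 1) with hfdef
  set g : Y → ℝ := V'.indicator (fun _ => 1) with hgdef
  have hfint : Integrable f μ := (integrable_const (1 : ℝ)).indicator hU'm
  have hgint : Integrable g ν := (integrable_const (1 : ℝ)).indicator hV'm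
  have hfeasU : ∀ x y, c (x, y) ≤ f x + g y := by
    intro x y
    have hf0 : (0 : ℝ) ≤ f x := Set.indicator_nonneg (fun _ _ => zero_le_one) x
    have hg0 : (0 : ℝ) ≤ g y := Set.indicator_nonneg (fun _ _ => zero_le_one) y
    by_cases hxy : (x, y) ∈ R
    · have h1 : c (x, y) = 1 := by rw [hc, indR, Set.indicator_of_mem hxy]
      have hx := (hAu x).choose_spec.1
      have hy := (hBu y).choose_spec.1
      have hst : ((hAu x).choose, (hBu y).choose) ∈ S := (hmemR x y _ _ hx hy).1 hxy
      rcases hcover _ _ hst with h | h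
      · have hfx : f x = 1 := by
          rw [hfdef]
          exact Set.indicator_of_mem (Set.mem_biUnion h hx) _
        rw [h1, hfx]; linarith
      · have hgy : g y = 1 := by
          rw [hgdef]
          exact Set.indicator_of_mem (Set.mem_biUnion h hy) _
        rw [h1, hgy]; linarith
    · have h1 : c (x, y) = 0 := by rw [hc, indR, Set.indicator_of_notMem hxy]
      rw [h1]; linarith
  have hdUmem : (∫ x, f x ∂μ + ∫ y, g y ∂ν) ∈ dualUpperSet μ ν c :=
    ⟨f, g, hfint, hgint, hfeasU, rfl⟩
  have hdUval : (∫ x, f x ∂μ + ∫ y, g y ∂ν) = (∑ s ∈ I', p s) + ∑ t ∈ J', q t := by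
    rw [hfdef, hgdef]
    rw [integral_indicator_const (1 : ℝ) hU'm, integral_indicator_const (1 : ℝ) hV'm]
    simp only [smul_eq_mul, mul_one]
    exact congrArg₂ (· + ·) hμU' hνV'
  have htotσ : (∑ i, ∑ j, σ i j) = ∑ cc ∈ S, σ cc.1 cc.2 := by
    rw [← hsumS fun i j => σ i j]
    symm
    refine Finset.sum_subset (fun cc _ => Finset.mem_product.2 ⟨Finset.mem_univ _, Finset.mem_univ _⟩) ?_
    intro cc _ hccS
    exact hFeas.2.1 cc.1 cc.2 hccS
  have hpart1 : alphaSup μ ν c = betaInf μ ν c := by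
    have h1 : betaInf μ ν c ≤ (∑ s ∈ I', p s) + ∑ t ∈ J', q t := by
      rw [← hdUval]
      exact csInf_le hbddU hdUmem
    have h2 : (∑ s ∈ I', p s) + ∑ t ∈ J', q t ≤ ∑ cc ∈ S, π cc.1 cc.2 := by
      refine le_trans hcut ?_
      rw [htotσ]
      exact Finset.sum_le_sum fun cc _ => hπσ cc.1 cc.2
    have h3 : (∑ cc ∈ S, π cc.1 cc.2) ≤ alphaSup μ ν c := by
      rw [← hPint]
      exact le_csSup hbddPup ⟨P, hPc, rfl⟩
    have h4 : alphaSup μ ν c ≤ betaInf μ ν c :=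
      csSup_le ⟨v0, hv0mem⟩ fun b hb => le_csInf ⟨1, hup1⟩ fun a ha => weak_le' μ ν hci hb ha
    linarith
  ------------------------------------------------------------------
  -- PART 2 : alphaInf = betaSup
  ------------------------------------------------------------------
  set Sc : Finset ((Fin n → Bool) × (Fin n → Bool)) := Finset.univ \ S with hScdef
  obtain ⟨σ₂, I₂, J₂, hFeas₂, hcover₂, hcut₂⟩ := flow_lemma p q hp0 hq0 Sc
  obtain ⟨π₂, hπ₂0, hπ₂σ, hπ₂row, hπ₂col⟩ := complete_lemma p q Sc σ₂ hFeas₂ hps hqs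
  obtain ⟨P₂, hP₂c, hP₂val⟩ := coupling_of_matrix μ ν At Bt hAtm hBtm hAu hBu π₂ hπ₂0
    (fun s => hπ₂row s) (fun t => hπ₂col t)
  have hP₂R := hP₂val R S hsub hdisj
  have hP₂int : (∫ z, c z ∂P₂) = ∑ cc ∈ S, π₂ cc.1 cc.2 := by
    have h1 : (∫ z, c z ∂P₂) = (P₂ R).toReal := by
      rw [hc]
      simpa [indR, Measure.real] using integral_indicator_const (1 : ℝ) hRm (μ := P₂)
    rw [h1, hP₂R, ENNReal.toReal_ofReal (Finset.sum_nonneg fun cc _ => hπ₂0 cc.1 cc.2)]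
  have htotπ₂ : (∑ cc ∈ Finset.univ ×ˢ Finset.univ, π₂ cc.1 cc.2) = 1 := by
    rw [hsumS fun i j => π₂ i j]
    calc (∑ i, ∑ j, π₂ i j) = ∑ i, p i := Finset.sum_congr rfl fun i _ => hπ₂row i
      _ = 1 := hps
  have hsplit : (∑ cc ∈ S, π₂ cc.1 cc.2) + (∑ cc ∈ Sc, π₂ cc.1 cc.2) = 1 := by
    have h := Finset.sum_sdiff (f := fun cc => π₂ cc.1 cc.2) (Finset.subset_univ S)
    rw [Finset.univ_product_univ] at htotπ₂
    rw [hScdef, add_comm, h]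
    exact htotπ₂
  have htotσ₂ : (∑ i, ∑ j, σ₂ i j) = ∑ cc ∈ Sc, σ₂ cc.1 cc.2 := by
    rw [← hsumS fun i j => σ₂ i j]
    symm
    refine Finset.sum_subset (fun cc _ => Finset.mem_product.2 ⟨Finset.mem_univ _, Finset.mem_univ _⟩) ?_
    intro cc _ hccS
    exact hFeas₂.2.1 cc.1 cc.2 hccS
  set U₂ : Set X := ⋃ s ∈ I₂, At s with hU₂
  set V₂ : Set Y := ⋃ t ∈ J₂, Bt t with hV₂
  have hU₂m : MeasurableSet U₂ := by
    rw [hU₂]; exact MeasurableSet.biUnion I₂.countable_toSet fun s _ => hAtm s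
  have hV₂m : MeasurableSet V₂ := by
    rw [hV₂]; exact MeasurableSet.biUnion J₂.countable_toSet fun t _ => hBtm t
  have hμU₂ : (μ U₂).toReal = ∑ s ∈ I₂, p s := by
    rw [hU₂, partition_measure_biUnion μ At hAtm hAu I₂,
      ENNReal.toReal_sum (fun s _ => measure_ne_top μ _)]
  have hνV₂ : (ν V₂).toReal = ∑ t ∈ J₂, q t := by
    rw [hV₂, partition_measure_biUnion ν Bt hBtm hBu J₂,
      ENNReal.toReal_sum (fun t _ => measure_ne_top ν _)]
  set f₂ : X → ℝ := fun x => 1 - U₂.indicator (fun _ => 1) x with hf₂def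
  set g₂ : Y → ℝ := fun y => - V₂.indicator (fun _ => 1) y with hg₂def
  have hf₂int : Integrable f₂ μ :=
    (integrable_const (1 : ℝ)).sub ((integrable_const (1 : ℝ)).indicator hU₂m)
  have hg₂int : Integrable g₂ ν := ((integrable_const (1 : ℝ)).indicator hV₂m).neg
  have hfeasL : ∀ x y, f₂ x + g₂ y ≤ c (x, y) := by
    intro x y
    have hiu0 : (0 : ℝ) ≤ U₂.indicator (fun _ => 1) x :=
      Set.indicator_nonneg (fun _ _ => zero_le_one) x
    have hiv0 : (0 : ℝ) ≤ V₂.indicator (fun _ => 1) y :=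
      Set.indicator_nonneg (fun _ _ => zero_le_one) y
    by_cases hxy : (x, y) ∈ R
    · have h1 : c (x, y) = 1 := by rw [hc, indR, Set.indicator_of_mem hxy]
      rw [h1, hf₂def, hg₂def]
      simp only
      linarith
    · have h1 : c (x, y) = 0 := by rw [hc, indR, Set.indicator_of_notMem hxy]
      have hx := (hAu x).choose_spec.1
      have hy := (hBu y).choose_spec.1
      have hstS : ((hAu x).choose, (hBu y).choose) ∉ S :=
        fun h => hxy ((hmemR x y _ _ hx hy).2 h)
      have hst : ((hAu x).choose, (hBu y).choose) ∈ Sc := by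
        rw [hScdef, Finset.mem_sdiff]
        exact ⟨Finset.mem_univ _, hstS⟩
      rw [h1, hf₂def, hg₂def]
      simp only
      rcases hcover₂ _ _ hst with h | h
      · have hfx : U₂.indicator (fun _ => (1:ℝ)) x = 1 :=
          Set.indicator_of_mem (Set.mem_biUnion h hx) _
        rw [hfx]
        linarith
      · have hgy : V₂.indicator (fun _ => (1:ℝ)) y = 1 :=
          Set.indicator_of_mem (Set.mem_biUnion h hy) _
        rw [hgy]
        have : U₂.indicator (fun _ => (1:ℝ)) x ≤ 1 := by
          by_cases hu : x ∈ U₂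
          · rw [Set.indicator_of_mem hu]
          · rw [Set.indicator_of_notMem hu]; exact zero_le_one
        linarith
  have hdLmem : (∫ x, f₂ x ∂μ + ∫ y, g₂ y ∂ν) ∈ dualLowerSet μ ν c :=
    ⟨f₂, g₂, hf₂int, hg₂int, hfeasL, rfl⟩
  have hdLval : (∫ x, f₂ x ∂μ + ∫ y, g₂ y ∂ν)
      = 1 - ((∑ s ∈ I₂, p s) + ∑ t ∈ J₂, q t) := by
    rw [hf₂def, hg₂def]
    have e1 : (∫ x, (1 - U₂.indicator (fun _ => (1:ℝ)) x) ∂μ) = 1 - (μ U₂).toReal := by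
      rw [integral_sub (integrable_const 1) ((integrable_const (1 : ℝ)).indicator hU₂m),
        integral_indicator_const (1 : ℝ) hU₂m]
      simp [Measure.real]
    have e2 : (∫ y, (- V₂.indicator (fun _ => (1:ℝ)) y) ∂ν) = - (ν V₂).toReal := by
      rw [integral_neg, integral_indicator_const (1 : ℝ) hV₂m]
      simp [Measure.real]
    rw [e1, e2, hμU₂, hνV₂]
    ring
  have hpart2 : alphaInf μ ν c = betaSup μ ν c := by
    have h1 : alphaInf μ ν c ≤ ∑ cc ∈ S, π₂ cc.1 cc.2 := by
      rw [← hP₂int]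
      exact csInf_le hbddPlow ⟨P₂, hP₂c, rfl⟩
    have h2 : (∑ cc ∈ S, π₂ cc.1 cc.2) ≤ 1 - ((∑ s ∈ I₂, p s) + ∑ t ∈ J₂, q t) := by
      have h3 : (∑ s ∈ I₂, p s) + ∑ t ∈ J₂, q t ≤ ∑ cc ∈ Sc, π₂ cc.1 cc.2 := by
        refine le_trans hcut₂ ?_
        rw [htotσ₂]
        exact Finset.sum_le_sum fun cc _ => hπ₂σ cc.1 cc.2
      linarith [hsplit]
    have h4 : 1 - ((∑ s ∈ I₂, p s) + ∑ t ∈ J₂, q t) ≤ betaSup μ ν c := by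
      rw [← hdLval]
      exact le_csSup hbddL hdLmem
    have h5 : betaSup μ ν c ≤ alphaInf μ ν c :=
      csSup_le ⟨0, hlow0⟩ fun a ha => le_csInf ⟨v0, hv0mem⟩ fun b hb => weak_le μ ν hci ha hb
    linarith
  exact ⟨hpart2, hpart1⟩
end
end

section
/- Let (X,F,μ) and (Y,G,ν) be probability spaces and H = ∪ₙ Rₙ where each Rₙ belongs to the field generated by the measurable rectangles A×B (A∈F, B∈G). Then α*(1_H) = β*(1_H): sup over couplings of P(H) equals the infimum of μ(f)+ν(g) over integrable f,g with f(x)+g(y) ≥ 1_H(x,y). -/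
open MeasureTheory Filter Topology
open Set
open scoped ENNReal NNReal
set_option linter.unusedSectionVars false
set_option maxHeartbeats 1000000

noncomputable section

variable {X Y : Type*}

namespace Stmt6Aux
section Matrix

variable {S T : Type*} [Fintype S] [Fintype T] [Nonempty S] [Nonempty T]
  [DecidableEq S] [DecidableEq T]

/-- feasible dual values -/
def feas (m : S → ℝ) (m' : T → ℝ) (w : S × T → ℝ) : Set ℝ :=
  {r | ∃ u : S → ℝ, ∃ v : T → ℝ, (∀ p : S × T, w p ≤ u p.1 + v p.2) ∧
    r = (∑ s, u s * m s) + (∑ t, v t * m' t)}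

def pf (m : S → ℝ) (m' : T → ℝ) (w : S × T → ℝ) : ℝ := sInf (feas m m' w)

variable {m : S → ℝ} {m' : T → ℝ}
variable (hm : ∀ s, 0 ≤ m s) (hm' : ∀ t, 0 ≤ m' t)
  (hs : ∑ s, m s = 1) (hs' : ∑ t, m' t = 1)
include hm hm' hs hs'

lemma feas_nonempty (w : S × T → ℝ) : (feas m m' w).Nonempty := by
  classical
  refine ⟨_, fun _ => ∑ p : S × T, |w p|, 0, fun p => ?_, rfl⟩
  have : |w p| ≤ ∑ q : S × T, |w q| :=
    Finset.single_le_sum (f := fun q => |w q|) (fun q _ => abs_nonneg _) (Finset.mem_univ p)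
  simpa using (le_abs_self (w p)).trans this

lemma sum_weight_eq (u : S → ℝ) (v : T → ℝ) :
    ∑ p : S × T, (m p.1 * m' p.2) * (u p.1 + v p.2)
      = (∑ s, u s * m s) + (∑ t, v t * m' t) := by
  rw [Fintype.sum_prod_type]
  have : ∀ s, ∑ t, (m s * m' t) * (u s + v t)
      = u s * m s * (∑ t, m' t) + m s * (∑ t, v t * m' t) := by
    intro s
    rw [Finset.mul_sum, Finset.mul_sum, ← Finset.sum_add_distrib]
    refine Finset.sum_congr rfl fun t _ => by ring
  rw [Finset.sum_congr rfl fun s _ => this s]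
  rw [Finset.sum_add_distrib, hs']
  rw [← Finset.sum_mul, ← Finset.sum_mul]
  ring_nf
  rw [hs]
  ring

lemma feas_lb {w : S × T → ℝ} {r : ℝ} (hr : r ∈ feas m m' w) :
    ∑ p : S × T, (m p.1 * m' p.2) * w p ≤ r := by
  obtain ⟨u, v, hw, rfl⟩ := hr
  rw [← sum_weight_eq hm hm' hs hs' u v]
  refine Finset.sum_le_sum fun p _ => mul_le_mul_of_nonneg_left (hw p) (mul_nonneg (hm p.1) (hm' p.2))

lemma feas_bddBelow (w : S × T → ℝ) : BddBelow (feas m m' w) :=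
  ⟨_, fun _ hr => feas_lb hm hm' hs hs' hr⟩

lemma pf_le {w : S × T → ℝ} {r : ℝ} (hr : r ∈ feas m m' w) : pf m m' w ≤ r :=
  csInf_le (feas_bddBelow hm hm' hs hs' w) hr

lemma pf_add (w₁ w₂ : S × T → ℝ) :
    pf m m' (w₁ + w₂) ≤ pf m m' w₁ + pf m m' w₂ := by
  refine le_of_forall_pos_le_add fun ε hε => ?_
  obtain ⟨r₁, hr₁, hlt₁⟩ := exists_lt_of_csInf_lt (feas_nonempty hm hm' hs hs' w₁)
    (lt_add_of_pos_right (pf m m' w₁) (half_pos hε))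
  obtain ⟨r₂, hr₂, hlt₂⟩ := exists_lt_of_csInf_lt (feas_nonempty hm hm' hs hs' w₂)
    (lt_add_of_pos_right (pf m m' w₂) (half_pos hε))
  obtain ⟨u₁, v₁, hw₁, rfl⟩ := hr₁
  obtain ⟨u₂, v₂, hw₂, rfl⟩ := hr₂
  have : ((∑ s, (u₁ + u₂) s * m s) + ∑ t, (v₁ + v₂) t * m' t) ∈ feas m m' (w₁ + w₂) := by
    refine ⟨u₁ + u₂, v₁ + v₂, fun p => ?_, rfl⟩
    have := add_le_add (hw₁ p) (hw₂ p)
    simpa [Pi.add_apply] using this.trans_eq (by ring)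
  refine (pf_le hm hm' hs hs' this).trans ?_
  have he : (∑ s, (u₁ + u₂) s * m s) + ∑ t, (v₁ + v₂) t * m' t
      = ((∑ s, u₁ s * m s) + ∑ t, v₁ t * m' t) + ((∑ s, u₂ s * m s) + ∑ t, v₂ t * m' t) := by
    simp [Pi.add_apply, add_mul, Finset.sum_add_distrib]; ring
  rw [he]; linarith

lemma pf_zero : pf m m' 0 = 0 := by
  have h1 : pf m m' 0 ≤ 0 := pf_le hm hm' hs hs' ⟨0, 0, by simp, by simp⟩
  have h2 : (0:ℝ) ≤ pf m m' 0 := by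
    have := le_csInf (feas_nonempty hm hm' hs hs' 0) (fun r hr => feas_lb  (w := 0) hm hm' hs hs' hr)
    simp at this; exact this
  linarith

lemma pf_smul {c : ℝ} (hc : 0 < c) (w : S × T → ℝ) :
    pf m m' (c • w) = c * pf m m' w := by
  have key : ∀ (d : ℝ) (hd : 0 < d) (w : S × T → ℝ),
      pf m m' (d • w) ≤ d * pf m m' w := by
    intro d hd w
    refine le_of_forall_pos_le_add fun ε hε => ?_
    obtain ⟨r, hr, hlt⟩ := exists_lt_of_csInf_lt (feas_nonempty hm hm' hs hs' w)
      (lt_add_of_pos_right (pf m m' w) (div_pos hε hd))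
    obtain ⟨u, v, hw, rfl⟩ := hr
    have : (d * ((∑ s, u s * m s) + ∑ t, v t * m' t)) ∈ feas m m' (d • w) := by
      refine ⟨fun s => d * u s, fun t => d * v t, fun p => ?_, by
        simp [Finset.mul_sum, mul_add, mul_assoc]⟩
      have := mul_le_mul_of_nonneg_left (hw p) hd.le
      simpa [mul_add] using this
    refine (pf_le hm hm' hs hs' this).trans ?_
    have := mul_le_mul_of_nonneg_left hlt.le hd.le
    calc d * ((∑ s, u s * m s) + ∑ t, v t * m' t)
        ≤ d * (pf m m' w + ε / d) := this
      _ = d * pf m m' w + ε := by field_simp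
  refine le_antisymm (key c hc w) ?_
  have h2 := key c⁻¹ (inv_pos.mpr hc) (c • w)
  rw [smul_smul, inv_mul_cancel₀ hc.ne', one_smul] at h2
  calc c * pf m m' w ≤ c * (c⁻¹ * pf m m' (c • w)) := by
        exact mul_le_mul_of_nonneg_left h2 hc.le
    _ = pf m m' (c • w) := by field_simp


/-- Finite transportation duality via Hahn-Banach. -/
theorem matrix_duality (K : Finset (S × T)) {ε : ℝ} (hε : 0 < ε) :
    ∃ (c : S × T → ℝ) (u : S → ℝ) (v : T → ℝ),
      (∀ p, 0 ≤ c p) ∧ (∀ s, ∑ t, c (s, t) = m s) ∧ (∀ t, ∑ s, c (s, t) = m' t) ∧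
      (∀ s, u s ∈ Set.Icc (0:ℝ) 1) ∧ (∀ t, v t ∈ Set.Icc (0:ℝ) 1) ∧
      (∀ p ∈ K, 1 ≤ u p.1 + v p.2) ∧
      (∑ s, u s * m s) + (∑ t, v t * m' t) ≤ (∑ p ∈ K, c p) + ε := by
  classical
  rcases Finset.eq_empty_or_nonempty K with rfl | hKne
  · refine ⟨fun p => m p.1 * m' p.2, 0, 0, fun p => mul_nonneg (hm p.1) (hm' p.2),
      fun s => by simp [← Finset.mul_sum, hs'],
      fun t => by simp [← Finset.sum_mul, hs],
      fun s => by simp, fun t => by simp, by simp, by simp [hε.le]⟩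
  -- w₀ is the indicator of K
  set w₀ : S × T → ℝ := fun p => if p ∈ K then 1 else 0 with hw₀
  have hw₀nonneg : ∀ p, 0 ≤ w₀ p := fun p => by by_cases h : p ∈ K <;> simp [hw₀, h]
  have hw₀ne : w₀ ≠ 0 := by
    obtain ⟨p, hp⟩ := hKne
    intro h
    have := congrFun h p
    simp [hw₀, hp] at this
  -- the linear functional on the span of w₀
  set β := pf m m' w₀ with hβ
  have hfeas0 : ∀ (x : Submodule.span ℝ {w₀}), (LinearPMap.mkSpanSingleton (σ := RingHom.id ℝ) w₀ β hw₀ne) x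
      ≤ pf m m' x := by
    rintro ⟨x, hx⟩
    obtain ⟨a, rfl⟩ := Submodule.mem_span_singleton.mp hx
    have happly : (LinearPMap.mkSpanSingleton (σ := RingHom.id ℝ) w₀ β hw₀ne) ⟨a • w₀, hx⟩ = a • β := by
      exact LinearPMap.mkSpanSingleton'_apply _ _ _ a _
    refine happly.trans_le ?_
    rcases lt_trichotomy a 0 with ha | ha | ha
    · have h1 : pf m m' (a • w₀) = (-a) * pf m m' (-w₀) := by
        have : a • w₀ = (-a) • (-w₀) := by simp
        rw [this, pf_smul hm hm' hs hs' (by linarith)]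
      have h2 : 0 ≤ pf m m' w₀ + pf m m' (-w₀) := by
        have := pf_add hm hm' hs hs' w₀ (-w₀)
        rw [add_neg_cancel, pf_zero hm hm' hs hs'] at this
        linarith
      rw [h1]
      have : a • β = a * β := rfl
      rw [this]
      nlinarith
    · subst ha
      have hcoe : ((⟨(0:ℝ) • w₀, hx⟩ : Submodule.span ℝ {w₀}) : S × T → ℝ) = 0 := by
        simp
      rw [hcoe, pf_zero hm hm' hs hs', zero_smul]
    · rw [pf_smul hm hm' hs hs' ha]
      exact le_of_eq rfl
  obtain ⟨g, hg_eq, hg_le⟩ := exists_extension_of_le_sublinear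
    (LinearPMap.mkSpanSingleton w₀ β hw₀ne) (pf m m')
    (fun c hc x => pf_smul hm hm' hs hs' hc x) (pf_add hm hm' hs hs') hfeas0
  -- the coupling
  set c : S × T → ℝ := fun p => g (Pi.single p 1) with hc
  have hg_single : ∀ (w : S × T → ℝ), g w = ∑ p : S × T, w p * c p := by
    intro w
    have hrepr : w = ∑ p : S × T, w p • (Pi.single p (1:ℝ) : S × T → ℝ) := by
      funext q
      rw [Finset.sum_apply]
      simp [Pi.single_apply]
    calc g w = g (∑ p : S × T, w p • (Pi.single p (1:ℝ) : S × T → ℝ)) := by rw [← hrepr]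
      _ = ∑ p : S × T, w p • g (Pi.single p 1) := by rw [map_sum]; simp
      _ = ∑ p : S × T, w p * c p := rfl
  -- nonnegativity
  have hcnonneg : ∀ p, 0 ≤ c p := by
    intro p
    have h1 : g (-(Pi.single p 1)) ≤ pf m m' (-(Pi.single p 1)) := hg_le _
    have h2 : pf m m' (-(Pi.single p 1)) ≤ 0 := by
      refine pf_le hm hm' hs hs' ⟨0, 0, fun q => ?_, by simp⟩
      by_cases h : q = p <;> simp [Pi.single_apply, h]
    have := (h1.trans h2)
    rw [map_neg] at this
    simpa [hc] using this
  -- row sums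
  have hrow : ∀ s₀, ∑ t, c (s₀, t) = m s₀ := by
    intro s₀
    set wr : S × T → ℝ := fun p => if p.1 = s₀ then 1 else 0 with hwr
    have hgr : g wr = ∑ t, c (s₀, t) := by
      rw [hg_single wr]
      rw [Fintype.sum_prod_type]
      rw [Finset.sum_eq_single s₀]
      · simp [hwr]
      · intro b _ hb
        simp [hwr, hb]
      · simp
    have hub : pf m m' wr ≤ m s₀ := by
      refine pf_le hm hm' hs hs' ⟨Pi.single s₀ 1, 0, fun q => ?_, by simp [Pi.single_apply]⟩
      by_cases h : q.1 = s₀ <;> simp [hwr, Pi.single_apply, h]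
    have hlb : pf m m' (-wr) ≤ -m s₀ := by
      refine pf_le hm hm' hs hs' ⟨-Pi.single s₀ 1, 0, fun q => ?_, by simp [Pi.single_apply]⟩
      by_cases h : q.1 = s₀ <;> simp [hwr, Pi.single_apply, h]
    have h1 : g wr ≤ m s₀ := (hg_le wr).trans hub
    have h2 : -g wr ≤ -m s₀ := by
      have := (hg_le (-wr)).trans hlb
      rwa [map_neg] at this
    rw [← hgr]
    linarith
  have hcol : ∀ t₀, ∑ s, c (s, t₀) = m' t₀ := by
    intro t₀
    set wr : S × T → ℝ := fun p => if p.2 = t₀ then 1 else 0 with hwr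
    have hgr : g wr = ∑ s, c (s, t₀) := by
      rw [hg_single wr]
      rw [Fintype.sum_prod_type]
      have : ∀ s : S, ∑ t, wr (s, t) * c (s, t) = c (s, t₀) := by
        intro s
        rw [Finset.sum_eq_single t₀]
        · simp [hwr]
        · intro b _ hb
          simp [hwr, hb]
        · simp
      simp_rw [this]
    have hub : pf m m' wr ≤ m' t₀ := by
      refine pf_le hm hm' hs hs' ⟨0, Pi.single t₀ 1, fun q => ?_, by simp [Pi.single_apply]⟩
      by_cases h : q.2 = t₀ <;> simp [hwr, Pi.single_apply, h]
    have hlb : pf m m' (-wr) ≤ -m' t₀ := by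
      refine pf_le hm hm' hs hs' ⟨0, -Pi.single t₀ 1, fun q => ?_, by simp [Pi.single_apply]⟩
      by_cases h : q.2 = t₀ <;> simp [hwr, Pi.single_apply, h]
    have h1 : g wr ≤ m' t₀ := (hg_le wr).trans hub
    have h2 : -g wr ≤ -m' t₀ := by
      have := (hg_le (-wr)).trans hlb
      rwa [map_neg] at this
    rw [← hgr]
    linarith
  -- value on K
  have hKval : ∑ p ∈ K, c p = β := by
    have hw₀sum : g w₀ = ∑ p ∈ K, c p := by
      rw [hg_single w₀]
      rw [← Finset.sum_filter_add_sum_filter_not Finset.univ (· ∈ K)]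
      have h1 : ∑ p ∈ Finset.univ.filter (· ∈ K), w₀ p * c p = ∑ p ∈ K, c p := by
        rw [Finset.filter_mem_eq_inter, Finset.univ_inter]
        exact Finset.sum_congr rfl fun p hp => by simp [hw₀, hp]
      have h2 : ∑ p ∈ Finset.univ.filter (¬ · ∈ K), w₀ p * c p = 0 := by
        refine Finset.sum_eq_zero fun p hp => ?_
        rw [Finset.mem_filter] at hp
        simp [hw₀, hp.2]
      rw [h1, h2, add_zero]
    rw [← hw₀sum]
    have := hg_eq ⟨w₀, Submodule.mem_span_singleton_self w₀⟩
    rw [this, LinearPMap.mkSpanSingleton_apply]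
  -- near-optimal dual pair
  obtain ⟨r, hr, hrlt⟩ := exists_lt_of_csInf_lt (feas_nonempty hm hm' hs hs' w₀)
    (lt_add_of_pos_right β hε)
  obtain ⟨u, v, huv, rfl⟩ := hr
  -- normalize
  set a := Finset.univ.inf' Finset.univ_nonempty v with ha
  set u₁ : S → ℝ := fun s => u s + a with hu₁
  set v₁ : T → ℝ := fun t => v t - a with hv₁
  have hu₁nonneg : ∀ s, 0 ≤ u₁ s := by
    intro s
    obtain ⟨t₀, _, ht₀⟩ := Finset.exists_mem_eq_inf' Finset.univ_nonempty v
    have := (hw₀nonneg (s, t₀)).trans (huv (s, t₀))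
    simp only [hu₁]
    rw [ha, ht₀]
    linarith
  have hv₁nonneg : ∀ t, 0 ≤ v₁ t := by
    intro t
    have := Finset.inf'_le v (Finset.mem_univ t)
    simp only [hv₁]
    linarith
  have hfeas₁ : ∀ p, w₀ p ≤ u₁ p.1 + v₁ p.2 := by
    intro p
    have := huv p
    simp only [hu₁, hv₁]
    linarith
  set u₂ : S → ℝ := fun s => min 1 (u₁ s) with hu₂
  set v₂ : T → ℝ := fun t => min 1 (v₁ t) with hv₂
  refine ⟨c, u₂, v₂, hcnonneg, hrow, hcol,
    fun s => ⟨le_min zero_le_one (hu₁nonneg s), min_le_left _ _⟩,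
    fun t => ⟨le_min zero_le_one (hv₁nonneg t), min_le_left _ _⟩, ?_, ?_⟩
  · -- feasibility on K
    intro p hp
    have h1 := hfeas₁ p
    rw [hw₀] at h1
    simp only [hp, if_true] at h1
    have h2 := hu₁nonneg p.1
    have h3 := hv₁nonneg p.2
    simp only [hu₂, hv₂]
    rcases le_total 1 (u₁ p.1) with h | h
    · rw [min_eq_left h]
      have : (0:ℝ) ≤ min 1 (v₁ p.2) := le_min zero_le_one h3
      linarith
    · rw [min_eq_right h]
      rcases le_total 1 (v₁ p.2) with h' | h'
      · rw [min_eq_left h']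
        linarith
      · rw [min_eq_right h']
        linarith
  · -- cost bound
    have e1 : ∑ s, u₂ s * m s ≤ ∑ s, u₁ s * m s :=
      Finset.sum_le_sum fun s _ => mul_le_mul_of_nonneg_right (min_le_right _ _) (hm s)
    have e2 : ∑ t, v₂ t * m' t ≤ ∑ t, v₁ t * m' t :=
      Finset.sum_le_sum fun t _ => mul_le_mul_of_nonneg_right (min_le_right _ _) (hm' t)
    have e3 : (∑ s, u₁ s * m s) + (∑ t, v₁ t * m' t)
        = (∑ s, u s * m s) + (∑ t, v t * m' t) := by
      have l1 : ∑ s, u₁ s * m s = (∑ s, u s * m s) + a * ∑ s, m s := by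
        rw [Finset.mul_sum, ← Finset.sum_add_distrib]
        exact Finset.sum_congr rfl fun s _ => by simp [hu₁]; ring
      have l2 : ∑ t, v₁ t * m' t = (∑ t, v t * m' t) - a * ∑ t, m' t := by
        rw [Finset.mul_sum, ← Finset.sum_sub_distrib]
        exact Finset.sum_congr rfl fun t _ => by simp [hv₁]; ring
      rw [l1, l2, hs, hs']
      ring
    rw [hKval]
    linarith

end Matrix

section Atoms

variable {Z : Type*} [MeasurableSpace Z]

/-- signature of a point w.r.t. a finite family of sets -/
def sigf {n : ℕ} (A : Fin n → Set Z) (x : Z) : Fin n → Bool :=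
  fun i => @decide (x ∈ A i) (Classical.propDecidable _)

/-- atoms of the partition generated by a finite family of sets -/
def atomf {n : ℕ} (A : Fin n → Set Z) (s : Fin n → Bool) : Set Z := sigf A ⁻¹' {s}

lemma mem_atomf_iff {n : ℕ} {A : Fin n → Set Z} {s : Fin n → Bool} {x : Z} :
    x ∈ atomf A s ↔ sigf A x = s := Iff.rfl

lemma mem_atomf_self {n : ℕ} (A : Fin n → Set Z) (x : Z) : x ∈ atomf A (sigf A x) := rfl

lemma sigf_true_iff {n : ℕ} {A : Fin n → Set Z} {x : Z} {i : Fin n} :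
    sigf A x i = true ↔ x ∈ A i := by
  simp [sigf]

lemma atomf_eq {n : ℕ} (A : Fin n → Set Z) (s : Fin n → Bool) :
    atomf A s = ⋂ i, (if s i then A i else (A i)ᶜ) := by
  ext x
  constructor
  · intro h
    have h' : sigf A x = s := h
    refine Set.mem_iInter.mpr fun i => ?_
    have hi : sigf A x i = s i := by rw [h']
    cases hsi : s i
    · rw [hsi] at hi
      simp only [Bool.false_eq_true, if_false]
      intro hx
      rw [sigf_true_iff.mpr hx] at hi
      exact Bool.true_eq_false.mp hi
    · rw [hsi] at hi
      simp only [if_true]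
      exact sigf_true_iff.mp hi
  · intro h
    have h' := Set.mem_iInter.mp h
    show sigf A x = s
    funext i
    have hi := h' i
    cases hsi : s i
    · rw [hsi] at hi
      simp only [Bool.false_eq_true, if_false] at hi
      rw [Bool.eq_false_iff]
      intro hTrue
      exact hi (sigf_true_iff.mp hTrue)
    · rw [hsi] at hi
      simp only [if_true] at hi
      exact sigf_true_iff.mpr hi

lemma measurable_atomf {n : ℕ} {A : Fin n → Set Z} (hA : ∀ i, MeasurableSet (A i))
    (s : Fin n → Bool) : MeasurableSet (atomf A s) := by
  rw [atomf_eq]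
  refine MeasurableSet.iInter fun i => ?_
  cases hsi : s i <;> simp [hsi, hA i, (hA i).compl]

lemma atomf_subset {n : ℕ} {A : Fin n → Set Z} {x : Z} {i : Fin n} (hx : x ∈ A i) :
    atomf A (sigf A x) ⊆ A i := by
  intro z hz
  rw [mem_atomf_iff] at hz
  have : sigf A z i = true := by rw [hz]; exact sigf_true_iff.mpr hx
  exact sigf_true_iff.mp this

lemma atomf_disjoint {n : ℕ} (A : Fin n → Set Z) :
    Pairwise fun s t => Disjoint (atomf A s) (atomf A t) := by
  intro s t hst
  rw [Set.disjoint_left]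
  intro x hxs hxt
  rw [mem_atomf_iff] at hxs hxt
  exact hst (hxs ▸ hxt.symm ▸ rfl)

lemma atomf_iUnion {n : ℕ} (A : Fin n → Set Z) : (⋃ s, atomf A s) = Set.univ :=
  Set.eq_univ_of_forall fun x => Set.mem_iUnion.mpr ⟨sigf A x, mem_atomf_self A x⟩

lemma sum_measure_atomf {n : ℕ} {A : Fin n → Set Z} (hA : ∀ i, MeasurableSet (A i))
    (μ : Measure Z) [IsProbabilityMeasure μ] :
    ∑ s : Fin n → Bool, μ (atomf A s) = 1 := by
  rw [← tsum_fintype (L := SummationFilter.unconditional _)]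
  rw [← measure_iUnion (atomf_disjoint A) (fun s => measurable_atomf hA s)]
  rw [atomf_iUnion]
  exact measure_univ

lemma sum_measure_inter_atomf {n : ℕ} {A : Fin n → Set Z} (hA : ∀ i, MeasurableSet (A i))
    (μ : Measure Z) {E : Set Z} (hE : MeasurableSet E) :
    ∑ s : Fin n → Bool, μ (E ∩ atomf A s) = μ E := by
  rw [← tsum_fintype (L := SummationFilter.unconditional _)]
  rw [← measure_iUnion (fun s t hst => ((atomf_disjoint A) hst).mono
    Set.inter_subset_right Set.inter_subset_right)
    (fun s => hE.inter (measurable_atomf hA s))]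
  rw [← Set.inter_iUnion, atomf_iUnion, Set.inter_univ]

end Atoms

section Step

variable {X₁ Y₁ : Type*} [MeasurableSpace X₁] [MeasurableSpace Y₁]
  (μ : Measure X₁) (ν : Measure Y₁) [IsProbabilityMeasure μ] [IsProbabilityMeasure ν]

theorem stepDual {n : ℕ} (A : Fin n → Set X₁) (B : Fin n → Set Y₁)
    (hA : ∀ i, MeasurableSet (A i)) (hB : ∀ i, MeasurableSet (B i))
    {ε : ℝ} (hε : 0 < ε) :
    ∃ (P : Measure (X₁ × Y₁)) (f : X₁ → ℝ) (g : Y₁ → ℝ),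
      IsProbabilityMeasure P ∧ P.map Prod.fst = μ ∧ P.map Prod.snd = ν ∧
      Measurable f ∧ Measurable g ∧
      (∀ x, f x ∈ Set.Icc (0:ℝ) 1) ∧ (∀ y, g y ∈ Set.Icc (0:ℝ) 1) ∧
      (∀ x y, (x, y) ∈ ⋃ i, A i ×ˢ B i → 1 ≤ f x + g y) ∧
      ∫ x, f x ∂μ + ∫ y, g y ∂ν ≤ (P (⋃ i, A i ×ˢ B i)).toReal + ε := by
  classical
  set U : Set (X₁ × Y₁) := ⋃ i, A i ×ˢ B i with hU
  have hUmeas : MeasurableSet U := MeasurableSet.iUnion fun i => (hA i).prod (hB i)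
  set m : (Fin n → Bool) → ℝ := fun s => (μ (atomf A s)).toReal with hmdef
  set m' : (Fin n → Bool) → ℝ := fun t => (ν (atomf B t)).toReal with hm'def
  have hm : ∀ s, 0 ≤ m s := fun s => ENNReal.toReal_nonneg
  have hm' : ∀ t, 0 ≤ m' t := fun t => ENNReal.toReal_nonneg
  have hsm : ∑ s, m s = 1 := by
    rw [hmdef, ← ENNReal.toReal_sum (fun s _ => measure_ne_top μ _),
      sum_measure_atomf hA μ, ENNReal.toReal_one]
  have hsm' : ∑ t, m' t = 1 := by
    rw [hm'def, ← ENNReal.toReal_sum (fun t _ => measure_ne_top ν _),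
      sum_measure_atomf hB ν, ENNReal.toReal_one]
  set K : Finset ((Fin n → Bool) × (Fin n → Bool)) :=
    Finset.univ.filter (fun p => atomf A p.1 ×ˢ atomf B p.2 ⊆ U) with hK
  obtain ⟨c, u, v, hc0, hrow, hcol, hu, hv, hfeasK, hcost⟩ :=
    matrix_duality hm hm' hsm hsm' K hε
  have hmemK : ∀ x y, (x, y) ∈ U → (sigf A x, sigf B y) ∈ K := by
    intro x y hxy
    rw [hU, Set.mem_iUnion] at hxy
    obtain ⟨i, hxi, hyi⟩ := hxy
    rw [hK, Finset.mem_filter]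
    refine ⟨Finset.mem_univ _, fun p hp => ?_⟩
    obtain ⟨hp1, hp2⟩ := hp
    rw [hU, Set.mem_iUnion]
    exact ⟨i, atomf_subset hxi hp1, atomf_subset hyi hp2⟩
  -- vanishing of c on null atoms
  have hczero₁ : ∀ s t, μ (atomf A s) = 0 → c (s, t) = 0 := by
    intro s t h0
    have h1 : c (s, t) ≤ ∑ t', c (s, t') :=
      Finset.single_le_sum (f := fun t' => c (s, t')) (fun t' _ => hc0 _) (Finset.mem_univ t)
    have h2 : ∑ t', c (s, t') = 0 := by rw [hrow, hmdef]; simp [h0]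
    exact le_antisymm (h2 ▸ h1) (hc0 _)
  have hczero₂ : ∀ s t, ν (atomf B t) = 0 → c (s, t) = 0 := by
    intro s t h0
    have h1 : c (s, t) ≤ ∑ s', c (s', t) :=
      Finset.single_le_sum (f := fun s' => c (s', t)) (fun s' _ => hc0 _) (Finset.mem_univ s)
    have h2 : ∑ s', c (s', t) = 0 := by rw [hcol, hm'def]; simp [h0]
    exact le_antisymm (h2 ▸ h1) (hc0 _)
  -- the coupling measure
  set coef : (Fin n → Bool) → (Fin n → Bool) → ℝ≥0∞ := fun s t =>
    ENNReal.ofReal (c (s, t)) * (μ (atomf A s))⁻¹ * (ν (atomf B t))⁻¹ with hcoef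
  set P : Measure (X₁ × Y₁) := ∑ s : Fin n → Bool, ∑ t : Fin n → Bool,
    coef s t • ((μ.restrict (atomf A s)).prod (ν.restrict (atomf B t))) with hP
  have hPapply : ∀ (E : Set (X₁ × Y₁)), P E = ∑ s : Fin n → Bool, ∑ t : Fin n → Bool,
      coef s t * ((μ.restrict (atomf A s)).prod (ν.restrict (atomf B t))) E := by
    intro E
    rw [hP, Measure.finset_sum_apply]
    exact Finset.sum_congr rfl fun s _ => by
      rw [Measure.finset_sum_apply]
      exact Finset.sum_congr rfl fun t _ => by rw [Measure.smul_apply, smul_eq_mul]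
  -- key cancellation computation
  have hcancel : ∀ s t (k : ℝ≥0∞), k ≤ μ (atomf A s) →
      coef s t * (k * ν (atomf B t)) = ENNReal.ofReal (c (s, t)) * (μ (atomf A s))⁻¹ * k := by
    intro s t k hk
    by_cases hb : ν (atomf B t) = 0
    · rw [hcoef]
      simp [hb, hczero₂ s t hb]
    · rw [hcoef]
      have hbtop : ν (atomf B t) ≠ ⊤ := measure_ne_top _ _
      calc ENNReal.ofReal (c (s,t)) * (μ (atomf A s))⁻¹ * (ν (atomf B t))⁻¹ * (k * ν (atomf B t))
          = ENNReal.ofReal (c (s,t)) * (μ (atomf A s))⁻¹ * k *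
            ((ν (atomf B t))⁻¹ * ν (atomf B t)) := by ring
        _ = ENNReal.ofReal (c (s,t)) * (μ (atomf A s))⁻¹ * k := by
            rw [ENNReal.inv_mul_cancel hb hbtop, mul_one]
  have hinner : ∀ s (k : ℝ≥0∞), k ≤ μ (atomf A s) →
      (∑ t : Fin n → Bool, coef s t * (k * ν (atomf B t))) = k := by
    intro s k hk
    by_cases ha : μ (atomf A s) = 0
    · have hk0 : k = 0 := le_antisymm (ha ▸ hk) zero_le
      simp [hk0]
    · have hatop : μ (atomf A s) ≠ ⊤ := measure_ne_top _ _
      calc ∑ t, coef s t * (k * ν (atomf B t))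
          = ∑ t, ENNReal.ofReal (c (s, t)) * (μ (atomf A s))⁻¹ * k := by
            exact Finset.sum_congr rfl fun t _ => hcancel s t k hk
        _ = (∑ t, ENNReal.ofReal (c (s, t))) * ((μ (atomf A s))⁻¹ * k) := by
            rw [Finset.sum_mul]
            exact Finset.sum_congr rfl fun t _ => by ring
        _ = ENNReal.ofReal (m s) * ((μ (atomf A s))⁻¹ * k) := by
            rw [← ENNReal.ofReal_sum_of_nonneg (fun t _ => hc0 _)]
            congr 1
            rw [hrow]
        _ = μ (atomf A s) * ((μ (atomf A s))⁻¹ * k) := by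
            rw [hmdef, ENNReal.ofReal_toReal hatop]
        _ = (μ (atomf A s) * (μ (atomf A s))⁻¹) * k := by ring
        _ = k := by rw [ENNReal.mul_inv_cancel ha hatop, one_mul]
  have hcancel' : ∀ s t (k : ℝ≥0∞), k ≤ ν (atomf B t) →
      coef s t * (μ (atomf A s) * k)
        = ENNReal.ofReal (c (s, t)) * (ν (atomf B t))⁻¹ * k := by
    intro s t k hk
    by_cases ha : μ (atomf A s) = 0
    · rw [hcoef]
      simp [ha, hczero₁ s t ha]
    · rw [hcoef]
      have hatop : μ (atomf A s) ≠ ⊤ := measure_ne_top _ _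
      calc ENNReal.ofReal (c (s,t)) * (μ (atomf A s))⁻¹ * (ν (atomf B t))⁻¹ * (μ (atomf A s) * k)
          = ENNReal.ofReal (c (s,t)) * (ν (atomf B t))⁻¹ * k *
            ((μ (atomf A s))⁻¹ * μ (atomf A s)) := by ring
        _ = ENNReal.ofReal (c (s,t)) * (ν (atomf B t))⁻¹ * k := by
            rw [ENNReal.inv_mul_cancel ha hatop, mul_one]
  have hinner' : ∀ t (k : ℝ≥0∞), k ≤ ν (atomf B t) →
      (∑ s : Fin n → Bool, coef s t * (μ (atomf A s) * k)) = k := by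
    intro t k hk
    by_cases hb : ν (atomf B t) = 0
    · have hk0 : k = 0 := le_antisymm (hb ▸ hk) zero_le
      simp [hk0]
    · have hbtop : ν (atomf B t) ≠ ⊤ := measure_ne_top _ _
      calc ∑ s, coef s t * (μ (atomf A s) * k)
          = ∑ s, ENNReal.ofReal (c (s, t)) * (ν (atomf B t))⁻¹ * k := by
            exact Finset.sum_congr rfl fun s _ => hcancel' s t k hk
        _ = (∑ s, ENNReal.ofReal (c (s, t))) * ((ν (atomf B t))⁻¹ * k) := by
            rw [Finset.sum_mul]
            exact Finset.sum_congr rfl fun s _ => by ring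
        _ = ENNReal.ofReal (m' t) * ((ν (atomf B t))⁻¹ * k) := by
            rw [← ENNReal.ofReal_sum_of_nonneg (fun s _ => hc0 _)]
            congr 1
            rw [hcol]
        _ = ν (atomf B t) * ((ν (atomf B t))⁻¹ * k) := by
            rw [hm'def, ENNReal.ofReal_toReal hbtop]
        _ = (ν (atomf B t) * (ν (atomf B t))⁻¹) * k := by ring
        _ = k := by rw [ENNReal.mul_inv_cancel hb hbtop, one_mul]
  -- marginals
  have hfst : P.map Prod.fst = μ := by
    refine Measure.ext fun E hE => ?_
    rw [Measure.map_apply measurable_fst hE, hPapply]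
    have hpre : (Prod.fst ⁻¹' E : Set (X₁ × Y₁)) = E ×ˢ Set.univ := by
      ext z; simp
    rw [hpre]
    calc (∑ s, ∑ t, coef s t *
          ((μ.restrict (atomf A s)).prod (ν.restrict (atomf B t))) (E ×ˢ Set.univ))
        = ∑ s, ∑ t, coef s t * (μ (E ∩ atomf A s) * ν (atomf B t)) := by
          refine Finset.sum_congr rfl fun s _ => Finset.sum_congr rfl fun t _ => ?_
          rw [Measure.prod_prod, Measure.restrict_apply hE,
            Measure.restrict_apply MeasurableSet.univ, Set.univ_inter]
      _ = ∑ s, μ (E ∩ atomf A s) := by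
          exact Finset.sum_congr rfl fun s _ =>
            hinner s _ (measure_mono Set.inter_subset_right)
      _ = μ E := sum_measure_inter_atomf hA μ hE
  have hsnd : P.map Prod.snd = ν := by
    refine Measure.ext fun E hE => ?_
    rw [Measure.map_apply measurable_snd hE, hPapply]
    have hpre : (Prod.snd ⁻¹' E : Set (X₁ × Y₁)) = Set.univ ×ˢ E := by
      ext z; simp
    rw [hpre]
    calc (∑ s, ∑ t, coef s t *
          ((μ.restrict (atomf A s)).prod (ν.restrict (atomf B t))) (Set.univ ×ˢ E))
        = ∑ s, ∑ t, coef s t * (μ (atomf A s) * ν (E ∩ atomf B t)) := by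
          refine Finset.sum_congr rfl fun s _ => Finset.sum_congr rfl fun t _ => ?_
          rw [Measure.prod_prod, Measure.restrict_apply hE,
            Measure.restrict_apply MeasurableSet.univ, Set.univ_inter]
      _ = ∑ t, ν (E ∩ atomf B t) := by
          rw [Finset.sum_comm]
          exact Finset.sum_congr rfl fun t _ =>
            hinner' t _ (measure_mono Set.inter_subset_right)
      _ = ν E := sum_measure_inter_atomf hB ν hE
  have hprob : IsProbabilityMeasure P := by
    constructor
    have h1 : P Set.univ = (P.map Prod.fst) Set.univ := by
      rw [Measure.map_apply measurable_fst MeasurableSet.univ, Set.preimage_univ]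
    rw [h1, hfst]
    exact measure_univ
  haveI := hprob
  -- mass of P on U
  have hPU : ENNReal.ofReal (∑ p ∈ K, c p) ≤ P U := by
    have step1 : ∀ p : (Fin n → Bool) × (Fin n → Bool), p ∈ K →
        ENNReal.ofReal (c p) ≤ coef p.1 p.2 *
          ((μ.restrict (atomf A p.1)).prod (ν.restrict (atomf B p.2))) U := by
      rintro ⟨s, t⟩ hp
      have hsub : atomf A s ×ˢ atomf B t ⊆ U := (Finset.mem_filter.mp hp).2
      have h1 : μ (atomf A s) * ν (atomf B t)
          ≤ ((μ.restrict (atomf A s)).prod (ν.restrict (atomf B t))) U := by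
        calc μ (atomf A s) * ν (atomf B t)
            = ((μ.restrict (atomf A s)).prod (ν.restrict (atomf B t)))
                (atomf A s ×ˢ atomf B t) := by
              rw [Measure.prod_prod, Measure.restrict_apply (measurable_atomf hA s),
                Measure.restrict_apply (measurable_atomf hB t), Set.inter_self, Set.inter_self]
          _ ≤ _ := measure_mono hsub
      have h2 : ENNReal.ofReal (c (s, t)) = coef s t * (μ (atomf A s) * ν (atomf B t)) := by
        by_cases ha : μ (atomf A s) = 0
        · simp [hcoef, hczero₁ s t ha, ha]
        · by_cases hb : ν (atomf B t) = 0
          · simp [hcoef, hczero₂ s t hb, hb]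
          · rw [hcoef]
            have hatop : μ (atomf A s) ≠ ⊤ := measure_ne_top _ _
            have hbtop : ν (atomf B t) ≠ ⊤ := measure_ne_top _ _
            calc ENNReal.ofReal (c (s,t))
                = ENNReal.ofReal (c (s,t)) *
                  ((μ (atomf A s))⁻¹ * μ (atomf A s)) *
                  ((ν (atomf B t))⁻¹ * ν (atomf B t)) := by
                  rw [ENNReal.inv_mul_cancel ha hatop, ENNReal.inv_mul_cancel hb hbtop,
                    mul_one, mul_one]
              _ = ENNReal.ofReal (c (s,t)) * (μ (atomf A s))⁻¹ * (ν (atomf B t))⁻¹ *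
                  (μ (atomf A s) * ν (atomf B t)) := by ring
      rw [h2]
      exact mul_le_mul_right h1 _
    calc ENNReal.ofReal (∑ p ∈ K, c p) = ∑ p ∈ K, ENNReal.ofReal (c p) :=
          ENNReal.ofReal_sum_of_nonneg (fun p _ => hc0 p)
      _ ≤ ∑ p ∈ K, coef p.1 p.2 *
            ((μ.restrict (atomf A p.1)).prod (ν.restrict (atomf B p.2))) U :=
          Finset.sum_le_sum step1
      _ ≤ ∑ p : (Fin n → Bool) × (Fin n → Bool), coef p.1 p.2 *
            ((μ.restrict (atomf A p.1)).prod (ν.restrict (atomf B p.2))) U :=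
          Finset.sum_le_sum_of_subset (Finset.subset_univ K)
      _ = P U := by rw [hPapply, Fintype.sum_prod_type]
  -- the step functions
  set f : X₁ → ℝ := fun x => ∑ s, (atomf A s).indicator (fun _ => u s) x with hfd
  set g : Y₁ → ℝ := fun y => ∑ t, (atomf B t).indicator (fun _ => v t) y with hgd
  have hfval : ∀ x, f x = u (sigf A x) := by
    intro x
    rw [hfd]
    show (∑ s, (atomf A s).indicator (fun _ => u s) x) = u (sigf A x)
    rw [Finset.sum_eq_single (sigf A x)]
    · rw [Set.indicator_of_mem (mem_atomf_self A x)]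
    · intro b _ hb
      refine Set.indicator_of_notMem (fun hxb => hb ?_) _
      rw [mem_atomf_iff] at hxb
      rw [hxb]
    · intro h
      exact absurd (Finset.mem_univ _) h
  have hgval : ∀ y, g y = v (sigf B y) := by
    intro y
    rw [hgd]
    show (∑ t, (atomf B t).indicator (fun _ => v t) y) = v (sigf B y)
    rw [Finset.sum_eq_single (sigf B y)]
    · rw [Set.indicator_of_mem (mem_atomf_self B y)]
    · intro b _ hb
      refine Set.indicator_of_notMem (fun hxb => hb ?_) _
      rw [mem_atomf_iff] at hxb
      rw [hxb]
    · intro h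
      exact absurd (Finset.mem_univ _) h
  have hfmeas : Measurable f := by
    rw [hfd]
    exact Finset.measurable_sum _ fun s _ =>
      measurable_const.indicator (measurable_atomf hA s)
  have hgmeas : Measurable g := by
    rw [hgd]
    exact Finset.measurable_sum _ fun t _ =>
      measurable_const.indicator (measurable_atomf hB t)
  have hfint : ∫ x, f x ∂μ = ∑ s, u s * m s := by
    rw [hfd, integral_finset_sum _ (fun s _ =>
      (integrable_const (u s)).indicator (measurable_atomf hA s))]
    refine Finset.sum_congr rfl fun s _ => ?_
    rw [integral_indicator_const (u s) (measurable_atomf hA s), smul_eq_mul, hmdef, mul_comm]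
    rfl
  have hgint : ∫ y, g y ∂ν = ∑ t, v t * m' t := by
    rw [hgd, integral_finset_sum _ (fun t _ =>
      (integrable_const (v t)).indicator (measurable_atomf hB t))]
    refine Finset.sum_congr rfl fun t _ => ?_
    rw [integral_indicator_const (v t) (measurable_atomf hB t), smul_eq_mul, hm'def, mul_comm]
    rfl
  have hsumK : ∑ p ∈ K, c p ≤ (P U).toReal := by
    have h1 := ENNReal.toReal_mono (measure_ne_top P U) hPU
    rwa [ENNReal.toReal_ofReal (Finset.sum_nonneg fun p _ => hc0 p)] at h1
  refine ⟨P, f, g, hprob, hfst, hsnd, hfmeas, hgmeas,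
    fun x => by rw [hfval]; exact hu _,
    fun y => by rw [hgval]; exact hv _,
    fun x y hxy => by rw [hfval, hgval]; exact hfeasK (sigf A x, sigf B y) (hmemK x y hxy),
    ?_⟩
  rw [hfint, hgint]
  linarith [hcost, hsumK]

end Step

section Limit

variable {Ω : Type*} [MeasurableSpace Ω]

theorem limitDensity (μ : Measure Ω) [IsProbabilityMeasure μ] (𝒰 : Ultrafilter ℕ)
    (φ : ℕ → Ω → ℝ) (hφm : ∀ N, Measurable (φ N)) (hφb : ∀ N x, φ N x ∈ Set.Icc (0:ℝ) 1) :
    ∃ F : Ω → ℝ, Measurable F ∧ (∀ x, F x ∈ Set.Icc (0:ℝ) 1) ∧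
      ∀ A : Set Ω, MeasurableSet A →
        Tendsto (fun N => ∫ x in A, φ N x ∂μ) (𝒰 : Filter ℕ) (𝓝 (∫ x in A, F x ∂μ)) := by
  classical
  have hint : ∀ N (A : Set Ω), Integrable (φ N) (μ.restrict A) := by
    intro N A
    refine (integrable_const (1:ℝ)).mono' ((hφm N).aestronglyMeasurable) ?_
    refine Filter.Eventually.of_forall fun x => ?_
    rw [Real.norm_eq_abs, abs_le]
    exact ⟨by linarith [(hφb N x).1], (hφb N x).2⟩
  set seq : Set Ω → ℕ → ℝ := fun A N => ∫ x in A, φ N x ∂μ with hseq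
  have hseq_nonneg : ∀ A N, 0 ≤ seq A N := fun A N =>
    integral_nonneg fun x => (hφb N x).1
  have hseq_le : ∀ (A : Set Ω) N, seq A N ≤ (μ A).toReal := by
    intro A N
    calc seq A N ≤ ∫ _ in A, (1:ℝ) ∂μ :=
        integral_mono (hint N A) (integrable_const 1) (fun x => (hφb N x).2)
      _ = (μ A).toReal := by simp; rfl
  have hseq_le_one : ∀ (A : Set Ω) N, seq A N ≤ 1 := by
    intro A N
    refine (hseq_le A N).trans ?_
    exact ENNReal.toReal_le_of_le_ofReal zero_le_one (by simpa using prob_le_one (μ := μ) (s := A))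
  have hex : ∀ A : Set Ω, ∃ l, l ∈ Set.Icc (0:ℝ) 1 ∧ Tendsto (seq A) (𝒰 : Filter ℕ) (𝓝 l) := by
    intro A
    have hmem : Set.Icc (0:ℝ) 1 ∈ Ultrafilter.map (seq A) 𝒰 := by
      refine Filter.mem_map.mpr ?_
      refine Filter.univ_mem' fun N => ?_
      exact ⟨hseq_nonneg A N, hseq_le_one A N⟩
    obtain ⟨l, hl, hle⟩ := (isCompact_Icc (a := (0:ℝ)) (b := 1)).ultrafilter_le_nhds
      (Ultrafilter.map (seq A) 𝒰) (Filter.le_principal_iff.mpr hmem)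
    exact ⟨l, hl, hle⟩
  set L : Set Ω → ℝ := fun A => (hex A).choose with hLdef
  have hL : ∀ A : Set Ω, L A ∈ Set.Icc (0:ℝ) 1 ∧
      Tendsto (seq A) (𝒰 : Filter ℕ) (𝓝 (L A)) := fun A => (hex A).choose_spec
  have hLuniq : ∀ (A : Set Ω) (l : ℝ), Tendsto (seq A) (𝒰 : Filter ℕ) (𝓝 l) → L A = l :=
    fun A l hl => tendsto_nhds_unique (hL A).2 hl
  have hLempty : L ∅ = 0 := by
    refine hLuniq ∅ 0 ?_
    have : seq ∅ = fun _ => (0:ℝ) := by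
      funext N
      rw [hseq]
      simp
    rw [this]
    exact tendsto_const_nhds
  have hLmono : ∀ A B : Set Ω, A ⊆ B → L A ≤ L B := by
    intro A B hAB
    refine le_of_tendsto_of_tendsto' (hL A).2 (hL B).2 fun N => ?_
    exact setIntegral_mono_set (hint N B)
      (Filter.Eventually.of_forall fun x => (hφb N x).1) (hAB.eventuallyLE)
  have hLle : ∀ A : Set Ω, L A ≤ (μ A).toReal := by
    intro A
    exact le_of_tendsto (hL A).2 (Filter.Eventually.of_forall fun N => hseq_le A N)
  have hLnonneg : ∀ A : Set Ω, 0 ≤ L A := fun A => (hL A).1.1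
  have hLadd : ∀ A B : Set Ω, MeasurableSet B → Disjoint A B → L (A ∪ B) = L A + L B := by
    intro A B hB hd
    refine hLuniq _ _ ?_
    have : seq (A ∪ B) = fun N => seq A N + seq B N := by
      funext N
      rw [hseq]
      exact setIntegral_union hd hB (hint N A) (hint N B)
    rw [this]
    exact ((hL A).2).add ((hL B).2)
  -- countable additivity
  have hLsigma : ∀ (g : ℕ → Set Ω), (∀ i, MeasurableSet (g i)) → Pairwise (Function.onFun Disjoint g) →
      HasSum (fun i => L (g i)) (L (⋃ i, g i)) := by
    intro g hgm hgd
    have htail : ∀ n : ℕ, L (⋃ i, g i) = (∑ i ∈ Finset.range n, L (g i)) + L (⋃ i, g (i + n)) := by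
      intro n
      induction n with
      | zero => simp
      | succ n ih =>
        rw [ih]
        have hsplit : (⋃ i, g (i + n)) = g n ∪ ⋃ i, g (i + (n + 1)) := by
          ext z
          simp only [Set.mem_iUnion, Set.mem_union]
          constructor
          · rintro ⟨i, hi⟩
            cases i with
            | zero => exact Or.inl (by simpa using hi)
            | succ j => exact Or.inr ⟨j, by convert hi using 2; omega⟩
          · rintro (h | ⟨j, hj⟩)
            · exact ⟨0, by simpa using h⟩
            · exact ⟨j + 1, by convert hj using 2; omega⟩
        have hdisj : Disjoint (g n) (⋃ i, g (i + (n + 1))) := by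
          refine Set.disjoint_iUnion_right.mpr fun i => hgd (by omega)
        rw [hsplit, hLadd _ _ (MeasurableSet.iUnion fun i => hgm _) hdisj]
        rw [Finset.sum_range_succ]
        ring
    have htail0 : Tendsto (fun n => L (⋃ i, g (i + n))) atTop (𝓝 0) := by
      have hub : ∀ n, L (⋃ i, g (i + n)) ≤ (μ (⋃ i, g (i + n))).toReal := fun n => hLle _
      have hmeasle : ∀ n, μ (⋃ i, g (i + n)) = ∑' i, μ (g (i + n)) := by
        intro n
        exact measure_iUnion (fun i j hij => hgd (by omega)) (fun i => hgm _)
      have hsum_ne_top : (∑' i, μ (g i)) ≠ ⊤ :=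
        ne_top_of_le_ne_top (measure_ne_top μ Set.univ)
          (by rw [← measure_iUnion hgd hgm]; exact measure_mono (Set.subset_univ _))
      have h1 : Tendsto (fun n => ∑' i, μ (g (i + n))) atTop (𝓝 0) :=
        ENNReal.tendsto_sum_nat_add (fun i => μ (g i)) hsum_ne_top
      have h2 : Tendsto (fun n => (μ (⋃ i, g (i + n))).toReal) atTop (𝓝 0) := by
        have h3 : Tendsto (fun n => (∑' i, μ (g (i + n))).toReal) atTop (𝓝 (0:ℝ≥0∞).toReal) :=
          (ENNReal.tendsto_toReal (by simp)).comp h1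
        simp only [ENNReal.toReal_zero] at h3
        refine squeeze_zero (fun n => ENNReal.toReal_nonneg) (fun n => ?_) h3
        rw [hmeasle n]
      refine squeeze_zero (fun n => hLnonneg _) (fun n => (hub n).trans_eq rfl) h2
    have hps : Tendsto (fun n => ∑ i ∈ Finset.range n, L (g i)) atTop (𝓝 (L (⋃ i, g i))) := by
      have : (fun n => ∑ i ∈ Finset.range n, L (g i))
          = fun n => L (⋃ i, g i) - L (⋃ i, g (i + n)) := by
        funext n
        rw [htail n]
        ring
      rw [this]
      simpa using tendsto_const_nhds.sub htail0
    exact (hasSum_iff_tendsto_nat_of_nonneg (fun i => hLnonneg _) _).mpr hps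
  -- the limit measure
  set lamm : Measure Ω := Measure.ofMeasurable (fun A _ => ENNReal.ofReal (L A))
    (by show ENNReal.ofReal (L ∅) = 0; rw [hLempty]; simp)
    (by
      intro g hgm hgd
      have hhs := hLsigma g hgm hgd
      show ENNReal.ofReal (L (⋃ i, g i)) = ∑' i, ENNReal.ofReal (L (g i))
      rw [← hhs.tsum_eq, ENNReal.ofReal_tsum_of_nonneg (fun i => hLnonneg _) hhs.summable])
    with hlamm
  have hlammapp : ∀ A : Set Ω, MeasurableSet A → lamm A = ENNReal.ofReal (L A) := by
    intro A hA
    rw [hlamm]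
    exact Measure.ofMeasurable_apply A hA
  have hlamle : lamm ≤ μ := by
    rw [Measure.le_iff]
    intro A hA
    rw [hlammapp A hA]
    calc ENNReal.ofReal (L A) ≤ ENNReal.ofReal ((μ A).toReal) :=
        ENNReal.ofReal_le_ofReal (hLle A)
      _ = μ A := ENNReal.ofReal_toReal (measure_ne_top μ A)
  have hac : lamm ≪ μ := by
    refine Measure.AbsolutelyContinuous.mk fun A hA h0 => ?_
    refine le_antisymm ?_ zero_le
    calc lamm A ≤ μ A := Measure.le_iff.mp hlamle A hA
      _ = 0 := h0
  haveI : IsFiniteMeasure lamm := by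
    constructor
    calc lamm Set.univ ≤ μ Set.univ := Measure.le_iff.mp hlamle _ MeasurableSet.univ
      _ < ⊤ := measure_lt_top μ _
  set F0 : Ω → ℝ≥0∞ := lamm.rnDeriv μ with hF0
  have hrn : μ.withDensity F0 = lamm := Measure.withDensity_rnDeriv_eq lamm μ hac
  have hle1 : F0 ≤ᵐ[μ] 1 := Measure.rnDeriv_le_one_of_le hlamle
  set F : Ω → ℝ := fun x => (min 1 (F0 x)).toReal with hFdef
  have hFmeas : Measurable F :=
    (measurable_const.min (Measure.measurable_rnDeriv _ _)).ennreal_toReal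
  have hFbd : ∀ x, F x ∈ Set.Icc (0:ℝ) 1 := by
    intro x
    refine ⟨ENNReal.toReal_nonneg, ?_⟩
    calc (min 1 (F0 x)).toReal ≤ ((1:ℝ≥0∞)).toReal :=
        ENNReal.toReal_mono (by simp) (min_le_left _ _)
      _ = 1 := by simp
  have hFint : ∀ A : Set Ω, MeasurableSet A → ∫ x in A, F x ∂μ = L A := by
    intro A hA
    have h1 : ∫ x in A, F x ∂μ = (∫⁻ x in A, min 1 (F0 x) ∂μ).toReal := by
      rw [hFdef]
      refine integral_toReal ?_ ?_
      · exact (measurable_const.min (Measure.measurable_rnDeriv _ _)).aemeasurable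
      · exact Filter.Eventually.of_forall fun x =>
          lt_of_le_of_lt (min_le_left _ _) (by simp)
    have h2 : ∫⁻ x in A, min 1 (F0 x) ∂μ = ∫⁻ x in A, F0 x ∂μ := by
      refine lintegral_congr_ae ?_
      refine ae_restrict_of_ae ?_
      filter_upwards [hle1] with x hx
      exact min_eq_right hx
    have h3 : ∫⁻ x in A, F0 x ∂μ = lamm A := by
      rw [← withDensity_apply F0 hA, hrn]
    rw [h1, h2, h3, hlammapp A hA, ENNReal.toReal_ofReal (hLnonneg A)]
  refine ⟨F, hFmeas, hFbd, fun A hA => ?_⟩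
  rw [hFint A hA]
  exact (hL A).2

end Limit

section Helpers

lemma int_of_bdd {Ω : Type*} [MeasurableSpace Ω] {μ : Measure Ω} [IsFiniteMeasure μ] {φ : Ω → ℝ}
    (hm : Measurable φ) (hb : ∀ x, φ x ∈ Set.Icc (0:ℝ) 1) : Integrable φ μ := by
  refine (integrable_const (1:ℝ)).mono' hm.aestronglyMeasurable ?_
  refine Filter.Eventually.of_forall fun x => ?_
  rw [Real.norm_eq_abs, abs_le]
  exact ⟨by linarith [(hb x).1], (hb x).2⟩

lemma avg_mem_Icc {W : Type*} (h : ℕ → W → ℝ) (hb : ∀ n w, h n w ∈ Set.Icc (0:ℝ) 1)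
    (N : ℕ) (w : W) : ((N:ℝ)⁻¹ * ∑ n ∈ Finset.range N, h n w) ∈ Set.Icc (0:ℝ) 1 := by
  rcases Nat.eq_zero_or_pos N with rfl | hN
  · simp
  have hNpos : (0:ℝ) < N := by exact_mod_cast hN
  constructor
  · exact mul_nonneg (by positivity) (Finset.sum_nonneg fun n _ => (hb n w).1)
  · have hsum : ∑ n ∈ Finset.range N, h n w ≤ (N:ℝ) := by
      calc ∑ n ∈ Finset.range N, h n w ≤ ∑ _n ∈ Finset.range N, (1:ℝ) :=
          Finset.sum_le_sum fun n _ => (hb n w).2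
        _ = N := by simp
    calc (N:ℝ)⁻¹ * ∑ n ∈ Finset.range N, h n w ≤ (N:ℝ)⁻¹ * N :=
        mul_le_mul_of_nonneg_left hsum (by positivity)
      _ = 1 := inv_mul_cancel₀ (ne_of_gt hNpos)

lemma avg_bound {X₁ Y₁ : Type*} [MeasurableSpace X₁] [MeasurableSpace Y₁]
    (μ : Measure X₁) (ν : Measure Y₁) [IsProbabilityMeasure μ] [IsProbabilityMeasure ν]
    {φ : X₁ → ℝ} {ψ : Y₁ → ℝ} (hφm : Measurable φ) (hψm : Measurable ψ)
    (hφb : ∀ x, φ x ∈ Set.Icc (0:ℝ) 1) (hψb : ∀ y, ψ y ∈ Set.Icc (0:ℝ) 1)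
    {A : Set X₁} {B : Set Y₁} (hA : MeasurableSet A) (hB : MeasurableSet B)
    {κ : ℝ} (hpoint : ∀ x ∈ A, ∀ y ∈ B, κ ≤ φ x + ψ y) :
    κ * ((μ A).toReal * (ν B).toReal) ≤
      (ν B).toReal * ∫ x in A, φ x ∂μ + (μ A).toReal * ∫ y in B, ψ y ∂ν := by
  have hφint : Integrable φ (μ.restrict A) := int_of_bdd hφm hφb
  have hψint : Integrable ψ (ν.restrict B) := int_of_bdd hψm hψb
  have h1 : ∀ y ∈ B, (μ A).toReal * κ - (μ A).toReal * ψ y ≤ ∫ x in A, φ x ∂μ := by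
    intro y hy
    calc (μ A).toReal * κ - (μ A).toReal * ψ y = ∫ _ in A, (κ - ψ y) ∂μ := by
          rw [setIntegral_const, smul_eq_mul, measureReal_def]; ring
      _ ≤ ∫ x in A, φ x ∂μ := by
          refine setIntegral_mono_on (integrable_const _) hφint hA fun x hx => ?_
          linarith [hpoint x hx y hy]
  have h2 : ∫ y in B, ((μ A).toReal * κ - (μ A).toReal * ψ y) ∂ν
      ≤ ∫ _ in B, (∫ x in A, φ x ∂μ) ∂ν := by
    refine setIntegral_mono_on ?_ (integrable_const _) hB fun y hy => h1 y hy
    exact (integrable_const _).sub (hψint.const_mul _)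
  have h3 : ∫ y in B, ((μ A).toReal * κ - (μ A).toReal * ψ y) ∂ν
      = (ν B).toReal * ((μ A).toReal * κ) - (μ A).toReal * ∫ y in B, ψ y ∂ν := by
    rw [integral_sub (integrable_const _) (hψint.const_mul _), setIntegral_const,
      integral_const_mul, smul_eq_mul, measureReal_def]
    try ring
  have h4 : ∫ _ in B, (∫ x in A, φ x ∂μ) ∂ν = (ν B).toReal * ∫ x in A, φ x ∂μ := by
    rw [setIntegral_const, smul_eq_mul, measureReal_def]
  rw [h3, h4] at h2
  linarith

end Helpers

end Stmt6Aux


theorem stmt6 [MeasurableSpace X] [MeasurableSpace Y]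
    (μ : Measure X) (ν : Measure Y) [IsProbabilityMeasure μ] [IsProbabilityMeasure ν]
    (R : ℕ → Set (X × Y)) (hR : ∀ n, IsRectUnion (R n)) :
    alphaSup μ ν (indR (⋃ n, R n)) = betaInf μ ν (indR (⋃ n, R n)) := by
  classical
  -- flatten the countable union of ring elements into a countable union of rectangles
  obtain ⟨A, B, hA, hB, hHeq⟩ : ∃ (A : ℕ → Set X) (B : ℕ → Set Y),
      (∀ i, MeasurableSet (A i)) ∧ (∀ i, MeasurableSet (B i)) ∧
      (⋃ n, R n) = ⋃ i, A i ×ˢ B i := by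
    choose k RA RB hRA hRB hReq using hR
    set e : ℕ × ℕ ≃ ℕ := Denumerable.eqv (ℕ × ℕ) with he
    refine ⟨fun m => if h : (e.symm m).2 < k (e.symm m).1
        then RA (e.symm m).1 ⟨(e.symm m).2, h⟩ else ∅,
      fun m => if h : (e.symm m).2 < k (e.symm m).1
        then RB (e.symm m).1 ⟨(e.symm m).2, h⟩ else ∅, ?_, ?_, ?_⟩
    · intro m; dsimp only; split
      · exact hRA _ _
      · exact MeasurableSet.empty
    · intro m; dsimp only; split
      · exact hRB _ _
      · exact MeasurableSet.empty
    · apply Set.eq_of_subset_of_subset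
      · intro z hz
        rw [Set.mem_iUnion] at hz
        obtain ⟨n, hzn⟩ := hz
        rw [hReq n, Set.mem_iUnion] at hzn
        obtain ⟨i, hzi⟩ := hzn
        rw [Set.mem_iUnion]
        refine ⟨e (n, (i : ℕ)), ?_⟩
        rw [Set.mem_prod]
        constructor
        · dsimp only
          rw [Equiv.symm_apply_apply]
          rw [dif_pos (i.isLt : (n, (i:ℕ)).2 < k (n, (i:ℕ)).1)]
          simpa using hzi.1
        · dsimp only
          rw [Equiv.symm_apply_apply]
          rw [dif_pos (i.isLt : (n, (i:ℕ)).2 < k (n, (i:ℕ)).1)]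
          simpa using hzi.2
      · intro z hz
        rw [Set.mem_iUnion] at hz
        obtain ⟨m, hzm⟩ := hz
        rw [Set.mem_prod] at hzm
        by_cases h : (e.symm m).2 < k (e.symm m).1
        · rw [Set.mem_iUnion]
          refine ⟨(e.symm m).1, ?_⟩
          rw [hReq, Set.mem_iUnion]
          refine ⟨⟨(e.symm m).2, h⟩, ?_⟩
          rw [Set.mem_prod]
          constructor
          · have h1 := hzm.1
            dsimp only at h1
            rw [dif_pos h] at h1
            exact h1
          · have h2 := hzm.2
            dsimp only at h2
            rw [dif_pos h] at h2
            exact h2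
        · exfalso
          have h1 := hzm.1
          dsimp only at h1
          rw [dif_neg h] at h1
          exact h1
  set H : Set (X × Y) := ⋃ n, R n with hHdef
  have hHmeas : MeasurableSet H := by
    rw [hHeq]
    exact MeasurableSet.iUnion fun i => ((hA i).prod (hB i))
  -- primal basics
  have hPmem : ∀ P : Measure (X × Y), IsCoupling μ ν P →
      (P H).toReal ∈ primalSet μ ν (indR H) := by
    intro P hP
    refine ⟨P, hP, ?_⟩
    show (P H).toReal = ∫ z, H.indicator (fun _ => (1:ℝ)) z ∂P
    rw [integral_indicator_const (1:ℝ) hHmeas, smul_eq_mul, mul_one, measureReal_def]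
  have hprodCoupling : IsCoupling μ ν (μ.prod ν) := by
    refine ⟨inferInstance, ?_, ?_⟩
    · rw [Measure.map_fst_prod]; simp
    · rw [Measure.map_snd_prod]; simp
  have hprimal_ne : (primalSet μ ν (indR H)).Nonempty := ⟨_, hPmem _ hprodCoupling⟩
  have hind_le : ∀ z : X × Y, indR H z ≤ 1 := by
    intro z
    by_cases hz : z ∈ H
    · rw [indR, Set.indicator_of_mem hz]
    · rw [indR, Set.indicator_of_notMem hz]; exact zero_le_one
  have hind_nonneg : ∀ z : X × Y, 0 ≤ indR H z := by
    intro z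
    by_cases hz : z ∈ H
    · rw [indR, Set.indicator_of_mem hz]; exact zero_le_one
    · rw [indR, Set.indicator_of_notMem hz]
  have hweak : ∀ r ∈ primalSet μ ν (indR H), ∀ d ∈ dualUpperSet μ ν (indR H), r ≤ d := by
    rintro r ⟨P, hP, rfl⟩ d ⟨f, g, hf, hg, hfg, rfl⟩
    haveI := hP.1
    have hf' : Integrable f (P.map Prod.fst) := hP.2.1.symm ▸ hf
    have hg' : Integrable g (P.map Prod.snd) := hP.2.2.symm ▸ hg
    have hfP : Integrable (fun z : X × Y => f z.1) P :=
      (integrable_map_measure hf'.aestronglyMeasurable measurable_fst.aemeasurable).mp hf'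
    have hgP : Integrable (fun z : X × Y => g z.2) P :=
      (integrable_map_measure hg'.aestronglyMeasurable measurable_snd.aemeasurable).mp hg'
    have hindint : Integrable (indR H) P := by
      show Integrable (H.indicator fun _ => (1:ℝ)) P
      exact (integrable_const (1:ℝ)).indicator hHmeas
    calc ∫ z, indR H z ∂P ≤ ∫ z, (f z.1 + g z.2) ∂P := by
          refine integral_mono hindint (hfP.add hgP) fun z => ?_
          simpa using hfg z.1 z.2
      _ = (∫ z, f z.1 ∂P) + ∫ z, g z.2 ∂P := integral_add hfP hgP
      _ = (∫ x, f x ∂μ) + ∫ y, g y ∂ν := by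
          congr 1
          · rw [← hP.2.1]
            exact (integral_map measurable_fst.aemeasurable hf'.aestronglyMeasurable).symm
          · rw [← hP.2.2]
            exact (integral_map measurable_snd.aemeasurable hg'.aestronglyMeasurable).symm
  have hbddA : BddAbove (primalSet μ ν (indR H)) := by
    refine ⟨1, fun r hr => ?_⟩
    obtain ⟨P, hP, rfl⟩ := hr
    haveI := hP.1
    have hindint : Integrable (indR H) P := by
      show Integrable (H.indicator fun _ => (1:ℝ)) P
      exact (integrable_const (1:ℝ)).indicator hHmeas
    calc ∫ z, indR H z ∂P ≤ ∫ _, (1:ℝ) ∂P :=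
        integral_mono hindint (integrable_const 1) fun z => hind_le z
      _ = 1 := by simp
  have hdual_ne : (dualUpperSet μ ν (indR H)).Nonempty := by
    refine ⟨_, fun _ => (1:ℝ), fun _ => (0:ℝ), integrable_const 1, integrable_const 0,
      fun x y => ?_, rfl⟩
    simpa using hind_le (x, y)
  have hbddB : BddBelow (dualUpperSet μ ν (indR H)) :=
    ⟨_, fun d hd => hweak _ (hPmem _ hprodCoupling) d hd⟩
  have h_easy : alphaSup μ ν (indR H) ≤ betaInf μ ν (indR H) :=
    le_csInf hdual_ne fun d hd => csSup_le hprimal_ne fun r hr => hweak r hr d hd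
  -- hard direction
  set α : ℝ := alphaSup μ ν (indR H) with hα
  have hα_ub : ∀ P, IsCoupling μ ν P → (P H).toReal ≤ α :=
    fun P hP => le_csSup hbddA (hPmem P hP)
  have hα0 : 0 ≤ α := le_trans ENNReal.toReal_nonneg (hα_ub _ hprodCoupling)
  have hstep : ∀ n : ℕ, ∃ (f : X → ℝ) (g : Y → ℝ), Measurable f ∧ Measurable g ∧
      (∀ x, f x ∈ Set.Icc (0:ℝ) 1) ∧ (∀ y, g y ∈ Set.Icc (0:ℝ) 1) ∧
      (∀ x y, (x, y) ∈ (⋃ i : Fin n, A i ×ˢ B i) → 1 ≤ f x + g y) ∧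
      ∫ x, f x ∂μ + ∫ y, g y ∂ν ≤ α + (1/2)^n := by
    intro n
    obtain ⟨P, f, g, hPprob, hPfst, hPsnd, hfm, hgm, hfb, hgb, hfeas, hcost⟩ :=
      Stmt6Aux.stepDual μ ν (fun i : Fin n => A i) (fun i : Fin n => B i)
        (fun i => hA i) (fun i => hB i) (by positivity : (0:ℝ) < (1/2)^n)
    refine ⟨f, g, hfm, hgm, hfb, hgb, hfeas, ?_⟩
    haveI := hPprob
    have h1 : (P (⋃ i : Fin n, A (i:ℕ) ×ˢ B (i:ℕ))).toReal ≤ (P H).toReal := by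
      refine ENNReal.toReal_mono (measure_ne_top P H) (measure_mono ?_)
      rw [hHeq]
      intro z hz
      rw [Set.mem_iUnion] at hz ⊢
      obtain ⟨i, hi⟩ := hz
      exact ⟨(i : ℕ), hi⟩
    have h2 := hα_ub P ⟨hPprob, hPfst, hPsnd⟩
    linarith
  choose fn gn hfm hgm hfb hgb hfeas hcost using hstep
  set φ : ℕ → X → ℝ := fun N x => (N:ℝ)⁻¹ * ∑ n ∈ Finset.range N, fn n x with hφdef
  set ψ : ℕ → Y → ℝ := fun N y => (N:ℝ)⁻¹ * ∑ n ∈ Finset.range N, gn n y with hψdef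
  have hφm : ∀ N, Measurable (φ N) := fun N =>
    (Finset.measurable_sum _ fun n _ => hfm n).const_mul _
  have hψm : ∀ N, Measurable (ψ N) := fun N =>
    (Finset.measurable_sum _ fun n _ => hgm n).const_mul _
  have hφb : ∀ N x, φ N x ∈ Set.Icc (0:ℝ) 1 := by intro N x; rw [hφdef]; exact Stmt6Aux.avg_mem_Icc fn hfb N x
  have hψb : ∀ N y, ψ N y ∈ Set.Icc (0:ℝ) 1 := by intro N y; rw [hψdef]; exact Stmt6Aux.avg_mem_Icc gn hgb N y
  set 𝒰 : Ultrafilter ℕ := Ultrafilter.of atTop with h𝒰def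
  have h𝒰 : (𝒰 : Filter ℕ) ≤ atTop := Ultrafilter.of_le _
  obtain ⟨F, hFm, hFb, hFt⟩ := Stmt6Aux.limitDensity μ 𝒰 φ hφm hφb
  obtain ⟨G, hGm, hGb, hGt⟩ := Stmt6Aux.limitDensity ν 𝒰 ψ hψm hψb
  -- E1 : total cost bound
  have hcostN : ∀ N : ℕ, ∫ x, φ N x ∂μ + ∫ y, ψ N y ∂ν ≤ α + (N:ℝ)⁻¹ * 2 := by
    intro N
    have hφint : ∫ x, φ N x ∂μ = (N:ℝ)⁻¹ * ∑ n ∈ Finset.range N, ∫ x, fn n x ∂μ := by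
      rw [hφdef]
      rw [integral_const_mul]
      rw [integral_finset_sum _ (fun n _ => Stmt6Aux.int_of_bdd (hfm n) (hfb n))]
    have hψint : ∫ y, ψ N y ∂ν = (N:ℝ)⁻¹ * ∑ n ∈ Finset.range N, ∫ y, gn n y ∂ν := by
      rw [hψdef]
      rw [integral_const_mul]
      rw [integral_finset_sum _ (fun n _ => Stmt6Aux.int_of_bdd (hgm n) (hgb n))]
    rcases Nat.eq_zero_or_pos N with rfl | hN
    · simp [hφint, hψint]
      linarith
    have hNpos : (0:ℝ) < N := by exact_mod_cast hN
    rw [hφint, hψint, ← mul_add]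
    have hsum : ((∑ n ∈ Finset.range N, ∫ x, fn n x ∂μ)
        + ∑ n ∈ Finset.range N, ∫ y, gn n y ∂ν) ≤ N * α + 2 := by
      rw [← Finset.sum_add_distrib]
      calc ∑ n ∈ Finset.range N, ((∫ x, fn n x ∂μ) + ∫ y, gn n y ∂ν)
          ≤ ∑ n ∈ Finset.range N, (α + (1/2:ℝ)^n) :=
            Finset.sum_le_sum fun n _ => hcost n
        _ = N * α + ∑ n ∈ Finset.range N, (1/2:ℝ)^n := by
            rw [Finset.sum_add_distrib, Finset.sum_const, Finset.card_range, nsmul_eq_mul]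
        _ ≤ N * α + 2 := by linarith [sum_geometric_two_le N]
    calc (N:ℝ)⁻¹ * ((∑ n ∈ Finset.range N, ∫ x, fn n x ∂μ)
          + ∑ n ∈ Finset.range N, ∫ y, gn n y ∂ν)
        ≤ (N:ℝ)⁻¹ * (N * α + 2) := mul_le_mul_of_nonneg_left hsum (by positivity)
      _ = α + (N:ℝ)⁻¹ * 2 := by field_simp
  have hE1 : ∫ x, F x ∂μ + ∫ y, G y ∂ν ≤ α := by
    have ht1 : Tendsto (fun N => (∫ x in Set.univ, φ N x ∂μ) + ∫ y in Set.univ, ψ N y ∂ν)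
        (𝒰 : Filter ℕ)
        (𝓝 ((∫ x in Set.univ, F x ∂μ) + ∫ y in Set.univ, G y ∂ν)) :=
      (hFt Set.univ MeasurableSet.univ).add (hGt Set.univ MeasurableSet.univ)
    have ht2 : Tendsto (fun N : ℕ => α + (N:ℝ)⁻¹ * 2) (𝒰 : Filter ℕ) (𝓝 (α + 0 * 2)) :=
      tendsto_const_nhds.add
        (((tendsto_inv_atTop_nhds_zero_nat).mono_left h𝒰).mul_const 2)
    have hle := le_of_tendsto_of_tendsto ht1 ht2 (Filter.Eventually.of_forall fun N => by
      simpa [setIntegral_univ] using hcostN N)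
    simpa [setIntegral_univ] using hle
  -- E2 : the rectangle inequalities in the limit
  have hE2 : ∀ (i : ℕ) (A' : Set X) (B' : Set Y), MeasurableSet A' → MeasurableSet B' →
      A' ⊆ A i → B' ⊆ B i →
      (μ A').toReal * (ν B').toReal ≤
        (ν B').toReal * ∫ x in A', F x ∂μ + (μ A').toReal * ∫ y in B', G y ∂ν := by
    intro i A' B' hA'meas hB'meas hA'sub hB'sub
    have hpoint : ∀ N : ℕ, 1 ≤ N → ∀ x ∈ A', ∀ y ∈ B',
        1 - ((i:ℝ)+1) * (N:ℝ)⁻¹ ≤ φ N x + ψ N y := by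
      intro N hN x hx y hy
      have hterm : ∀ n, i < n → 1 ≤ fn n x + gn n y := by
        intro n hn
        refine hfeas n x y ?_
        rw [Set.mem_iUnion]
        exact ⟨⟨i, hn⟩, hA'sub hx, hB'sub hy⟩
      have hfilter : (Finset.range N).filter (fun n => i < n) = Finset.Ico (i+1) N := by
        ext n
        simp only [Finset.mem_filter, Finset.mem_range, Finset.mem_Ico]
        omega
      have hsum : (N:ℝ) - ((i:ℝ)+1) ≤ (∑ n ∈ Finset.range N, fn n x)
          + ∑ n ∈ Finset.range N, gn n y := by
        rw [← Finset.sum_add_distrib]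
        have hc1 : (N:ℝ) - ((i:ℝ)+1) ≤ (((Finset.range N).filter (fun n => i < n)).card : ℝ) := by
          rw [hfilter, Nat.card_Ico]
          rcases le_total (i+1) N with h | h
          · rw [Nat.cast_sub h]
            push_cast
            linarith
          · have h0 : N - (i+1) = 0 := by omega
            rw [h0]
            have : (N:ℝ) ≤ (i:ℝ) + 1 := by exact_mod_cast h
            simp
            linarith
        have hc2 : (((Finset.range N).filter (fun n => i < n)).card : ℝ)
            ≤ ∑ n ∈ (Finset.range N).filter (fun n => i < n), (fn n x + gn n y) := by
          have := Finset.card_nsmul_le_sum ((Finset.range N).filter (fun n => i < n))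
            (fun n => fn n x + gn n y) 1
            (fun n hn => hterm n (Finset.mem_filter.mp hn).2)
          simpa using this
        have hc3 : ∑ n ∈ (Finset.range N).filter (fun n => i < n), (fn n x + gn n y)
            ≤ ∑ n ∈ Finset.range N, (fn n x + gn n y) := by
          refine Finset.sum_le_sum_of_subset_of_nonneg (Finset.filter_subset _ _)
            fun n _ _ => ?_
          have h1 := (hfb n x).1
          have h2 := (hgb n y).1
          linarith
        linarith
      have hNpos : (0:ℝ) < N := by exact_mod_cast hN
      have heq : φ N x + ψ N y = (N:ℝ)⁻¹ * ((∑ n ∈ Finset.range N, fn n x)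
          + ∑ n ∈ Finset.range N, gn n y) := by
        rw [hφdef, hψdef]
        ring
      rw [heq]
      calc 1 - ((i:ℝ)+1) * (N:ℝ)⁻¹ = (N:ℝ)⁻¹ * ((N:ℝ) - ((i:ℝ)+1)) := by
            field_simp
          _ ≤ _ := mul_le_mul_of_nonneg_left hsum (by positivity)
    have hLHS : Tendsto (fun N => (ν B').toReal * ∫ x in A', φ N x ∂μ
        + (μ A').toReal * ∫ y in B', ψ N y ∂ν) (𝒰 : Filter ℕ)
        (𝓝 ((ν B').toReal * ∫ x in A', F x ∂μ + (μ A').toReal * ∫ y in B', G y ∂ν)) :=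
      ((hFt A' hA'meas).const_mul _).add ((hGt B' hB'meas).const_mul _)
    have hRHS : Tendsto (fun N : ℕ => (1 - ((i:ℝ)+1) * (N:ℝ)⁻¹)
        * ((μ A').toReal * (ν B').toReal)) (𝒰 : Filter ℕ)
        (𝓝 ((1 - ((i:ℝ)+1) * 0) * ((μ A').toReal * (ν B').toReal))) :=
      (tendsto_const_nhds.sub
        (((tendsto_inv_atTop_nhds_zero_nat).mono_left h𝒰).const_mul _)).mul_const _
    have hineq : ∀ᶠ N : ℕ in (𝒰 : Filter ℕ),
        (1 - ((i:ℝ)+1) * (N:ℝ)⁻¹) * ((μ A').toReal * (ν B').toReal)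
        ≤ (ν B').toReal * ∫ x in A', φ N x ∂μ + (μ A').toReal * ∫ y in B', ψ N y ∂ν := by
      refine ((Filter.eventually_ge_atTop 1).filter_mono h𝒰).mono fun N hN => ?_
      exact Stmt6Aux.avg_bound μ ν (hφm N) (hψm N) (hφb N) (hψb N) hA'meas hB'meas
        (hpoint N hN)
    have := le_of_tendsto_of_tendsto hRHS hLHS hineq
    simpa using this
  -- essential infima over the rectangles
  set sA : ℕ → Set ℝ := fun i => {a | a ≤ 1 ∧ μ (A i ∩ {x | F x < a}) = 0} with hsA
  set sB : ℕ → Set ℝ := fun i => {b | b ≤ 1 ∧ ν (B i ∩ {y | G y < b}) = 0} with hsB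
  have hsAne : ∀ i, (0:ℝ) ∈ sA i := by
    intro i
    refine ⟨zero_le_one, ?_⟩
    have hempty : A i ∩ {x | F x < 0} = ∅ := by
      ext x
      simp only [Set.mem_inter_iff, Set.mem_setOf_eq, Set.mem_empty_iff_false, iff_false,
        not_and]
      intro _
      exact not_lt.mpr (hFb x).1
    rw [hempty]
    exact measure_empty
  have hsBne : ∀ i, (0:ℝ) ∈ sB i := by
    intro i
    refine ⟨zero_le_one, ?_⟩
    have hempty : B i ∩ {y | G y < 0} = ∅ := by
      ext y
      simp only [Set.mem_inter_iff, Set.mem_setOf_eq, Set.mem_empty_iff_false, iff_false,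
        not_and]
      intro _
      exact not_lt.mpr (hGb y).1
    rw [hempty]
    exact measure_empty
  have hsAbdd : ∀ i, BddAbove (sA i) := fun i => ⟨1, fun a ha => ha.1⟩
  have hsBbdd : ∀ i, BddAbove (sB i) := fun i => ⟨1, fun b hb => hb.1⟩
  set u : ℕ → ℝ := fun i => sSup (sA i) with hu
  set v : ℕ → ℝ := fun i => sSup (sB i) with hv
  have hu0 : ∀ i, 0 ≤ u i := fun i => le_csSup (hsAbdd i) (hsAne i)
  have hv0 : ∀ i, 0 ≤ v i := fun i => le_csSup (hsBbdd i) (hsBne i)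
  have hnullA : ∀ i, μ (A i ∩ {x | F x < u i}) = 0 := by
    intro i
    have hsub : A i ∩ {x | F x < u i}
        ⊆ ⋃ q : ℚ, ⋃ (_ : ((q:ℝ) < u i)), (A i ∩ {x | F x < (q:ℝ)}) := by
      rintro x ⟨hxA, hxF⟩
      obtain ⟨q, hq1, hq2⟩ := exists_rat_btwn (show F x < u i from hxF)
      exact Set.mem_iUnion.mpr ⟨q, Set.mem_iUnion.mpr ⟨hq2, hxA, hq1⟩⟩
    refine measure_mono_null hsub ?_
    refine measure_iUnion_null fun q => measure_iUnion_null fun hq => ?_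
    obtain ⟨a, haS, hqa⟩ := exists_lt_of_lt_csSup ⟨0, hsAne i⟩ hq
    refine measure_mono_null ?_ haS.2
    exact Set.inter_subset_inter_right _ fun x hx => lt_trans hx hqa
  have hnullB : ∀ i, ν (B i ∩ {y | G y < v i}) = 0 := by
    intro i
    have hsub : B i ∩ {y | G y < v i}
        ⊆ ⋃ q : ℚ, ⋃ (_ : ((q:ℝ) < v i)), (B i ∩ {y | G y < (q:ℝ)}) := by
      rintro y ⟨hyB, hyG⟩
      obtain ⟨q, hq1, hq2⟩ := exists_rat_btwn (show G y < v i from hyG)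
      exact Set.mem_iUnion.mpr ⟨q, Set.mem_iUnion.mpr ⟨hq2, hyB, hq1⟩⟩
    refine measure_mono_null hsub ?_
    refine measure_iUnion_null fun q => measure_iUnion_null fun hq => ?_
    obtain ⟨b, hbS, hqb⟩ := exists_lt_of_lt_csSup ⟨0, hsBne i⟩ hq
    refine measure_mono_null ?_ hbS.2
    exact Set.inter_subset_inter_right _ fun y hy => lt_trans hy hqb
  have hsumuv : ∀ i : ℕ, 1 ≤ u i + v i := by
    intro i
    by_contra hcon
    push_neg at hcon
    set δ : ℝ := (1 - u i - v i) / 3 with hδ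
    have hδpos : 0 < δ := by rw [hδ]; linarith
    set a : ℝ := u i + δ with hadef
    set b : ℝ := v i + δ with hbdef
    have ha1 : a ≤ 1 := by
      have := hv0 i
      rw [hadef, hδ]
      linarith
    have hb1 : b ≤ 1 := by
      have := hu0 i
      rw [hbdef, hδ]
      linarith
    set A' : Set X := A i ∩ {x | F x < a} with hA'
    set B' : Set Y := B i ∩ {y | G y < b} with hB'
    have hA'meas : MeasurableSet A' := (hA i).inter (hFm measurableSet_Iio)
    have hB'meas : MeasurableSet B' := (hB i).inter (hGm measurableSet_Iio)
    have hA'pos : μ A' ≠ 0 := by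
      intro h0
      have hmem : a ∈ sA i := ⟨ha1, h0⟩
      have := le_csSup (hsAbdd i) hmem
      rw [hadef] at this
      have : u i + δ ≤ u i := this
      linarith
    have hB'pos : ν B' ≠ 0 := by
      intro h0
      have hmem : b ∈ sB i := ⟨hb1, h0⟩
      have := le_csSup (hsBbdd i) hmem
      rw [hbdef] at this
      have : v i + δ ≤ v i := this
      linarith
    have hkey := hE2 i A' B' hA'meas hB'meas Set.inter_subset_left Set.inter_subset_left
    have hIA : ∫ x in A', F x ∂μ ≤ a * (μ A').toReal := by
      calc ∫ x in A', F x ∂μ ≤ ∫ _ in A', a ∂μ :=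
          setIntegral_mono_on (Stmt6Aux.int_of_bdd hFm hFb) (integrable_const _) hA'meas
            fun x hx => le_of_lt hx.2
        _ = a * (μ A').toReal := by rw [setIntegral_const, smul_eq_mul, mul_comm, measureReal_def]
    have hIB : ∫ y in B', G y ∂ν ≤ b * (ν B').toReal := by
      calc ∫ y in B', G y ∂ν ≤ ∫ _ in B', b ∂ν :=
          setIntegral_mono_on (Stmt6Aux.int_of_bdd hGm hGb) (integrable_const _) hB'meas
            fun y hy => le_of_lt hy.2
        _ = b * (ν B').toReal := by rw [setIntegral_const, smul_eq_mul, mul_comm, measureReal_def]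
    have hμA'pos : 0 < (μ A').toReal := ENNReal.toReal_pos hA'pos (measure_ne_top μ _)
    have hνB'pos : 0 < (ν B').toReal := ENNReal.toReal_pos hB'pos (measure_ne_top ν _)
    have k1 : (ν B').toReal * ∫ x in A', F x ∂μ ≤ (ν B').toReal * (a * (μ A').toReal) :=
      mul_le_mul_of_nonneg_left hIA hνB'pos.le
    have k2 : (μ A').toReal * ∫ y in B', G y ∂ν ≤ (μ A').toReal * (b * (ν B').toReal) :=
      mul_le_mul_of_nonneg_left hIB hμA'pos.le
    have hab : (μ A').toReal * (ν B').toReal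
        ≤ (a + b) * ((μ A').toReal * (ν B').toReal) := by nlinarith
    have : (1:ℝ) ≤ a + b := by
      have hpos : 0 < (μ A').toReal * (ν B').toReal := mul_pos hμA'pos hνB'pos
      nlinarith
    rw [hadef, hbdef, hδ] at this
    linarith
  -- the final dual pair
  set NX : Set X := ⋃ i : ℕ, (A i ∩ {x | F x < u i}) with hNX
  set NY : Set Y := ⋃ i : ℕ, (B i ∩ {y | G y < v i}) with hNY
  have hNXmeas : MeasurableSet NX :=
    MeasurableSet.iUnion fun i => (hA i).inter (hFm measurableSet_Iio)
  have hNYmeas : MeasurableSet NY :=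
    MeasurableSet.iUnion fun i => (hB i).inter (hGm measurableSet_Iio)
  have hNXnull : μ NX = 0 := measure_iUnion_null fun i => hnullA i
  have hNYnull : ν NY = 0 := measure_iUnion_null fun i => hnullB i
  set f' : X → ℝ := fun x => if x ∈ NX then 1 else F x with hf'
  set g' : Y → ℝ := fun y => if y ∈ NY then 1 else G y with hg'
  have hf'm : Measurable f' := Measurable.ite hNXmeas measurable_const hFm
  have hg'm : Measurable g' := Measurable.ite hNYmeas measurable_const hGm
  have hf'b : ∀ x, f' x ∈ Set.Icc (0:ℝ) 1 := by
    intro x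
    rw [hf']
    dsimp only
    split
    · exact ⟨zero_le_one, le_refl 1⟩
    · exact hFb x
  have hg'b : ∀ y, g' y ∈ Set.Icc (0:ℝ) 1 := by
    intro y
    rw [hg']
    dsimp only
    split
    · exact ⟨zero_le_one, le_refl 1⟩
    · exact hGb y
  have hf'ae : f' =ᵐ[μ] F := by
    rw [Filter.EventuallyEq, ae_iff]
    refine measure_mono_null (fun x hx => ?_) hNXnull
    by_contra hxn
    apply hx
    show f' x = F x
    rw [hf']
    simp [hxn]
  have hg'ae : g' =ᵐ[ν] G := by
    rw [Filter.EventuallyEq, ae_iff]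
    refine measure_mono_null (fun y hy => ?_) hNYnull
    by_contra hyn
    apply hy
    show g' y = G y
    rw [hg']
    simp [hyn]
  have hfeasfinal : ∀ x y, indR H (x, y) ≤ f' x + g' y := by
    intro x y
    by_cases hxy : (x, y) ∈ H
    · rw [indR, Set.indicator_of_mem hxy]
      have hxy' : (x, y) ∈ ⋃ i, A i ×ˢ B i := hHeq ▸ hxy
      rw [Set.mem_iUnion] at hxy'
      obtain ⟨i, hxi, hyi⟩ := hxy'
      by_cases hx : x ∈ NX
      · have h1 : f' x = 1 := by rw [hf']; simp [hx]
        rw [h1]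
        linarith [(hg'b y).1]
      · have h1 : f' x = F x := by rw [hf']; simp [hx]
        have hFx : u i ≤ F x := by
          by_contra h
          push_neg at h
          exact hx (Set.mem_iUnion.mpr ⟨i, hxi, h⟩)
        by_cases hy : y ∈ NY
        · have h2 : g' y = 1 := by rw [hg']; simp [hy]
          rw [h2]
          linarith [(hf'b x).1]
        · have h2 : g' y = G y := by rw [hg']; simp [hy]
          have hGy : v i ≤ G y := by
            by_contra h
            push_neg at h
            exact hy (Set.mem_iUnion.mpr ⟨i, hyi, h⟩)
          rw [h1, h2]
          linarith [hsumuv i]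
    · rw [indR, Set.indicator_of_notMem hxy]
      linarith [(hf'b x).1, (hg'b y).1]
  have hmemdual : (∫ x, f' x ∂μ + ∫ y, g' y ∂ν) ∈ dualUpperSet μ ν (indR H) :=
    ⟨f', g', Stmt6Aux.int_of_bdd hf'm hf'b, Stmt6Aux.int_of_bdd hg'm hg'b, hfeasfinal, rfl⟩
  have h_hard : betaInf μ ν (indR H) ≤ α := by
    refine le_trans (csInf_le hbddB hmemdual) ?_
    rw [integral_congr_ae hf'ae, integral_congr_ae hg'ae]
    exact hE1
  exact le_antisymm h_easy h_hard
end
end
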